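/- arXiv:1910.03231 — 12 statements merged into one kernel-verified Lean document; each statement's English description precedes it below -/
import Mathlib

section
/- Let f* be a binary classifier with error rates e*₊₁ := P(f*(X) = −1 | Y = +1) and e*₋₁ := P(f*(X) = +1 | Y = −1), where f*(X) is determined by X. Then P(f*(X) = +1, Ỹ = +1) − P(f*(X) = +1)·P(Ỹ = +1) = p(1−p)(1 − e₊₁ − e₋₁)(1 − e*₊₁ − e*₋₁), and likewise P(f*(X) = +1, Ỹ = −1) − P(f*(X) = +1)·P(Ỹ = −1) = −p(1−p)(1 − e₊₁ − e₋₁)(1 − e*₊₁ − e*₋₁). -/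
open MeasureTheory

lemma peer_split_aux {Ω : Type*} [MeasurableSpace Ω] (μ : Measure Ω) [IsFiniteMeasure μ]
    (P : Ω → Prop) (Z : Ω → ℤ) (hZ : ∀ ω, Z ω = 1 ∨ Z ω = -1)
    (h2 : MeasurableSet {ω | P ω ∧ Z ω = -1}) :
    (μ {ω | P ω}).toReal
      = (μ {ω | P ω ∧ Z ω = 1}).toReal + (μ {ω | P ω ∧ Z ω = -1}).toReal := by
  have hunion : {ω | P ω} = {ω | P ω ∧ Z ω = 1} ∪ {ω | P ω ∧ Z ω = -1} := by
    ext ω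
    simp only [Set.mem_setOf_eq, Set.mem_union]
    constructor
    · intro h
      rcases hZ ω with hz | hz
      · exact Or.inl ⟨h, hz⟩
      · exact Or.inr ⟨h, hz⟩
    · rintro (⟨h, _⟩ | ⟨h, _⟩) <;> exact h
  have hdisj : Disjoint {ω | P ω ∧ Z ω = 1} {ω | P ω ∧ Z ω = -1} := by
    rw [Set.disjoint_left]
    rintro ω ⟨_, h1⟩ ⟨_, h2⟩
    omega
  rw [hunion, measure_union hdisj h2,
    ENNReal.toReal_add (measure_ne_top _ _) (measure_ne_top _ _)]

/-- For a binary classifier `f` (playing the role of `f*`) with error rates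
`efp = P(f(X) = -1 | Y = 1)` and `efm = P(f(X) = 1 | Y = -1)`, the marginal correlation between
`f(X)` and the noisy label `Ỹ` satisfies
`P(f(X)=1, Ỹ=1) - P(f(X)=1)P(Ỹ=1) = p(1-p)(1-ep-em)(1-efp-efm)` and
`P(f(X)=1, Ỹ=-1) - P(f(X)=1)P(Ỹ=-1) = -p(1-p)(1-ep-em)(1-efp-efm)`. -/
theorem peer_loss_stmt0
    {Ω 𝒳 : Type*} [MeasurableSpace Ω] [MeasurableSpace 𝒳]
    (μ : Measure Ω) [IsProbabilityMeasure μ]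
    (X : Ω → 𝒳) (Y Ytil : Ω → ℤ)
    (hmX : Measurable X) (hmY : Measurable Y) (hmYt : Measurable Ytil)
    (hYval : ∀ ω, Y ω = 1 ∨ Y ω = -1)
    (hYtval : ∀ ω, Ytil ω = 1 ∨ Ytil ω = -1)
    (p ep em : ℝ)
    (hp : (μ {ω | Y ω = 1}).toReal = p) (hp0 : 0 < p) (hp1 : p < 1)
    (hep : (μ {ω | Ytil ω = -1 ∧ Y ω = 1}).toReal = ep * (μ {ω | Y ω = 1}).toReal)
    (hem : (μ {ω | Ytil ω = 1 ∧ Y ω = -1}).toReal = em * (μ {ω | Y ω = -1}).toReal)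
    -- `Ỹ` is conditionally independent of `X` given `Y`
    (hCI : ∀ (A : Set 𝒳) (y y' : ℤ),
      (μ {ω | Y ω = y}).toReal * (μ {ω | X ω ∈ A ∧ Ytil ω = y' ∧ Y ω = y}).toReal
        = (μ {ω | X ω ∈ A ∧ Y ω = y}).toReal * (μ {ω | Ytil ω = y' ∧ Y ω = y}).toReal)
    (f : 𝒳 → ℤ) (hmf : Measurable f)
    (hfval : ∀ x, f x = 1 ∨ f x = -1)
    (efp efm : ℝ)
    (hefp : (μ {ω | f (X ω) = -1 ∧ Y ω = 1}).toReal = efp * (μ {ω | Y ω = 1}).toReal)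
    (hefm : (μ {ω | f (X ω) = 1 ∧ Y ω = -1}).toReal = efm * (μ {ω | Y ω = -1}).toReal) :
    (μ {ω | f (X ω) = 1 ∧ Ytil ω = 1}).toReal
        - (μ {ω | f (X ω) = 1}).toReal * (μ {ω | Ytil ω = 1}).toReal
      = p * (1 - p) * (1 - ep - em) * (1 - efp - efm)
    ∧ (μ {ω | f (X ω) = 1 ∧ Ytil ω = -1}).toReal
        - (μ {ω | f (X ω) = 1}).toReal * (μ {ω | Ytil ω = -1}).toReal
      = -(p * (1 - p) * (1 - ep - em) * (1 - efp - efm)) := by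
  have hfX : Measurable fun ω => f (X ω) := hmf.comp hmX
  -- basic measurable sets
  have mY : ∀ y : ℤ, MeasurableSet {ω | Y ω = y} := fun y => hmY (measurableSet_singleton y)
  have mYt : ∀ y : ℤ, MeasurableSet {ω | Ytil ω = y} := fun y => hmYt (measurableSet_singleton y)
  have mF : ∀ y : ℤ, MeasurableSet {ω | f (X ω) = y} := fun y => hfX (measurableSet_singleton y)
  -- total mass split by Y
  have htotY := peer_split_aux μ (fun _ => True) Y hYval
      (by first | exact mY (-1) | simpa using mY (-1))
  simp only [true_and, Set.setOf_true] at htotY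
  have hq2 : (μ {ω | Y ω = -1}).toReal = 1 - p := by
    have h1 : (μ (Set.univ : Set Ω)).toReal = 1 := by simp
    rw [h1, hp] at htotY; linarith
  -- split {Y = 1} by f(X)
  have hY1split := peer_split_aux μ (fun ω => Y ω = 1) (fun ω => f (X ω)) (fun ω => hfval (X ω))
      ((mY 1).inter (mF (-1)))
  have hA1' : ({ω | Y ω = 1 ∧ f (X ω) = 1} : Set Ω) = {ω | f (X ω) = 1 ∧ Y ω = 1} := by
    ext ω; simp [and_comm]
  have hA1'' : ({ω | Y ω = 1 ∧ f (X ω) = -1} : Set Ω) = {ω | f (X ω) = -1 ∧ Y ω = 1} := by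
    ext ω; simp [and_comm]
  rw [hA1', hA1'', hp, hefp, hp] at hY1split
  have hA1 : (μ {ω | f (X ω) = 1 ∧ Y ω = 1}).toReal = (1 - efp) * p := by linarith
  have hA2 : (μ {ω | f (X ω) = 1 ∧ Y ω = -1}).toReal = efm * (1 - p) := by
    rw [hefm, hq2]
  -- split {Y = 1} by Ytil
  have hB1split := peer_split_aux μ (fun ω => Y ω = 1) Ytil hYtval
      ((mY 1).inter (mYt (-1)))
  have hB1' : ({ω | Y ω = 1 ∧ Ytil ω = 1} : Set Ω) = {ω | Ytil ω = 1 ∧ Y ω = 1} := by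
    ext ω; simp [and_comm]
  have hB1'' : ({ω | Y ω = 1 ∧ Ytil ω = -1} : Set Ω) = {ω | Ytil ω = -1 ∧ Y ω = 1} := by
    ext ω; simp [and_comm]
  rw [hB1', hB1'', hp, hep, hp] at hB1split
  have hB1 : (μ {ω | Ytil ω = 1 ∧ Y ω = 1}).toReal = (1 - ep) * p := by linarith
  have hB2 : (μ {ω | Ytil ω = 1 ∧ Y ω = -1}).toReal = em * (1 - p) := by
    rw [hem, hq2]
  -- conditional independence, with A = {x | f x = 1}
  have hCI1 := hCI {x | f x = 1} 1 1
  have hCI2 := hCI {x | f x = 1} (-1) 1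
  try simp only [Set.mem_setOf_eq] at hCI1 hCI2
  -- joint probabilities
  have hC1 : (μ {ω | f (X ω) = 1 ∧ Ytil ω = 1 ∧ Y ω = 1}).toReal = (1 - efp) * (1 - ep) * p := by
    have := hCI1
    rw [hp, hA1, hB1] at this
    have hp' : p ≠ 0 := ne_of_gt hp0
    have h2 : p * (μ {ω | f (X ω) = 1 ∧ Ytil ω = 1 ∧ Y ω = 1}).toReal
        = p * ((1 - efp) * (1 - ep) * p) := by linear_combination this
    exact mul_left_cancel₀ hp' h2
  have hC2 : (μ {ω | f (X ω) = 1 ∧ Ytil ω = 1 ∧ Y ω = -1}).toReal = efm * em * (1 - p) := by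
    have := hCI2
    rw [hq2, hA2, hB2] at this
    have hp' : (1 : ℝ) - p ≠ 0 := by intro h; linarith
    have h2 : (1 - p) * (μ {ω | f (X ω) = 1 ∧ Ytil ω = 1 ∧ Y ω = -1}).toReal
        = (1 - p) * (efm * em * (1 - p)) := by linear_combination this
    exact mul_left_cancel₀ hp' h2
  -- split {f(X)=1 ∧ Ytil=1} by Y
  have hCsplit := peer_split_aux μ (fun ω => f (X ω) = 1 ∧ Ytil ω = 1) Y hYval
      (((mF 1).inter (mYt 1)).inter (mY (-1)))
  have e1 : ({ω | (f (X ω) = 1 ∧ Ytil ω = 1) ∧ Y ω = 1} : Set Ω)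
      = {ω | f (X ω) = 1 ∧ Ytil ω = 1 ∧ Y ω = 1} := by ext ω; simp [and_assoc]
  have e2 : ({ω | (f (X ω) = 1 ∧ Ytil ω = 1) ∧ Y ω = -1} : Set Ω)
      = {ω | f (X ω) = 1 ∧ Ytil ω = 1 ∧ Y ω = -1} := by ext ω; simp [and_assoc]
  rw [e1, e2, hC1, hC2] at hCsplit
  -- marginals
  have hAsplit := peer_split_aux μ (fun ω => f (X ω) = 1) Y hYval
      ((mF 1).inter (mY (-1)))
  rw [hA1, hA2] at hAsplit
  have hBsplit := peer_split_aux μ (fun ω => Ytil ω = 1) Y hYval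
      ((mYt 1).inter (mY (-1)))
  rw [hB1, hB2] at hBsplit
  -- split {f(X)=1} by Ytil, for the second claim
  have hDsplit := peer_split_aux μ (fun ω => f (X ω) = 1) Ytil hYtval
      ((mF 1).inter (mYt (-1)))
  -- total mass split by Ytil
  have htotYt := peer_split_aux μ (fun _ => True) Ytil hYtval
      (by first | exact mYt (-1) | simpa using mYt (-1))
  simp only [true_and, Set.setOf_true] at htotYt
  have h1 : (μ (Set.univ : Set Ω)).toReal = 1 := by simp
  rw [h1] at htotYt
  constructor
  · rw [hCsplit, hAsplit, hBsplit]; ring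
  · have hEYt : (μ {ω | Ytil ω = -1}).toReal = 1 - (μ {ω | Ytil ω = 1}).toReal := by
      linarith
    have hD : (μ {ω | f (X ω) = -1 ∧ Ytil ω = -1}).toReal = 0 → True := fun _ => trivial
    have hDval : (μ {ω | f (X ω) = 1 ∧ Ytil ω = -1}).toReal
        = (μ {ω | f (X ω) = 1}).toReal - (μ {ω | f (X ω) = 1 ∧ Ytil ω = 1}).toReal := by
      linarith
    rw [hDval, hEYt, hCsplit, hAsplit, hBsplit]; ring
end

section
/- Define the matrix Δ ∈ ℝ^{2×2} by Δ_{k,l} = P(f*(X) = g(k), Ỹ = g(l)) − P(f*(X) = g(k))·P(Ỹ = g(l)) for k,l ∈ {1,2}, where g(1) = −1 and g(2) = +1, and f* is a classifier with error rates e*₊₁ := P(f*(X) = −1 | Y = +1), e*₋₁ := P(f*(X) = +1 | Y = −1). If e₋₁ + e₊₁ < 1 and e*₋₁ + e*₊₁ < 1, then both diagonal entries of Δ are strictly positive and both off-diagonal entries are strictly negative; equivalently, the sign matrix Sgn(Δ) (with entry 1 where Δ is positive and 0 otherwise) equals the 2×2 identity matrix. -/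
open MeasureTheory

lemma split_meas {Ω : Type*} [MeasurableSpace Ω] (μ : Measure Ω) [IsFiniteMeasure μ]
    (P : Ω → Prop) (hP : MeasurableSet {ω | P ω}) (Z : Ω → ℤ) (hZ : Measurable Z)
    (hZval : ∀ ω, Z ω = 1 ∨ Z ω = -1) :
    (μ {ω | P ω}).toReal
      = (μ {ω | P ω ∧ Z ω = 1}).toReal + (μ {ω | P ω ∧ Z ω = -1}).toReal := by
  have h1 : MeasurableSet {ω | Z ω = 1} := hZ (measurableSet_singleton 1)
  have h2 : MeasurableSet {ω | Z ω = -1} := hZ (measurableSet_singleton (-1))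
  have hm1 : MeasurableSet {ω | P ω ∧ Z ω = 1} := hP.inter h1
  have hm2 : MeasurableSet {ω | P ω ∧ Z ω = -1} := hP.inter h2
  have hu : {ω | P ω} = {ω | P ω ∧ Z ω = 1} ∪ {ω | P ω ∧ Z ω = -1} := by
    ext ω
    rcases hZval ω with h | h <;> simp [Set.mem_setOf_eq, h]
  have hd : Disjoint {ω | P ω ∧ Z ω = 1} {ω | P ω ∧ Z ω = -1} := by
    rw [Set.disjoint_left]
    rintro ω ⟨_, ha⟩ ⟨_, hb⟩
    omega
  rw [hu, measure_union hd hm2,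
    ENNReal.toReal_add (measure_ne_top μ _) (measure_ne_top μ _)]

/-- The sign matrix of the `Δ` matrix between the Bayes-type classifier `f`
and the noisy label `Ỹ` is the identity: diagonal entries of `Δ` are positive and off-diagonal
entries are negative, provided `ep + em < 1` and `efp + efm < 1`.  Here `g 0 = -1`, `g 1 = 1`. -/
theorem peer_loss_stmt1
    {Ω 𝒳 : Type*} [MeasurableSpace Ω] [MeasurableSpace 𝒳]
    (μ : Measure Ω) [IsProbabilityMeasure μ]
    (X : Ω → 𝒳) (Y Ytil : Ω → ℤ)
    (hmX : Measurable X) (hmY : Measurable Y) (hmYt : Measurable Ytil)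
    (hYval : ∀ ω, Y ω = 1 ∨ Y ω = -1)
    (hYtval : ∀ ω, Ytil ω = 1 ∨ Ytil ω = -1)
    (p ep em : ℝ)
    (hp : (μ {ω | Y ω = 1}).toReal = p) (hp0 : 0 < p) (hp1 : p < 1)
    (hep : (μ {ω | Ytil ω = -1 ∧ Y ω = 1}).toReal = ep * (μ {ω | Y ω = 1}).toReal)
    (hem : (μ {ω | Ytil ω = 1 ∧ Y ω = -1}).toReal = em * (μ {ω | Y ω = -1}).toReal)
    -- `Ỹ` is conditionally independent of `X` given `Y`
    (hCI : ∀ (A : Set 𝒳) (y y' : ℤ),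
      (μ {ω | Y ω = y}).toReal * (μ {ω | X ω ∈ A ∧ Ytil ω = y' ∧ Y ω = y}).toReal
        = (μ {ω | X ω ∈ A ∧ Y ω = y}).toReal * (μ {ω | Ytil ω = y' ∧ Y ω = y}).toReal)
    (f : 𝒳 → ℤ) (hmf : Measurable f)
    (hfval : ∀ x, f x = 1 ∨ f x = -1)
    (efp efm : ℝ)
    (hefp : (μ {ω | f (X ω) = -1 ∧ Y ω = 1}).toReal = efp * (μ {ω | Y ω = 1}).toReal)
    (hefm : (μ {ω | f (X ω) = 1 ∧ Y ω = -1}).toReal = efm * (μ {ω | Y ω = -1}).toReal)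
    (he : em + ep < 1) (hef : efm + efp < 1) :
    let g : Fin 2 → ℤ := fun k => if k = 0 then -1 else 1
    let Δ : Fin 2 → Fin 2 → ℝ := fun k l =>
      (μ {ω | f (X ω) = g k ∧ Ytil ω = g l}).toReal
        - (μ {ω | f (X ω) = g k}).toReal * (μ {ω | Ytil ω = g l}).toReal
    (∀ k, 0 < Δ k k) ∧ (∀ k l, k ≠ l → Δ k l < 0) ∧
      ((fun k l : Fin 2 => if 0 < Δ k l then (1 : ℝ) else 0)
        = fun k l : Fin 2 => if k = l then (1 : ℝ) else 0) := by
  intro g Δ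
  have hfX : Measurable (fun ω => f (X ω)) := hmf.comp hmX
  have hfXval : ∀ ω, f (X ω) = 1 ∨ f (X ω) = -1 := fun ω => hfval (X ω)
  have msY1 : MeasurableSet {ω | Y ω = 1} := hmY (measurableSet_singleton 1)
  have msYm : MeasurableSet {ω | Y ω = -1} := hmY (measurableSet_singleton (-1))
  have msT1 : MeasurableSet {ω | Ytil ω = 1} := hmYt (measurableSet_singleton 1)
  have msTm : MeasurableSet {ω | Ytil ω = -1} := hmYt (measurableSet_singleton (-1))
  have msF1 : MeasurableSet {ω | f (X ω) = 1} := hfX (measurableSet_singleton 1)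
  have msFm : MeasurableSet {ω | f (X ω) = -1} := hfX (measurableSet_singleton (-1))
  have mcong : ∀ {S T : Set Ω}, S = T → (μ S).toReal = (μ T).toReal := by
    intro S T h; rw [h]
  -- total mass
  have hq : (μ {ω | Y ω = -1}).toReal = 1 - p := by
    have h := split_meas μ (fun _ => True) MeasurableSet.univ Y hmY hYval
    simp only [true_and, Set.setOf_true, measure_univ, ENNReal.toReal_one] at h
    rw [hp] at h
    linarith
  have h1p : (0:ℝ) < 1 - p := by linarith
  -- given conditional error rates
  have hA0 : (μ {ω | f (X ω) = -1 ∧ Y ω = 1}).toReal = efp * p := by rw [hefp, hp]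
  have hB1 : (μ {ω | f (X ω) = 1 ∧ Y ω = -1}).toReal = efm * (1 - p) := by rw [hefm, hq]
  have hC0 : (μ {ω | Ytil ω = -1 ∧ Y ω = 1}).toReal = ep * p := by rw [hep, hp]
  have hD1 : (μ {ω | Ytil ω = 1 ∧ Y ω = -1}).toReal = em * (1 - p) := by rw [hem, hq]
  have hA1 : (μ {ω | f (X ω) = 1 ∧ Y ω = 1}).toReal = (1 - efp) * p := by
    have h := split_meas μ (fun ω => Y ω = 1) msY1 (fun ω => f (X ω)) hfX hfXval
    rw [mcong (show {ω | Y ω = 1 ∧ f (X ω) = 1} = {ω | f (X ω) = 1 ∧ Y ω = 1} from by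
          ext ω; exact and_comm),
        mcong (show {ω | Y ω = 1 ∧ f (X ω) = -1} = {ω | f (X ω) = -1 ∧ Y ω = 1} from by
          ext ω; exact and_comm), hp, hA0] at h
    linarith
  have hB0 : (μ {ω | f (X ω) = -1 ∧ Y ω = -1}).toReal = (1 - efm) * (1 - p) := by
    have h := split_meas μ (fun ω => Y ω = -1) msYm (fun ω => f (X ω)) hfX hfXval
    rw [mcong (show {ω | Y ω = -1 ∧ f (X ω) = 1} = {ω | f (X ω) = 1 ∧ Y ω = -1} from by
          ext ω; exact and_comm),
        mcong (show {ω | Y ω = -1 ∧ f (X ω) = -1} = {ω | f (X ω) = -1 ∧ Y ω = -1} from by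
          ext ω; exact and_comm), hq, hB1] at h
    linarith
  have hC1 : (μ {ω | Ytil ω = 1 ∧ Y ω = 1}).toReal = (1 - ep) * p := by
    have h := split_meas μ (fun ω => Y ω = 1) msY1 Ytil hmYt hYtval
    rw [mcong (show {ω | Y ω = 1 ∧ Ytil ω = 1} = {ω | Ytil ω = 1 ∧ Y ω = 1} from by
          ext ω; exact and_comm),
        mcong (show {ω | Y ω = 1 ∧ Ytil ω = -1} = {ω | Ytil ω = -1 ∧ Y ω = 1} from by
          ext ω; exact and_comm), hp, hC0] at h
    linarith
  have hD0 : (μ {ω | Ytil ω = -1 ∧ Y ω = -1}).toReal = (1 - em) * (1 - p) := by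
    have h := split_meas μ (fun ω => Y ω = -1) msYm Ytil hmYt hYtval
    rw [mcong (show {ω | Y ω = -1 ∧ Ytil ω = 1} = {ω | Ytil ω = 1 ∧ Y ω = -1} from by
          ext ω; exact and_comm),
        mcong (show {ω | Y ω = -1 ∧ Ytil ω = -1} = {ω | Ytil ω = -1 ∧ Y ω = -1} from by
          ext ω; exact and_comm), hq, hD1] at h
    linarith
  -- marginals
  have hF1 : (μ {ω | f (X ω) = 1}).toReal = (1 - efp) * p + efm * (1 - p) := by
    have h := split_meas μ (fun ω => f (X ω) = 1) msF1 Y hmY hYval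
    rw [hA1, hB1] at h; exact h
  have hFm : (μ {ω | f (X ω) = -1}).toReal = efp * p + (1 - efm) * (1 - p) := by
    have h := split_meas μ (fun ω => f (X ω) = -1) msFm Y hmY hYval
    rw [hA0, hB0] at h; exact h
  have hT1 : (μ {ω | Ytil ω = 1}).toReal = (1 - ep) * p + em * (1 - p) := by
    have h := split_meas μ (fun ω => Ytil ω = 1) msT1 Y hmY hYval
    rw [hC1, hD1] at h; exact h
  have hTm : (μ {ω | Ytil ω = -1}).toReal = ep * p + (1 - em) * (1 - p) := by
    have h := split_meas μ (fun ω => Ytil ω = -1) msTm Y hmY hYval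
    rw [hC0, hD0] at h; exact h
  -- joints via conditional independence
  have joint : ∀ (s t : ℤ) (a b c d : ℝ),
      (μ {ω | f (X ω) = s ∧ Y ω = 1}).toReal = a * p →
      (μ {ω | f (X ω) = s ∧ Y ω = -1}).toReal = b * (1 - p) →
      (μ {ω | Ytil ω = t ∧ Y ω = 1}).toReal = c * p →
      (μ {ω | Ytil ω = t ∧ Y ω = -1}).toReal = d * (1 - p) →
      (μ {ω | f (X ω) = s ∧ Ytil ω = t}).toReal = a * c * p + b * d * (1 - p) := by
    intro s t a b c d ha hb hc hd
    have hs1 : MeasurableSet {ω | f (X ω) = s} := hfX (measurableSet_singleton s)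
    have hs2 : MeasurableSet {ω | Ytil ω = t} := hmYt (measurableSet_singleton t)
    have h := split_meas μ (fun ω => f (X ω) = s ∧ Ytil ω = t) (hs1.inter hs2) Y hmY hYval
    rw [mcong (show {ω | (f (X ω) = s ∧ Ytil ω = t) ∧ Y ω = 1}
          = {ω | f (X ω) = s ∧ Ytil ω = t ∧ Y ω = 1} from by ext ω; exact and_assoc),
        mcong (show {ω | (f (X ω) = s ∧ Ytil ω = t) ∧ Y ω = -1}
          = {ω | f (X ω) = s ∧ Ytil ω = t ∧ Y ω = -1} from by ext ω; exact and_assoc)] at h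
    have hci1 := hCI {x | f x = s} 1 t
    have hcim := hCI {x | f x = s} (-1) t
    simp only [Set.mem_setOf_eq] at hci1 hcim
    rw [hp, ha, hc] at hci1
    rw [hq, hb, hd] at hcim
    have j1 : (μ {ω | f (X ω) = s ∧ Ytil ω = t ∧ Y ω = 1}).toReal = a * c * p :=
      mul_left_cancel₀ (ne_of_gt hp0) (hci1.trans (by ring))
    have jm : (μ {ω | f (X ω) = s ∧ Ytil ω = t ∧ Y ω = -1}).toReal = b * d * (1 - p) :=
      mul_left_cancel₀ (ne_of_gt h1p) (hcim.trans (by ring))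
    rw [j1, jm] at h
    exact h
  have hJ11 := joint 1 1 (1 - efp) efm (1 - ep) em hA1 hB1 hC1 hD1
  have hJ1m := joint 1 (-1) (1 - efp) efm ep (1 - em) hA1 hB1 hC0 hD0
  have hJm1 := joint (-1) 1 efp (1 - efm) (1 - ep) em hA0 hB0 hC1 hD1
  have hJmm := joint (-1) (-1) efp (1 - efm) ep (1 - em) hA0 hB0 hC0 hD0
  -- the key positive quantity
  set D : ℝ := p * (1 - p) * (1 - efm - efp) * (1 - em - ep) with hD
  have hDpos : 0 < D := by
    apply mul_pos (mul_pos (mul_pos hp0 h1p) (by linarith)) (by linarith)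
  have hΔ00 : Δ 0 0 = D := by
    show (μ {ω | f (X ω) = -1 ∧ Ytil ω = -1}).toReal
        - (μ {ω | f (X ω) = -1}).toReal * (μ {ω | Ytil ω = -1}).toReal = D
    rw [hJmm, hFm, hTm, hD]; ring
  have hΔ11 : Δ 1 1 = D := by
    show (μ {ω | f (X ω) = 1 ∧ Ytil ω = 1}).toReal
        - (μ {ω | f (X ω) = 1}).toReal * (μ {ω | Ytil ω = 1}).toReal = D
    rw [hJ11, hF1, hT1, hD]; ring
  have hΔ01 : Δ 0 1 = -D := by
    show (μ {ω | f (X ω) = -1 ∧ Ytil ω = 1}).toReal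
        - (μ {ω | f (X ω) = -1}).toReal * (μ {ω | Ytil ω = 1}).toReal = -D
    rw [hJm1, hFm, hT1, hD]; ring
  have hΔ10 : Δ 1 0 = -D := by
    show (μ {ω | f (X ω) = 1 ∧ Ytil ω = -1}).toReal
        - (μ {ω | f (X ω) = 1}).toReal * (μ {ω | Ytil ω = -1}).toReal = -D
    rw [hJ1m, hF1, hTm, hD]; ring
  have key : ∀ k l : Fin 2, Δ k l = if k = l then D else -D := by
    simp only [Fin.forall_fin_two]
    refine ⟨⟨?_, ?_⟩, ?_, ?_⟩
    · rw [hΔ00]; simp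
    · rw [hΔ01, if_neg (by decide)]
    · rw [hΔ10, if_neg (by decide)]
    · rw [hΔ11]; simp
  refine ⟨?_, ?_, ?_⟩
  · intro k
    rw [key k k, if_pos rfl]
    exact hDpos
  · intro k l hkl
    rw [key k l, if_neg hkl]
    linarith
  · funext k l
    rw [key k l]
    by_cases hkl : k = l
    · rw [if_pos hkl, if_pos hkl, if_pos hDpos]
    · rw [if_neg hkl, if_neg hkl, if_neg (by simp; linarith)]
end

section
/- Let f* be a classifier with error rates e*₊₁ := P(f*(X) = −1 | Y = +1) and e*₋₁ := P(f*(X) = +1 | Y = −1) satisfying e*₋₁ + e*₊₁ < 1. If e₋₁ + e₊₁ < 1, then Ỹ is categorical with respect to f*(X): for each y ∈ {−1,+1}, P(Ỹ = −y | f*(X) = y) < P(Ỹ = −y). -/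
open MeasureTheory

/-- If `em + ep < 1` and `efm + efp < 1`, the noisy label `Ỹ` is categorical
with respect to `f(X)`: for each `y ∈ {-1,1}`, `P(Ỹ = -y | f(X) = y) < P(Ỹ = -y)`. -/
theorem peer_loss_stmt2
    {Ω 𝒳 : Type*} [MeasurableSpace Ω] [MeasurableSpace 𝒳]
    (μ : Measure Ω) [IsProbabilityMeasure μ]
    (X : Ω → 𝒳) (Y Ytil : Ω → ℤ)
    (hmX : Measurable X) (hmY : Measurable Y) (hmYt : Measurable Ytil)
    (hYval : ∀ ω, Y ω = 1 ∨ Y ω = -1)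
    (hYtval : ∀ ω, Ytil ω = 1 ∨ Ytil ω = -1)
    (p ep em : ℝ)
    (hp : (μ {ω | Y ω = 1}).toReal = p) (hp0 : 0 < p) (hp1 : p < 1)
    (hep : (μ {ω | Ytil ω = -1 ∧ Y ω = 1}).toReal = ep * (μ {ω | Y ω = 1}).toReal)
    (hem : (μ {ω | Ytil ω = 1 ∧ Y ω = -1}).toReal = em * (μ {ω | Y ω = -1}).toReal)
    -- `Ỹ` is conditionally independent of `X` given `Y`
    (hCI : ∀ (A : Set 𝒳) (y y' : ℤ),
      (μ {ω | Y ω = y}).toReal * (μ {ω | X ω ∈ A ∧ Ytil ω = y' ∧ Y ω = y}).toReal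
        = (μ {ω | X ω ∈ A ∧ Y ω = y}).toReal * (μ {ω | Ytil ω = y' ∧ Y ω = y}).toReal)
    (f : 𝒳 → ℤ) (hmf : Measurable f)
    (hfval : ∀ x, f x = 1 ∨ f x = -1)
    (efp efm : ℝ)
    (hefp : (μ {ω | f (X ω) = -1 ∧ Y ω = 1}).toReal = efp * (μ {ω | Y ω = 1}).toReal)
    (hefm : (μ {ω | f (X ω) = 1 ∧ Y ω = -1}).toReal = efm * (μ {ω | Y ω = -1}).toReal)
    (hef : efm + efp < 1)
    (he : em + ep < 1) :
    ∀ y : ℤ, (y = 1 ∨ y = -1) →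
      (μ {ω | Ytil ω = -y ∧ f (X ω) = y}).toReal / (μ {ω | f (X ω) = y}).toReal
        < (μ {ω | Ytil ω = -y}).toReal := by
  -- helper: toReal of a measure of a set split by a measurable partition
  have key : ∀ (s a b : Set Ω), MeasurableSet (s ∩ b) → (∀ ω, ω ∈ a ∨ ω ∈ b) →
      Disjoint a b →
      (μ s).toReal = (μ (s ∩ a)).toReal + (μ (s ∩ b)).toReal := by
    intro s a b hb hcov hdisj
    have hs : s = (s ∩ a) ∪ (s ∩ b) := by
      ext ω; constructor
      · intro h
        rcases hcov ω with h' | h'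
        · exact Or.inl ⟨h, h'⟩
        · exact Or.inr ⟨h, h'⟩
      · rintro (⟨h, -⟩ | ⟨h, -⟩) <;> exact h
    conv_lhs => rw [hs]
    rw [measure_union (hdisj.mono Set.inter_subset_right Set.inter_subset_right) hb,
      ENNReal.toReal_add (measure_ne_top _ _) (measure_ne_top _ _)]
  have mY1 : MeasurableSet {ω | Y ω = 1} := hmY (measurableSet_singleton 1)
  have mYm : MeasurableSet {ω | Y ω = -1} := hmY (measurableSet_singleton (-1))
  have mYt1 : MeasurableSet {ω | Ytil ω = 1} := hmYt (measurableSet_singleton 1)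
  have mYtm : MeasurableSet {ω | Ytil ω = -1} := hmYt (measurableSet_singleton (-1))
  have mF1 : MeasurableSet {ω | f (X ω) = 1} := (hmf.comp hmX) (measurableSet_singleton 1)
  have mFm : MeasurableSet {ω | f (X ω) = -1} := (hmf.comp hmX) (measurableSet_singleton (-1))
  have disjY : Disjoint {ω | Y ω = 1} {ω | Y ω = -1} := by
    rw [Set.disjoint_left]; intro ω h1 h2
    simp only [Set.mem_setOf_eq] at h1 h2; omega
  have disjYt : Disjoint {ω | Ytil ω = 1} {ω | Ytil ω = -1} := by
    rw [Set.disjoint_left]; intro ω h1 h2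
    simp only [Set.mem_setOf_eq] at h1 h2; omega
  have disjF : Disjoint {ω | f (X ω) = 1} {ω | f (X ω) = -1} := by
    rw [Set.disjoint_left]; intro ω h1 h2
    simp only [Set.mem_setOf_eq] at h1 h2; omega
  have covY : ∀ ω : Ω, ω ∈ {ω | Y ω = 1} ∨ ω ∈ {ω | Y ω = -1} := hYval
  have covYt : ∀ ω : Ω, ω ∈ {ω | Ytil ω = 1} ∨ ω ∈ {ω | Ytil ω = -1} := hYtval
  have covF : ∀ ω : Ω, ω ∈ {ω | f (X ω) = 1} ∨ ω ∈ {ω | f (X ω) = -1} := fun ω => hfval (X ω)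
  have hq0 : (0:ℝ) < 1 - p := by linarith
  -- P(Y = -1) = 1 - p
  have hq : (μ {ω | Y ω = -1}).toReal = 1 - p := by
    have h := key Set.univ {ω | Y ω = 1} {ω | Y ω = -1} (MeasurableSet.univ.inter mYm) covY disjY
    simp only [Set.univ_inter] at h
    rw [measure_univ, ENNReal.toReal_one, hp] at h
    linarith
  rw [hp] at hep hefp
  rw [hq] at hem hefm
  -- complements within each class
  have hf1Y1 : (μ {ω | f (X ω) = 1 ∧ Y ω = 1}).toReal = (1 - efp) * p := by
    have h := key {ω | Y ω = 1} {ω | f (X ω) = 1} {ω | f (X ω) = -1} (mY1.inter mFm) covF disjF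
    have e1 : {ω | Y ω = 1} ∩ {ω | f (X ω) = 1} = {ω | f (X ω) = 1 ∧ Y ω = 1} := by
      ext ω; simp only [Set.mem_inter_iff, Set.mem_setOf_eq]; tauto
    have e2 : {ω | Y ω = 1} ∩ {ω | f (X ω) = -1} = {ω | f (X ω) = -1 ∧ Y ω = 1} := by
      ext ω; simp only [Set.mem_inter_iff, Set.mem_setOf_eq]; tauto
    rw [e1, e2, hp, hefp] at h; linarith
  have hfmYm : (μ {ω | f (X ω) = -1 ∧ Y ω = -1}).toReal = (1 - efm) * (1 - p) := by
    have h := key {ω | Y ω = -1} {ω | f (X ω) = -1} {ω | f (X ω) = 1} (mYm.inter mF1) (fun ω => (covF ω).symm) disjF.symm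
    have e1 : {ω | Y ω = -1} ∩ {ω | f (X ω) = -1} = {ω | f (X ω) = -1 ∧ Y ω = -1} := by
      ext ω; simp only [Set.mem_inter_iff, Set.mem_setOf_eq]; tauto
    have e2 : {ω | Y ω = -1} ∩ {ω | f (X ω) = 1} = {ω | f (X ω) = 1 ∧ Y ω = -1} := by
      ext ω; simp only [Set.mem_inter_iff, Set.mem_setOf_eq]; tauto
    rw [e1, e2, hq, hefm] at h; linarith
  have hYt1Y1 : (μ {ω | Ytil ω = 1 ∧ Y ω = 1}).toReal = (1 - ep) * p := by
    have h := key {ω | Y ω = 1} {ω | Ytil ω = 1} {ω | Ytil ω = -1} (mY1.inter mYtm) covYt disjYt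
    have e1 : {ω | Y ω = 1} ∩ {ω | Ytil ω = 1} = {ω | Ytil ω = 1 ∧ Y ω = 1} := by
      ext ω; simp only [Set.mem_inter_iff, Set.mem_setOf_eq]; tauto
    have e2 : {ω | Y ω = 1} ∩ {ω | Ytil ω = -1} = {ω | Ytil ω = -1 ∧ Y ω = 1} := by
      ext ω; simp only [Set.mem_inter_iff, Set.mem_setOf_eq]; tauto
    rw [e1, e2, hp, hep] at h; linarith
  have hYtmYm : (μ {ω | Ytil ω = -1 ∧ Y ω = -1}).toReal = (1 - em) * (1 - p) := by
    have h := key {ω | Y ω = -1} {ω | Ytil ω = -1} {ω | Ytil ω = 1} (mYm.inter mYt1) (fun ω => (covYt ω).symm) disjYt.symm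
    have e1 : {ω | Y ω = -1} ∩ {ω | Ytil ω = -1} = {ω | Ytil ω = -1 ∧ Y ω = -1} := by
      ext ω; simp only [Set.mem_inter_iff, Set.mem_setOf_eq]; tauto
    have e2 : {ω | Y ω = -1} ∩ {ω | Ytil ω = 1} = {ω | Ytil ω = 1 ∧ Y ω = -1} := by
      ext ω; simp only [Set.mem_inter_iff, Set.mem_setOf_eq]; tauto
    rw [e1, e2, hq, hem] at h; linarith
  -- marginals
  have hF1 : (μ {ω | f (X ω) = 1}).toReal = (1 - efp) * p + efm * (1 - p) := by
    have h := key {ω | f (X ω) = 1} {ω | Y ω = 1} {ω | Y ω = -1} (mF1.inter mYm) covY disjY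
    have e1 : {ω | f (X ω) = 1} ∩ {ω | Y ω = 1} = {ω | f (X ω) = 1 ∧ Y ω = 1} := rfl
    have e2 : {ω | f (X ω) = 1} ∩ {ω | Y ω = -1} = {ω | f (X ω) = 1 ∧ Y ω = -1} := rfl
    rw [e1, e2, hf1Y1, hefm] at h; linarith
  have hFm : (μ {ω | f (X ω) = -1}).toReal = efp * p + (1 - efm) * (1 - p) := by
    have h := key {ω | f (X ω) = -1} {ω | Y ω = 1} {ω | Y ω = -1} (mFm.inter mYm) covY disjY
    have e1 : {ω | f (X ω) = -1} ∩ {ω | Y ω = 1} = {ω | f (X ω) = -1 ∧ Y ω = 1} := rfl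
    have e2 : {ω | f (X ω) = -1} ∩ {ω | Y ω = -1} = {ω | f (X ω) = -1 ∧ Y ω = -1} := rfl
    rw [e1, e2, hefp, hfmYm] at h; linarith
  have hTm : (μ {ω | Ytil ω = -1}).toReal = ep * p + (1 - em) * (1 - p) := by
    have h := key {ω | Ytil ω = -1} {ω | Y ω = 1} {ω | Y ω = -1} (mYtm.inter mYm) covY disjY
    have e1 : {ω | Ytil ω = -1} ∩ {ω | Y ω = 1} = {ω | Ytil ω = -1 ∧ Y ω = 1} := rfl
    have e2 : {ω | Ytil ω = -1} ∩ {ω | Y ω = -1} = {ω | Ytil ω = -1 ∧ Y ω = -1} := rfl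
    rw [e1, e2, hep, hYtmYm] at h; linarith
  have hT1 : (μ {ω | Ytil ω = 1}).toReal = (1 - ep) * p + em * (1 - p) := by
    have h := key {ω | Ytil ω = 1} {ω | Y ω = 1} {ω | Y ω = -1} (mYt1.inter mYm) covY disjY
    have e1 : {ω | Ytil ω = 1} ∩ {ω | Y ω = 1} = {ω | Ytil ω = 1 ∧ Y ω = 1} := rfl
    have e2 : {ω | Ytil ω = 1} ∩ {ω | Y ω = -1} = {ω | Ytil ω = 1 ∧ Y ω = -1} := rfl
    rw [e1, e2, hYt1Y1, hem] at h; linarith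
  -- triple intersections via conditional independence
  have T11 : (μ {ω | f (X ω) = 1 ∧ Ytil ω = -1 ∧ Y ω = 1}).toReal = (1 - efp) * ep * p := by
    have h := hCI {x | f x = 1} 1 (-1)
    simp only [Set.mem_setOf_eq] at h
    rw [hp, hep, hf1Y1] at h
    exact mul_left_cancel₀ (ne_of_gt hp0)
      (h.trans (by ring : (1 - efp) * p * (ep * p) = p * ((1 - efp) * ep * p)))
  have T1m : (μ {ω | f (X ω) = 1 ∧ Ytil ω = -1 ∧ Y ω = -1}).toReal = efm * (1 - em) * (1 - p) := by
    have h := hCI {x | f x = 1} (-1) (-1)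
    simp only [Set.mem_setOf_eq] at h
    rw [hq, hefm, hYtmYm] at h
    exact mul_left_cancel₀ (ne_of_gt hq0)
      (h.trans (by ring : efm * (1 - p) * ((1 - em) * (1 - p)) = (1 - p) * (efm * (1 - em) * (1 - p))))
  have Tm1 : (μ {ω | f (X ω) = -1 ∧ Ytil ω = 1 ∧ Y ω = 1}).toReal = efp * (1 - ep) * p := by
    have h := hCI {x | f x = -1} 1 1
    simp only [Set.mem_setOf_eq] at h
    rw [hp, hefp, hYt1Y1] at h
    exact mul_left_cancel₀ (ne_of_gt hp0)
      (h.trans (by ring : efp * p * ((1 - ep) * p) = p * (efp * (1 - ep) * p)))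
  have Tmm : (μ {ω | f (X ω) = -1 ∧ Ytil ω = 1 ∧ Y ω = -1}).toReal = (1 - efm) * em * (1 - p) := by
    have h := hCI {x | f x = -1} (-1) 1
    simp only [Set.mem_setOf_eq] at h
    rw [hq, hfmYm, hem] at h
    exact mul_left_cancel₀ (ne_of_gt hq0)
      (h.trans (by ring : (1 - efm) * (1 - p) * (em * (1 - p)) = (1 - p) * ((1 - efm) * em * (1 - p))))
  -- numerators
  have hN1 : (μ {ω | Ytil ω = -1 ∧ f (X ω) = 1}).toReal
      = (1 - efp) * ep * p + efm * (1 - em) * (1 - p) := by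
    have h := key {ω | Ytil ω = -1 ∧ f (X ω) = 1} {ω | Y ω = 1} {ω | Y ω = -1}
      ((mYtm.inter mF1).inter mYm) covY disjY
    have e1 : {ω | Ytil ω = -1 ∧ f (X ω) = 1} ∩ {ω | Y ω = 1}
        = {ω | f (X ω) = 1 ∧ Ytil ω = -1 ∧ Y ω = 1} := by
      ext ω; simp only [Set.mem_inter_iff, Set.mem_setOf_eq]; tauto
    have e2 : {ω | Ytil ω = -1 ∧ f (X ω) = 1} ∩ {ω | Y ω = -1}
        = {ω | f (X ω) = 1 ∧ Ytil ω = -1 ∧ Y ω = -1} := by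
      ext ω; simp only [Set.mem_inter_iff, Set.mem_setOf_eq]; tauto
    rw [e1, e2, T11, T1m] at h; linarith
  have hNm : (μ {ω | Ytil ω = 1 ∧ f (X ω) = -1}).toReal
      = efp * (1 - ep) * p + (1 - efm) * em * (1 - p) := by
    have h := key {ω | Ytil ω = 1 ∧ f (X ω) = -1} {ω | Y ω = 1} {ω | Y ω = -1}
      ((mYt1.inter mFm).inter mYm) covY disjY
    have e1 : {ω | Ytil ω = 1 ∧ f (X ω) = -1} ∩ {ω | Y ω = 1}
        = {ω | f (X ω) = -1 ∧ Ytil ω = 1 ∧ Y ω = 1} := by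
      ext ω; simp only [Set.mem_inter_iff, Set.mem_setOf_eq]; tauto
    have e2 : {ω | Ytil ω = 1 ∧ f (X ω) = -1} ∩ {ω | Y ω = -1}
        = {ω | f (X ω) = -1 ∧ Ytil ω = 1 ∧ Y ω = -1} := by
      ext ω; simp only [Set.mem_inter_iff, Set.mem_setOf_eq]; tauto
    rw [e1, e2, Tm1, Tmm] at h; linarith
  -- nonnegativity of the error rates
  have hefp0 : 0 ≤ efp :=
    (mul_nonneg_iff_of_pos_right hp0).mp (hefp ▸ ENNReal.toReal_nonneg)
  have hefm0 : 0 ≤ efm :=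
    (mul_nonneg_iff_of_pos_right hq0).mp (hefm ▸ ENNReal.toReal_nonneg)
  have hep0 : 0 ≤ ep :=
    (mul_nonneg_iff_of_pos_right hp0).mp (hep ▸ ENNReal.toReal_nonneg)
  have hem0 : 0 ≤ em :=
    (mul_nonneg_iff_of_pos_right hq0).mp (hem ▸ ENNReal.toReal_nonneg)
  have hef1 : (0:ℝ) < 1 - efm - efp := by linarith
  have he1 : (0:ℝ) < 1 - em - ep := by linarith
  rintro y (rfl | rfl)
  · have hd : 0 < (μ {ω | f (X ω) = 1}).toReal := by
      rw [hF1]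
      have h1 : 0 < (1 - efp) * p := mul_pos (by linarith) hp0
      have h2 : 0 ≤ efm * (1 - p) := mul_nonneg hefm0 hq0.le
      linarith
    rw [div_lt_iff₀ hd]
    show (μ {ω | Ytil ω = -1 ∧ f (X ω) = 1}).toReal
      < (μ {ω | Ytil ω = -1}).toReal * (μ {ω | f (X ω) = 1}).toReal
    rw [hN1, hTm, hF1]
    have hid : (ep * p + (1 - em) * (1 - p)) * ((1 - efp) * p + efm * (1 - p))
        - ((1 - efp) * ep * p + efm * (1 - em) * (1 - p))
        = (p * (1 - p)) * ((1 - efm - efp) * (1 - em - ep)) := by ring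
    have hpos := mul_pos (mul_pos hp0 hq0) (mul_pos hef1 he1)
    linarith
  · have hd : 0 < (μ {ω | f (X ω) = -1}).toReal := by
      rw [hFm]
      have h1 : 0 < (1 - efm) * (1 - p) := mul_pos (by linarith) hq0
      have h2 : 0 ≤ efp * p := mul_nonneg hefp0 hp0.le
      linarith
    simp only [neg_neg]
    rw [div_lt_iff₀ hd]
    show (μ {ω | Ytil ω = 1 ∧ f (X ω) = -1}).toReal
      < (μ {ω | Ytil ω = 1}).toReal * (μ {ω | f (X ω) = -1}).toReal
    rw [hNm, hT1, hFm]
    have hid : ((1 - ep) * p + em * (1 - p)) * (efp * p + (1 - efm) * (1 - p))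
        - (efp * (1 - ep) * p + (1 - efm) * em * (1 - p))
        = (p * (1 - p)) * ((1 - efm - efp) * (1 - em - ep)) := by ring
    have hpos := mul_pos (mul_pos hp0 hq0) (mul_pos hef1 he1)
    linarith
end

section
/- For any classifier f and loss function ℓ : ℝ × {−1,+1} → ℝ, the expected loss under noisy labels decomposes as E[ℓ(f(X), Ỹ)] = (1 − e₋₁ − e₊₁)·E_{(X,Y)∼D}[ℓ(f(X), Y)] + E_X[e₊₁·ℓ(f(X), −1) + e₋₁·ℓ(f(X), +1)]. -/
open MeasureTheory

/-- The expected loss under noisy labels decomposes as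
`E[ℓ(f(X), Ỹ)] = (1 - em - ep) E[ℓ(f(X), Y)] + E_X[ep ℓ(f(X), -1) + em ℓ(f(X), 1)]`. -/
theorem peer_loss_stmt3
    {Ω 𝒳 : Type*} [MeasurableSpace Ω] [MeasurableSpace 𝒳]
    (μ : Measure Ω) [IsProbabilityMeasure μ]
    (X : Ω → 𝒳) (Y Ytil : Ω → ℤ)
    (hmX : Measurable X) (hmY : Measurable Y) (hmYt : Measurable Ytil)
    (hYval : ∀ ω, Y ω = 1 ∨ Y ω = -1)
    (hYtval : ∀ ω, Ytil ω = 1 ∨ Ytil ω = -1)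
    (p ep em : ℝ)
    (hp : (μ {ω | Y ω = 1}).toReal = p) (hp0 : 0 < p) (hp1 : p < 1)
    (hep : (μ {ω | Ytil ω = -1 ∧ Y ω = 1}).toReal = ep * (μ {ω | Y ω = 1}).toReal)
    (hem : (μ {ω | Ytil ω = 1 ∧ Y ω = -1}).toReal = em * (μ {ω | Y ω = -1}).toReal)
    -- `Ỹ` is conditionally independent of `X` given `Y` (functional form)
    (hCI : ∀ (h : 𝒳 → ℝ), Integrable (fun ω => h (X ω)) μ → ∀ y y' : ℤ,
      (μ {ω | Y ω = y}).toReal * ∫ ω in {ω | Ytil ω = y' ∧ Y ω = y}, h (X ω) ∂μ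
        = (μ {ω | Ytil ω = y' ∧ Y ω = y}).toReal * ∫ ω in {ω | Y ω = y}, h (X ω) ∂μ)
    (ℓ : ℝ → ℤ → ℝ) (f : 𝒳 → ℝ) (hmf : Measurable f)
    (hInt : ∀ y : ℤ, Integrable (fun ω => ℓ (f (X ω)) y) μ) :
    ∫ ω, ℓ (f (X ω)) (Ytil ω) ∂μ
      = (1 - em - ep) * ∫ ω, ℓ (f (X ω)) (Y ω) ∂μ
        + ∫ ω, (ep * ℓ (f (X ω)) (-1) + em * ℓ (f (X ω)) 1) ∂μ := by
  classical
  -- measurable sets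
  have hA : MeasurableSet {ω | Y ω = 1} := hmY (measurableSet_singleton 1)
  have hB : MeasurableSet {ω | Y ω = -1} := hmY (measurableSet_singleton (-1))
  have hAt : MeasurableSet {ω | Ytil ω = 1} := hmYt (measurableSet_singleton 1)
  have hBt : MeasurableSet {ω | Ytil ω = -1} := hmYt (measurableSet_singleton (-1))
  have hSet : ∀ y' y : ℤ, MeasurableSet {ω | Ytil ω = y' ∧ Y ω = y} := fun y' y =>
    (hmYt (measurableSet_singleton y')).inter (hmY (measurableSet_singleton y))
  -- generic split lemma
  have key : ∀ (g : Ω → ℝ), Integrable g μ → ∀ (s t u : Set Ω), MeasurableSet t →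
      Disjoint s t → s ∪ t = u →
      ∫ ω in u, g ω ∂μ = ∫ ω in s, g ω ∂μ + ∫ ω in t, g ω ∂μ := by
    intro g hg s t u ht hst hu
    rw [← hu, setIntegral_union hst ht hg.integrableOn hg.integrableOn]
  -- abbreviations for the four base integrals
  have hI1 := hInt 1
  have hIm := hInt (-1)
  -- split of a Y-level set by Ytil
  have hsplit2 : ∀ (c y : ℤ),
      ∫ ω in {ω | Y ω = y}, ℓ (f (X ω)) c ∂μ
        = ∫ ω in {ω | Ytil ω = 1 ∧ Y ω = y}, ℓ (f (X ω)) c ∂μ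
          + ∫ ω in {ω | Ytil ω = -1 ∧ Y ω = y}, ℓ (f (X ω)) c ∂μ := by
    intro c y
    refine key _ (hInt c) _ _ _ (hSet (-1) y) ?_ ?_
    · rw [Set.disjoint_left]; rintro ω ⟨h1, _⟩ ⟨h2, _⟩; omega
    · ext ω
      rcases hYtval ω with h | h <;> simp [h]
  -- split of a Ytil-level set by Y
  have hsplit1 : ∀ (c y' : ℤ),
      ∫ ω in {ω | Ytil ω = y'}, ℓ (f (X ω)) c ∂μ
        = ∫ ω in {ω | Ytil ω = y' ∧ Y ω = 1}, ℓ (f (X ω)) c ∂μ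
          + ∫ ω in {ω | Ytil ω = y' ∧ Y ω = -1}, ℓ (f (X ω)) c ∂μ := by
    intro c y'
    refine key _ (hInt c) _ _ _ (hSet y' (-1)) ?_ ?_
    · rw [Set.disjoint_left]; rintro ω ⟨_, h1⟩ ⟨_, h2⟩; omega
    · ext ω
      rcases hYval ω with h | h <;> simp [h]
  -- full split by Y
  have hsplit0 : ∀ (c : ℤ),
      ∫ ω, ℓ (f (X ω)) c ∂μ
        = ∫ ω in {ω | Y ω = 1}, ℓ (f (X ω)) c ∂μ
          + ∫ ω in {ω | Y ω = -1}, ℓ (f (X ω)) c ∂μ := by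
    intro c
    have := key _ (hInt c) {ω | Y ω = 1} {ω | Y ω = -1} Set.univ hB
      (by rw [Set.disjoint_left]; intro ω h1 h2; simp at h1 h2; omega)
      (by ext ω; rcases hYval ω with h | h <;> simp [h])
    rwa [setIntegral_univ] at this
  -- measure of Y = -1
  have hpm : (μ {ω | Y ω = -1}).toReal = 1 - p := by
    have hc : {ω | Y ω = -1} = {ω | Y ω = 1}ᶜ := by
      ext ω; rcases hYval ω with h | h <;> simp [h]
    rw [hc, measure_compl hA (measure_ne_top μ _), measure_univ,
      ENNReal.toReal_sub_of_le prob_le_one ENNReal.one_ne_top, ENNReal.toReal_one, hp]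
  -- conditional independence consequences
  have hCIp : ∀ c : ℤ,
      ∫ ω in {ω | Ytil ω = -1 ∧ Y ω = 1}, ℓ (f (X ω)) c ∂μ
        = ep * ∫ ω in {ω | Y ω = 1}, ℓ (f (X ω)) c ∂μ := by
    intro c
    have h := hCI (fun x => ℓ (f x) c) (hInt c) 1 (-1)
    rw [hp, hep, hp] at h
    exact mul_left_cancel₀ (ne_of_gt hp0) (h.trans (by ring))
  have hCIm : ∀ c : ℤ,
      ∫ ω in {ω | Ytil ω = 1 ∧ Y ω = -1}, ℓ (f (X ω)) c ∂μ
        = em * ∫ ω in {ω | Y ω = -1}, ℓ (f (X ω)) c ∂μ := by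
    intro c
    have h := hCI (fun x => ℓ (f x) c) (hInt c) (-1) 1
    rw [hpm, hem, hpm] at h
    have hne : (1 : ℝ) - p ≠ 0 := by linarith
    exact mul_left_cancel₀ hne (h.trans (by ring))
  -- decompose the noisy-label integral
  have hFdec : (fun ω => ℓ (f (X ω)) (Ytil ω))
      = fun ω => Set.indicator {ω | Ytil ω = 1} (fun ω => ℓ (f (X ω)) 1) ω
          + Set.indicator {ω | Ytil ω = -1} (fun ω => ℓ (f (X ω)) (-1)) ω := by
    funext ω
    rcases hYtval ω with h | h <;> simp [Set.indicator, h]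
  have hGdec : (fun ω => ℓ (f (X ω)) (Y ω))
      = fun ω => Set.indicator {ω | Y ω = 1} (fun ω => ℓ (f (X ω)) 1) ω
          + Set.indicator {ω | Y ω = -1} (fun ω => ℓ (f (X ω)) (-1)) ω := by
    funext ω
    rcases hYval ω with h | h <;> simp [Set.indicator, h]
  have hLHS : ∫ ω, ℓ (f (X ω)) (Ytil ω) ∂μ
      = ∫ ω in {ω | Ytil ω = 1}, ℓ (f (X ω)) 1 ∂μ
        + ∫ ω in {ω | Ytil ω = -1}, ℓ (f (X ω)) (-1) ∂μ := by
    rw [hFdec, integral_add (hI1.indicator hAt) (hIm.indicator hBt),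
      integral_indicator hAt, integral_indicator hBt]
  have hG : ∫ ω, ℓ (f (X ω)) (Y ω) ∂μ
      = ∫ ω in {ω | Y ω = 1}, ℓ (f (X ω)) 1 ∂μ
        + ∫ ω in {ω | Y ω = -1}, ℓ (f (X ω)) (-1) ∂μ := by
    rw [hGdec, integral_add (hI1.indicator hA) (hIm.indicator hB),
      integral_indicator hA, integral_indicator hB]
  have hlast : ∫ ω, (ep * ℓ (f (X ω)) (-1) + em * ℓ (f (X ω)) 1) ∂μ
      = ep * ∫ ω, ℓ (f (X ω)) (-1) ∂μ + em * ∫ ω, ℓ (f (X ω)) 1 ∂μ := by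
    rw [integral_add (hIm.const_mul ep) (hI1.const_mul em),
      integral_const_mul, integral_const_mul]
  rw [hLHS, hG, hlast, hsplit1 1 1, hsplit1 (-1) (-1), hsplit0 1, hsplit0 (-1)]
  have e1 : ∫ ω in {ω | Ytil ω = 1 ∧ Y ω = 1}, ℓ (f (X ω)) 1 ∂μ
      = ∫ ω in {ω | Y ω = 1}, ℓ (f (X ω)) 1 ∂μ
        - ep * ∫ ω in {ω | Y ω = 1}, ℓ (f (X ω)) 1 ∂μ := by
    have := hsplit2 1 1; rw [hCIp 1] at this; linarith
  have e2 : ∫ ω in {ω | Ytil ω = -1 ∧ Y ω = -1}, ℓ (f (X ω)) (-1) ∂μ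
      = ∫ ω in {ω | Y ω = -1}, ℓ (f (X ω)) (-1) ∂μ
        - em * ∫ ω in {ω | Y ω = -1}, ℓ (f (X ω)) (-1) ∂μ := by
    have := hsplit2 (-1) (-1); rw [hCIm (-1)] at this; linarith
  rw [e1, e2, hCIm 1, hCIp (-1)]
  ring
end

section
/- Let (X_{n₁}, Ỹ_{n₁}) and (X_{n₂}, Ỹ_{n₂}) be two independent draws from the noisy distribution of (X, Ỹ). For any classifier f and loss function ℓ : ℝ × {−1,+1} → ℝ, E[ℓ(f(X_{n₁}), Ỹ_{n₂})] = (1 − e₋₁ − e₊₁)·E[ℓ(f(X_{n₁}), Y_{n₂})] + E_X[e₊₁·ℓ(f(X), −1) + e₋₁·ℓ(f(X), +1)], where Y_{n₂} is the clean label of the second sample and E[ℓ(f(X_{n₁}), Y_{n₂})] is taken over the product of the two marginals. -/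
open MeasureTheory

lemma peer_aux_split {Ω : Type*} [MeasurableSpace Ω] (μ : Measure Ω) [IsProbabilityMeasure μ]
    (G : Ω → ℤ → ℝ) (Z : Ω → ℤ) (hmZ : Measurable Z)
    (hZ : ∀ ω, Z ω = 1 ∨ Z ω = -1)
    (hInt : ∀ y, Integrable (fun ω => G ω y) μ) :
    ∫ w, G w.1 (Z w.2) ∂(μ.prod μ)
      = (μ {ω | Z ω = 1}).toReal * ∫ ω, G ω 1 ∂μ
      + (μ {ω | Z ω = -1}).toReal * ∫ ω, G ω (-1) ∂μ := by
  have hm1 : MeasurableSet {ω | Z ω = 1} := hmZ (measurableSet_singleton 1)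
  have hm2 : MeasurableSet {ω | Z ω = -1} := hmZ (measurableSet_singleton (-1))
  have heq : ∀ w : Ω × Ω, G w.1 (Z w.2)
      = G w.1 1 * Set.indicator {ω | Z ω = 1} (fun _ => (1:ℝ)) w.2
      + G w.1 (-1) * Set.indicator {ω | Z ω = -1} (fun _ => (1:ℝ)) w.2 := by
    intro w
    rcases hZ w.2 with h | h <;> simp [Set.indicator, h]
  rw [integral_congr_ae (Filter.Eventually.of_forall heq)]
  have i1 : Integrable (fun ω => Set.indicator {ω | Z ω = 1} (fun _ => (1:ℝ)) ω) μ :=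
    (integrable_const (1:ℝ)).indicator hm1
  have i2 : Integrable (fun ω => Set.indicator {ω | Z ω = -1} (fun _ => (1:ℝ)) ω) μ :=
    (integrable_const (1:ℝ)).indicator hm2
  rw [integral_add ((hInt 1).mul_prod i1) ((hInt (-1)).mul_prod i2),
    integral_prod_mul (f := fun ω => G ω 1), integral_prod_mul (f := fun ω => G ω (-1))]
  simp only [integral_indicator_const (1:ℝ) hm1, integral_indicator_const (1:ℝ) hm2, smul_eq_mul, mul_one, measureReal_def]
  ring

lemma peer_meas_split {Ω : Type*} [MeasurableSpace Ω] (μ : Measure Ω) [IsFiniteMeasure μ]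
    {a b s : Set Ω} (hb : MeasurableSet b) (hd : Disjoint a b) (hu : a ∪ b = s) :
    (μ s).toReal = (μ a).toReal + (μ b).toReal := by
  rw [← hu, measure_union hd hb,
    ENNReal.toReal_add (measure_ne_top μ a) (measure_ne_top μ b)]

/-- For two independent draws `(X_{n₁}, Ỹ_{n₁})` and `(X_{n₂}, Ỹ_{n₂})`
(modelled by the product measure `μ.prod μ`),
`E[ℓ(f(X_{n₁}), Ỹ_{n₂})] = (1 - em - ep) E[ℓ(f(X_{n₁}), Y_{n₂})]
  + E_X[ep ℓ(f(X), -1) + em ℓ(f(X), 1)]`. -/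
theorem peer_loss_stmt4
    {Ω 𝒳 : Type*} [MeasurableSpace Ω] [MeasurableSpace 𝒳]
    (μ : Measure Ω) [IsProbabilityMeasure μ]
    (X : Ω → 𝒳) (Y Ytil : Ω → ℤ)
    (hmX : Measurable X) (hmY : Measurable Y) (hmYt : Measurable Ytil)
    (hYval : ∀ ω, Y ω = 1 ∨ Y ω = -1)
    (hYtval : ∀ ω, Ytil ω = 1 ∨ Ytil ω = -1)
    (p ep em : ℝ)
    (hp : (μ {ω | Y ω = 1}).toReal = p) (hp0 : 0 < p) (hp1 : p < 1)
    (hep : (μ {ω | Ytil ω = -1 ∧ Y ω = 1}).toReal = ep * (μ {ω | Y ω = 1}).toReal)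
    (hem : (μ {ω | Ytil ω = 1 ∧ Y ω = -1}).toReal = em * (μ {ω | Y ω = -1}).toReal)
    -- `Ỹ` is conditionally independent of `X` given `Y` (functional form)
    (hCI : ∀ (h : 𝒳 → ℝ), Integrable (fun ω => h (X ω)) μ → ∀ y y' : ℤ,
      (μ {ω | Y ω = y}).toReal * ∫ ω in {ω | Ytil ω = y' ∧ Y ω = y}, h (X ω) ∂μ
        = (μ {ω | Ytil ω = y' ∧ Y ω = y}).toReal * ∫ ω in {ω | Y ω = y}, h (X ω) ∂μ)
    (ℓ : ℝ → ℤ → ℝ) (f : 𝒳 → ℝ) (hmf : Measurable f)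
    (hInt : ∀ y : ℤ, Integrable (fun ω => ℓ (f (X ω)) y) μ) :
    ∫ w, ℓ (f (X w.1)) (Ytil w.2) ∂(μ.prod μ)
      = (1 - em - ep) * ∫ w, ℓ (f (X w.1)) (Y w.2) ∂(μ.prod μ)
        + ∫ ω, (ep * ℓ (f (X ω)) (-1) + em * ℓ (f (X ω)) 1) ∂μ := by
  -- basic measurable sets
  have hs1 : MeasurableSet {ω | Y ω = 1} := hmY (measurableSet_singleton 1)
  have hsm : MeasurableSet {ω | Y ω = -1} := hmY (measurableSet_singleton (-1))
  have ht1 : MeasurableSet {ω | Ytil ω = 1} := hmYt (measurableSet_singleton 1)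
  have htm : MeasurableSet {ω | Ytil ω = -1} := hmYt (measurableSet_singleton (-1))
  -- split the two product integrals
  rw [peer_aux_split μ (fun ω y => ℓ (f (X ω)) y) Ytil hmYt hYtval hInt,
      peer_aux_split μ (fun ω y => ℓ (f (X ω)) y) Y hmY hYval hInt]
  -- abbreviations
  set A1 := ∫ ω, ℓ (f (X ω)) 1 ∂μ with hA1
  set Am := ∫ ω, ℓ (f (X ω)) (-1) ∂μ with hAm
  -- last integral
  have hlast : ∫ ω, (ep * ℓ (f (X ω)) (-1) + em * ℓ (f (X ω)) 1) ∂μ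
      = ep * Am + em * A1 := by
    rw [integral_add ((hInt (-1)).const_mul ep) ((hInt 1).const_mul em),
      integral_const_mul, integral_const_mul]
  rw [hlast]
  -- measure computations
  have hPm : (μ {ω | Y ω = -1}).toReal = 1 - p := by
    have h : ((μ : Measure Ω) Set.univ).toReal
        = (μ {ω | Y ω = 1}).toReal + (μ {ω | Y ω = -1}).toReal := by
      refine peer_meas_split μ hsm ?_ ?_
      · rw [Set.disjoint_left]; intro ω h1 h2; simp only [Set.mem_setOf_eq] at h1 h2; omega
      · ext ω; simpa using hYval ω
    simp only [measure_univ, ENNReal.toReal_one, hp] at h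
    linarith
  have hQsum : (μ {ω | Ytil ω = 1}).toReal + (μ {ω | Ytil ω = -1}).toReal = 1 := by
    have h : ((μ : Measure Ω) Set.univ).toReal
        = (μ {ω | Ytil ω = 1}).toReal + (μ {ω | Ytil ω = -1}).toReal := by
      refine peer_meas_split μ htm ?_ ?_
      · rw [Set.disjoint_left]; intro ω h1 h2; simp only [Set.mem_setOf_eq] at h1 h2; omega
      · ext ω; simpa using hYtval ω
    simp only [measure_univ, ENNReal.toReal_one] at h
    linarith
  have hsplitT1 : (μ {ω | Ytil ω = 1}).toReal
      = (μ {ω | Ytil ω = 1 ∧ Y ω = 1}).toReal + (μ {ω | Ytil ω = 1 ∧ Y ω = -1}).toReal := by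
    refine peer_meas_split μ (ht1.inter hsm) ?_ ?_
    · rw [Set.disjoint_left]; intro ω h1 h2;
      simp only [Set.mem_setOf_eq, Set.mem_inter_iff] at h1 h2; omega
    · ext ω; simp only [Set.mem_union, Set.mem_setOf_eq, Set.mem_inter_iff]
      constructor
      · rintro (⟨h1, h2⟩ | ⟨h1, h2⟩) <;> exact h1
      · intro h1; rcases hYval ω with h2 | h2
        · exact Or.inl ⟨h1, h2⟩
        · exact Or.inr ⟨h1, h2⟩
  have hsplitS1 : (μ {ω | Y ω = 1}).toReal
      = (μ {ω | Ytil ω = -1 ∧ Y ω = 1}).toReal + (μ {ω | Ytil ω = 1 ∧ Y ω = 1}).toReal := by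
    refine peer_meas_split μ (ht1.inter hs1) ?_ ?_
    · rw [Set.disjoint_left]; intro ω h1 h2
      simp only [Set.mem_setOf_eq, Set.mem_inter_iff] at h1 h2; omega
    · ext ω; simp only [Set.mem_union, Set.mem_setOf_eq, Set.mem_inter_iff]
      constructor
      · rintro (⟨h1, h2⟩ | ⟨h1, h2⟩) <;> exact h2
      · intro h1; rcases hYtval ω with h2 | h2
        · exact Or.inr ⟨h2, h1⟩
        · exact Or.inl ⟨h2, h1⟩
  rw [hp] at hsplitS1 hep
  rw [hPm] at hem
  have hQ1 : (μ {ω | Ytil ω = 1}).toReal = p - ep * p + em * (1 - p) := by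
    rw [hsplitT1, hem]; linarith [hsplitS1, hep]
  have hQm : (μ {ω | Ytil ω = -1}).toReal = ep * p + (1 - em) * (1 - p) := by
    have := hQsum; rw [hQ1] at this; linarith
  rw [hQ1, hQm, hp, hPm]
  ring
end

section
/- Peer loss is invariant to label noise: for any classifier f and any loss function ℓ : ℝ × {−1,+1} → ℝ, E_{D̃}[ℓ_peer(f(X), Ỹ)] = (1 − e₋₁ − e₊₁)·E_D[ℓ_peer(f(X), Y)], where the left-hand expectation is over (X,Ỹ) and its peer samples drawn i.i.d. from the noisy distribution D̃ and the right-hand expectation is over (X,Y) and its peer samples drawn i.i.d. from the clean distribution D. -/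
open MeasureTheory

/-- **Lemma 2: peer loss is invariant to label noise.**
`E_D̃[ℓ_peer(f(X), Ỹ)] = (1 - em - ep) E_D[ℓ_peer(f(X), Y)]`, where the peer term is modelled
by the product measure `μ.prod μ` (two independent peer samples). -/
theorem peer_loss_stmt5
    {Ω 𝒳 : Type*} [MeasurableSpace Ω] [MeasurableSpace 𝒳]
    (μ : Measure Ω) [IsProbabilityMeasure μ]
    (X : Ω → 𝒳) (Y Ytil : Ω → ℤ)
    (hmX : Measurable X) (hmY : Measurable Y) (hmYt : Measurable Ytil)
    (hYval : ∀ ω, Y ω = 1 ∨ Y ω = -1)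
    (hYtval : ∀ ω, Ytil ω = 1 ∨ Ytil ω = -1)
    (p ep em : ℝ)
    (hp : (μ {ω | Y ω = 1}).toReal = p) (hp0 : 0 < p) (hp1 : p < 1)
    (hep : (μ {ω | Ytil ω = -1 ∧ Y ω = 1}).toReal = ep * (μ {ω | Y ω = 1}).toReal)
    (hem : (μ {ω | Ytil ω = 1 ∧ Y ω = -1}).toReal = em * (μ {ω | Y ω = -1}).toReal)
    -- `Ỹ` is conditionally independent of `X` given `Y` (functional form)
    (hCI : ∀ (h : 𝒳 → ℝ), Integrable (fun ω => h (X ω)) μ → ∀ y y' : ℤ,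
      (μ {ω | Y ω = y}).toReal * ∫ ω in {ω | Ytil ω = y' ∧ Y ω = y}, h (X ω) ∂μ
        = (μ {ω | Ytil ω = y' ∧ Y ω = y}).toReal * ∫ ω in {ω | Y ω = y}, h (X ω) ∂μ)
    (ℓ : ℝ → ℤ → ℝ) (f : 𝒳 → ℝ) (hmf : Measurable f)
    (hInt : ∀ y : ℤ, Integrable (fun ω => ℓ (f (X ω)) y) μ) :
    (∫ ω, ℓ (f (X ω)) (Ytil ω) ∂μ) - ∫ w, ℓ (f (X w.1)) (Ytil w.2) ∂(μ.prod μ)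
      = (1 - em - ep) *
        ((∫ ω, ℓ (f (X ω)) (Y ω) ∂μ) - ∫ w, ℓ (f (X w.1)) (Y w.2) ∂(μ.prod μ)) := by
  classical
  set g1 : Ω → ℝ := fun ω => ℓ (f (X ω)) 1 with hg1def
  set g2 : Ω → ℝ := fun ω => ℓ (f (X ω)) (-1) with hg2def
  have hInt1 : Integrable g1 μ := hInt 1
  have hInt2 : Integrable g2 μ := hInt (-1)
  -- sets
  set S1 : Set Ω := {ω | Y ω = 1} with hS1def
  set S2 : Set Ω := {ω | Y ω = -1} with hS2def
  set T1 : Set Ω := {ω | Ytil ω = 1} with hT1def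
  set T2 : Set Ω := {ω | Ytil ω = -1} with hT2def
  set U11 : Set Ω := {ω | Ytil ω = 1 ∧ Y ω = 1} with hU11def
  set U12 : Set Ω := {ω | Ytil ω = 1 ∧ Y ω = -1} with hU12def
  set U21 : Set Ω := {ω | Ytil ω = -1 ∧ Y ω = 1} with hU21def
  set U22 : Set Ω := {ω | Ytil ω = -1 ∧ Y ω = -1} with hU22def
  have hS1m : MeasurableSet S1 := hmY (measurableSet_singleton 1)
  have hS2m : MeasurableSet S2 := hmY (measurableSet_singleton (-1))
  have hT1m : MeasurableSet T1 := hmYt (measurableSet_singleton 1)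
  have hT2m : MeasurableSet T2 := hmYt (measurableSet_singleton (-1))
  have hU11m : MeasurableSet U11 := hT1m.inter hS1m
  have hU12m : MeasurableSet U12 := hT1m.inter hS2m
  have hU21m : MeasurableSet U21 := hT2m.inter hS1m
  have hU22m : MeasurableSet U22 := hT2m.inter hS2m
  have hS2c : S2 = S1ᶜ := by
    ext ω; rcases hYval ω with h | h <;> simp [hS1def, hS2def, h]
  have hT2c : T2 = T1ᶜ := by
    ext ω; rcases hYtval ω with h | h <;> simp [hT1def, hT2def, h]
  -- abbreviations for integrals
  set I1 : ℝ := ∫ ω in S1, g1 ω ∂μ with hI1def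
  set J1 : ℝ := ∫ ω in S2, g1 ω ∂μ with hJ1def
  set I2 : ℝ := ∫ ω in S1, g2 ω ∂μ with hI2def
  set J2 : ℝ := ∫ ω in S2, g2 ω ∂μ with hJ2def
  -- measures (as reals)
  have hfin : ∀ s : Set Ω, μ s ≠ ⊤ := fun s => measure_ne_top μ s
  have hP2 : (μ S2).toReal = 1 - p := by
    have h1 : μ S1 + μ S2 = 1 := by
      rw [hS2c, measure_add_measure_compl hS1m, measure_univ]
    have := congrArg ENNReal.toReal h1
    rw [ENNReal.toReal_add (hfin S1) (hfin S2)] at this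
    simp at this
    rw [hp] at this
    linarith
  have h1p : (0:ℝ) < 1 - p := by linarith
  -- split of S1 into U11 ∪ U21 etc.
  have hS1split : S1 = U11 ∪ U21 := by
    ext ω
    rcases hYtval ω with h | h <;>
      simp [hS1def, hU11def, hU21def, h]
  have hS2split : S2 = U12 ∪ U22 := by
    ext ω
    rcases hYtval ω with h | h <;>
      simp [hS2def, hU12def, hU22def, h]
  have hT1split : T1 = U11 ∪ U12 := by
    ext ω
    rcases hYval ω with h | h <;>
      simp [hT1def, hU11def, hU12def, h]
  have hT2split : T2 = U21 ∪ U22 := by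
    ext ω
    rcases hYval ω with h | h <;>
      simp [hT2def, hU21def, hU22def, h]
  have hd1121 : Disjoint U11 U21 := by
    rw [Set.disjoint_left]; rintro ω ⟨h1, _⟩ ⟨h2, _⟩; omega
  have hd1222 : Disjoint U12 U22 := by
    rw [Set.disjoint_left]; rintro ω ⟨h1, _⟩ ⟨h2, _⟩; omega
  have hd1112 : Disjoint U11 U12 := by
    rw [Set.disjoint_left]; rintro ω ⟨_, h1⟩ ⟨_, h2⟩; omega
  have hd2122 : Disjoint U21 U22 := by
    rw [Set.disjoint_left]; rintro ω ⟨_, h1⟩ ⟨_, h2⟩; omega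
  -- measures of the four pieces
  have hm21 : (μ U21).toReal = ep * p := by rw [hU21def] at *; rw [hep, hp]
  have hm12 : (μ U12).toReal = em * (1 - p) := by rw [hem, hP2]
  have hm11 : (μ U11).toReal = (1 - ep) * p := by
    have h1 : μ U11 + μ U21 = μ S1 := by
      rw [hS1split, measure_union hd1121 hU21m]
    have := congrArg ENNReal.toReal h1
    rw [ENNReal.toReal_add (hfin U11) (hfin U21)] at this
    rw [hm21, hp] at this
    linarith
  have hm22 : (μ U22).toReal = (1 - em) * (1 - p) := by
    have h1 : μ U12 + μ U22 = μ S2 := by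
      rw [hS2split, measure_union hd1222 hU22m]
    have := congrArg ENNReal.toReal h1
    rw [ENNReal.toReal_add (hfin U12) (hfin U22)] at this
    rw [hm12, hP2] at this
    linarith
  have hmT1 : (μ T1).toReal = (1 - ep) * p + em * (1 - p) := by
    have h1 : μ U11 + μ U12 = μ T1 := by
      rw [hT1split, measure_union hd1112 hU12m]
    have := congrArg ENNReal.toReal h1
    rw [ENNReal.toReal_add (hfin U11) (hfin U12)] at this
    rw [hm11, hm12] at this
    linarith
  have hmT2 : (μ T2).toReal = ep * p + (1 - em) * (1 - p) := by
    have h1 : μ U21 + μ U22 = μ T2 := by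
      rw [hT2split, measure_union hd2122 hU22m]
    have := congrArg ENNReal.toReal h1
    rw [ENNReal.toReal_add (hfin U21) (hfin U22)] at this
    rw [hm21, hm22] at this
    linarith
  -- conditional independence consequences
  have hx11 : ∫ ω in U11, g1 ω ∂μ = (1 - ep) * I1 := by
    have h := hCI (fun x => ℓ (f x) 1) (hInt 1) 1 1
    rw [hp] at h
    have h2 : p * ∫ ω in U11, g1 ω ∂μ = p * ((1 - ep) * I1) := by
      rw [h]
      rw [hm11]
      ring
    exact mul_left_cancel₀ (ne_of_gt hp0) h2
  have hx21 : ∫ ω in U21, g2 ω ∂μ = ep * I2 := by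
    have h := hCI (fun x => ℓ (f x) (-1)) (hInt (-1)) 1 (-1)
    rw [hp] at h
    have h2 : p * ∫ ω in U21, g2 ω ∂μ = p * (ep * I2) := by
      rw [h, hm21]; ring
    exact mul_left_cancel₀ (ne_of_gt hp0) h2
  have hx12 : ∫ ω in U12, g1 ω ∂μ = em * J1 := by
    have h := hCI (fun x => ℓ (f x) 1) (hInt 1) (-1) 1
    rw [hP2] at h
    have h2 : (1 - p) * ∫ ω in U12, g1 ω ∂μ = (1 - p) * (em * J1) := by
      rw [h, hm12]; ring
    exact mul_left_cancel₀ (ne_of_gt h1p) h2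
  have hx22 : ∫ ω in U22, g2 ω ∂μ = (1 - em) * J2 := by
    have h := hCI (fun x => ℓ (f x) (-1)) (hInt (-1)) (-1) (-1)
    rw [hP2] at h
    have h2 : (1 - p) * ∫ ω in U22, g2 ω ∂μ = (1 - p) * ((1 - em) * J2) := by
      rw [h, hm22]; ring
    exact mul_left_cancel₀ (ne_of_gt h1p) h2
  -- decomposition of the main (non-peer) integrals
  have hsplitfun : ∀ (Z : Ω → ℤ), (∀ ω, Z ω = 1 ∨ Z ω = -1) →
      (fun ω => ℓ (f (X ω)) (Z ω))
        = fun ω => {ω | Z ω = 1}.indicator g1 ω + {ω | Z ω = -1}.indicator g2 ω := by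
    intro Z hZ
    funext ω
    rcases hZ ω with h | h <;> simp [Set.indicator, h, hg1def, hg2def]
  have hEclean : (∫ ω, ℓ (f (X ω)) (Y ω) ∂μ) = I1 + J2 := by
    rw [hsplitfun Y hYval,
      integral_add (hInt1.indicator hS1m) (hInt2.indicator hS2m),
      integral_indicator hS1m, integral_indicator hS2m]
  have hEtil : (∫ ω, ℓ (f (X ω)) (Ytil ω) ∂μ)
      = (∫ ω in T1, g1 ω ∂μ) + ∫ ω in T2, g2 ω ∂μ := by
    rw [hsplitfun Ytil hYtval,
      integral_add (hInt1.indicator hT1m) (hInt2.indicator hT2m),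
      integral_indicator hT1m, integral_indicator hT2m]
  have hT1int : ∫ ω in T1, g1 ω ∂μ = (1 - ep) * I1 + em * J1 := by
    rw [hT1split, setIntegral_union hd1112 hU12m hInt1.integrableOn hInt1.integrableOn,
      hx11, hx12]
  have hT2int : ∫ ω in T2, g2 ω ∂μ = ep * I2 + (1 - em) * J2 := by
    rw [hT2split, setIntegral_union hd2122 hU22m hInt2.integrableOn hInt2.integrableOn,
      hx21, hx22]
  -- whole-space integrals of g1, g2
  have hA1 : ∫ ω, g1 ω ∂μ = I1 + J1 := by
    rw [← integral_add_compl hS1m hInt1, ← hS2c]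
  have hA2 : ∫ ω, g2 ω ∂μ = I2 + J2 := by
    rw [← integral_add_compl hS1m hInt2, ← hS2c]
  -- product integrals
  have hprod : ∀ (Z : Ω → ℤ), (∀ ω, Z ω = 1 ∨ Z ω = -1) → MeasurableSet {ω | Z ω = 1} →
      MeasurableSet {ω | Z ω = -1} →
      (∫ w, ℓ (f (X w.1)) (Z w.2) ∂(μ.prod μ))
        = (∫ ω, g1 ω ∂μ) * (μ {ω | Z ω = 1}).toReal
          + (∫ ω, g2 ω ∂μ) * (μ {ω | Z ω = -1}).toReal := by
    intro Z hZ hZ1m hZ2m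
    have heq : (fun w : Ω × Ω => ℓ (f (X w.1)) (Z w.2))
        = fun w => g1 w.1 * ({ω | Z ω = 1}.indicator (fun _ => (1:ℝ)) w.2)
          + g2 w.1 * ({ω | Z ω = -1}.indicator (fun _ => (1:ℝ)) w.2) := by
      funext w
      rcases hZ w.2 with h | h <;> simp [Set.indicator, h, hg1def, hg2def]
    rw [heq]
    have hi1 : Integrable ({ω | Z ω = 1}.indicator (fun _ => (1:ℝ))) μ :=
      (integrable_const (1:ℝ)).indicator hZ1m
    have hi2 : Integrable ({ω | Z ω = -1}.indicator (fun _ => (1:ℝ))) μ :=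
      (integrable_const (1:ℝ)).indicator hZ2m
    rw [integral_add (hInt1.mul_prod hi1) (hInt2.mul_prod hi2),
      integral_prod_mul, integral_prod_mul,
      integral_indicator hZ1m, integral_indicator hZ2m]
    simp [Measure.restrict_apply_univ, Measure.real]
  have hprodT := hprod Ytil hYtval hT1m hT2m
  have hprodS := hprod Y hYval hS1m hS2m
  rw [hEclean, hEtil, hT1int, hT2int, hprodT, hprodS, hA1, hA2, hmT1, hmT2, hp, hP2]
  ring
end

section
/- Suppose e₋₁ + e₊₁ < 1, and let f̃* ∈ argmin_{f∈ℱ} E_{D̃}[𝟙_peer(f(X), Ỹ)] be a minimizer of the expected 0-1 peer risk over the noisy distribution within a hypothesis class ℱ. Then |R_D(f̃*) − min_{f∈ℱ} R_D(f)| ≤ |δ_p|, where δ_p := P(Y = +1) − P(Y = −1) = 2p − 1. -/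
open MeasureTheory

lemma prob_split {Ω : Type*} [MeasurableSpace Ω] (μ : Measure Ω) [IsFiniteMeasure μ]
    {s t u : Set Ω} (hu : u = s ∪ t) (hd : Disjoint s t) (ht : MeasurableSet t) :
    (μ u).toReal = (μ s).toReal + (μ t).toReal := by
  subst hu
  rw [measure_union hd ht, ENNReal.toReal_add (measure_ne_top μ s) (measure_ne_top μ t)]

lemma peer_key
    {Ω 𝒳 : Type*} [MeasurableSpace Ω] [MeasurableSpace 𝒳]
    (μ : Measure Ω) [IsProbabilityMeasure μ]
    (X : Ω → 𝒳) (Y Ytil : Ω → ℤ)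
    (hmX : Measurable X) (hmY : Measurable Y) (hmYt : Measurable Ytil)
    (hYval : ∀ ω, Y ω = 1 ∨ Y ω = -1)
    (hYtval : ∀ ω, Ytil ω = 1 ∨ Ytil ω = -1)
    (ep em p : ℝ) (hp : (μ {ω | Y ω = 1}).toReal = p) (hp0 : 0 < p) (hp1 : p < 1)
    (hep : (μ {ω | Ytil ω = -1 ∧ Y ω = 1}).toReal = ep * (μ {ω | Y ω = 1}).toReal)
    (hem : (μ {ω | Ytil ω = 1 ∧ Y ω = -1}).toReal = em * (μ {ω | Y ω = -1}).toReal)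
    (hCI : ∀ (A : Set 𝒳) (y y' : ℤ),
      (μ {ω | Y ω = y}).toReal * (μ {ω | X ω ∈ A ∧ Ytil ω = y' ∧ Y ω = y}).toReal
        = (μ {ω | X ω ∈ A ∧ Y ω = y}).toReal * (μ {ω | Ytil ω = y' ∧ Y ω = y}).toReal)
    (g : 𝒳 → ℤ) (hg : Measurable g) (hgv : ∀ x, g x = 1 ∨ g x = -1) :
    (μ {ω | g (X ω) ≠ Ytil ω}).toReal - ((μ.prod μ) {w | g (X w.1) ≠ Ytil w.2}).toReal
      = (1 - em - ep) * ((μ {ω | g (X ω) ≠ Y ω}).toReal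
          + (2 * p - 1) * (μ {ω | g (X ω) = 1}).toReal - p) := by
  -- measurable sets
  have mg1 : MeasurableSet {ω | g (X ω) = 1} := (hg.comp hmX) (measurableSet_singleton 1)
  have mgm1 : MeasurableSet {ω | g (X ω) = -1} := (hg.comp hmX) (measurableSet_singleton (-1))
  have mY1 : MeasurableSet {ω | Y ω = 1} := hmY (measurableSet_singleton 1)
  have mYm1 : MeasurableSet {ω | Y ω = -1} := hmY (measurableSet_singleton (-1))
  have mT1 : MeasurableSet {ω | Ytil ω = 1} := hmYt (measurableSet_singleton 1)
  have mTm1 : MeasurableSet {ω | Ytil ω = -1} := hmYt (measurableSet_singleton (-1))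
  -- abbreviations
  set a := (μ {ω | g (X ω) = 1 ∧ Y ω = 1}).toReal with ha_def
  set b := (μ {ω | g (X ω) = 1 ∧ Y ω = -1}).toReal with hb_def
  have ha0 : 0 ≤ a := ENNReal.toReal_nonneg
  have hb0 : 0 ≤ b := ENNReal.toReal_nonneg
  -- A. P(Y = -1) = 1 - p
  have hA : (μ (Set.univ : Set Ω)).toReal
      = (μ {ω | Y ω = 1}).toReal + (μ {ω | Y ω = -1}).toReal := by
    refine prob_split μ ?_ ?_ mYm1
    · ext ω; simp only [Set.mem_setOf_eq, Set.mem_union, Set.mem_univ, true_iff]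
      exact hYval ω
    · rw [Set.disjoint_left]; intro ω h1 h2
      simp only [Set.mem_setOf_eq] at h1 h2; omega
  rw [measure_univ, ENNReal.toReal_one, hp] at hA
  have hpm : (μ {ω | Y ω = -1}).toReal = 1 - p := by linarith
  rw [hp] at hep
  rw [hpm] at hem
  -- B. P(Ytil=1, Y=1) = (1-ep) p
  have hB : (μ {ω | Y ω = (1:ℤ)}).toReal
      = (μ {ω | Ytil ω = 1 ∧ Y ω = 1}).toReal + (μ {ω | Ytil ω = -1 ∧ Y ω = 1}).toReal := by
    refine prob_split μ ?_ ?_ (mTm1.inter mY1)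
    · ext ω; simp only [Set.mem_setOf_eq, Set.mem_union]
      rcases hYtval ω with h | h <;> omega
    · rw [Set.disjoint_left]; intro ω h1 h2
      simp only [Set.mem_setOf_eq] at h1 h2; omega
  rw [hp, hep] at hB
  have hT11 : (μ {ω | Ytil ω = 1 ∧ Y ω = 1}).toReal = (1 - ep) * p := by linarith
  -- C. P(Ytil=-1, Y=-1) = (1-em)(1-p)
  have hC : (μ {ω | Y ω = (-1:ℤ)}).toReal
      = (μ {ω | Ytil ω = 1 ∧ Y ω = -1}).toReal + (μ {ω | Ytil ω = -1 ∧ Y ω = -1}).toReal := by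
    refine prob_split μ ?_ ?_ (mTm1.inter mYm1)
    · ext ω; simp only [Set.mem_setOf_eq, Set.mem_union]
      rcases hYtval ω with h | h <;> omega
    · rw [Set.disjoint_left]; intro ω h1 h2
      simp only [Set.mem_setOf_eq] at h1 h2; omega
  rw [hpm, hem] at hC
  have hTm1m1 : (μ {ω | Ytil ω = -1 ∧ Y ω = -1}).toReal = (1 - em) * (1 - p) := by linarith
  -- D. marginal of Ytil = 1
  have hD : (μ {ω | Ytil ω = (1:ℤ)}).toReal
      = (μ {ω | Ytil ω = 1 ∧ Y ω = 1}).toReal + (μ {ω | Ytil ω = 1 ∧ Y ω = -1}).toReal := by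
    refine prob_split μ ?_ ?_ (mT1.inter mYm1)
    · ext ω; simp only [Set.mem_setOf_eq, Set.mem_union]
      rcases hYval ω with h | h <;> omega
    · rw [Set.disjoint_left]; intro ω h1 h2
      simp only [Set.mem_setOf_eq] at h1 h2; omega
  rw [hT11, hem] at hD
  -- E. marginal of Ytil = -1
  have hE : (μ {ω | Ytil ω = (-1:ℤ)}).toReal
      = (μ {ω | Ytil ω = -1 ∧ Y ω = 1}).toReal + (μ {ω | Ytil ω = -1 ∧ Y ω = -1}).toReal := by
    refine prob_split μ ?_ ?_ (mTm1.inter mYm1)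
    · ext ω; simp only [Set.mem_setOf_eq, Set.mem_union]
      rcases hYval ω with h | h <;> omega
    · rw [Set.disjoint_left]; intro ω h1 h2
      simp only [Set.mem_setOf_eq] at h1 h2; omega
  rw [hep, hTm1m1] at hE
  -- F. q = a + b
  have hF : (μ {ω | g (X ω) = (1:ℤ)}).toReal = a + b := by
    refine prob_split μ ?_ ?_ (mg1.inter mYm1)
    · ext ω; simp only [Set.mem_setOf_eq, Set.mem_union]
      rcases hYval ω with h | h <;> omega
    · rw [Set.disjoint_left]; intro ω h1 h2
      simp only [Set.mem_setOf_eq] at h1 h2; omega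
  -- G. P(g=-1, Y=1) = p - a
  have hG : (μ {ω | Y ω = (1:ℤ)}).toReal
      = (μ {ω | g (X ω) = 1 ∧ Y ω = 1}).toReal + (μ {ω | g (X ω) = -1 ∧ Y ω = 1}).toReal := by
    refine prob_split μ ?_ ?_ (mgm1.inter mY1)
    · ext ω; simp only [Set.mem_setOf_eq, Set.mem_union]
      rcases hgv (X ω) with h | h <;> omega
    · rw [Set.disjoint_left]; intro ω h1 h2
      simp only [Set.mem_setOf_eq] at h1 h2; omega
  rw [hp] at hG
  have hGm : (μ {ω | g (X ω) = -1 ∧ Y ω = 1}).toReal = p - a := by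
    rw [← ha_def] at hG; linarith
  -- H. P(g=-1, Y=-1) = (1-p) - b
  have hH : (μ {ω | Y ω = (-1:ℤ)}).toReal
      = (μ {ω | g (X ω) = 1 ∧ Y ω = -1}).toReal + (μ {ω | g (X ω) = -1 ∧ Y ω = -1}).toReal := by
    refine prob_split μ ?_ ?_ (mgm1.inter mYm1)
    · ext ω; simp only [Set.mem_setOf_eq, Set.mem_union]
      rcases hgv (X ω) with h | h <;> omega
    · rw [Set.disjoint_left]; intro ω h1 h2
      simp only [Set.mem_setOf_eq] at h1 h2; omega
  rw [hpm] at hH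
  have hHm : (μ {ω | g (X ω) = -1 ∧ Y ω = -1}).toReal = (1 - p) - b := by
    rw [← hb_def] at hH; linarith
  -- I. clean risk
  have hI : (μ {ω | g (X ω) ≠ Y ω}).toReal
      = (μ {ω | g (X ω) = 1 ∧ Y ω = -1}).toReal + (μ {ω | g (X ω) = -1 ∧ Y ω = 1}).toReal := by
    refine prob_split μ ?_ ?_ (mgm1.inter mY1)
    · ext ω; simp only [Set.mem_setOf_eq, Set.mem_union]
      rcases hgv (X ω) with h | h <;> rcases hYval ω with h' | h' <;> omega
    · rw [Set.disjoint_left]; intro ω h1 h2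
      simp only [Set.mem_setOf_eq] at h1 h2; omega
  rw [hGm, ← hb_def] at hI
  -- CI consequences
  have j1 : (μ {ω | g (X ω) = 1 ∧ Ytil ω = -1 ∧ Y ω = 1}).toReal = a * ep := by
    have h := hCI {x | g x = 1} 1 (-1)
    simp only [Set.mem_setOf_eq] at h
    rw [hp, hep, ← ha_def] at h
    exact mul_left_cancel₀ hp0.ne' (by rw [h]; ring)
  have j2 : (μ {ω | g (X ω) = 1 ∧ Ytil ω = -1 ∧ Y ω = -1}).toReal = b * (1 - em) := by
    have h := hCI {x | g x = 1} (-1) (-1)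
    simp only [Set.mem_setOf_eq] at h
    rw [hpm, hTm1m1, ← hb_def] at h
    have h1p : (1 - p) ≠ 0 := by linarith
    exact mul_left_cancel₀ h1p (by rw [h]; ring)
  have j3 : (μ {ω | g (X ω) = -1 ∧ Ytil ω = 1 ∧ Y ω = 1}).toReal = (p - a) * (1 - ep) := by
    have h := hCI {x | g x = -1} 1 1
    simp only [Set.mem_setOf_eq] at h
    rw [hp, hT11, hGm] at h
    exact mul_left_cancel₀ hp0.ne' (by rw [h]; ring)
  have j4 : (μ {ω | g (X ω) = -1 ∧ Ytil ω = 1 ∧ Y ω = -1}).toReal = ((1 - p) - b) * em := by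
    have h := hCI {x | g x = -1} (-1) 1
    simp only [Set.mem_setOf_eq] at h
    rw [hpm, hem, hHm] at h
    have h1p : (1 - p) ≠ 0 := by linarith
    exact mul_left_cancel₀ h1p (by rw [h]; ring)
  -- K. split noisy joint with g=1
  have hK : (μ {ω | g (X ω) = 1 ∧ Ytil ω = -1}).toReal
      = (μ {ω | g (X ω) = 1 ∧ Ytil ω = -1 ∧ Y ω = 1}).toReal
        + (μ {ω | g (X ω) = 1 ∧ Ytil ω = -1 ∧ Y ω = -1}).toReal := by
    refine prob_split μ ?_ ?_ ((mg1.inter (mTm1.inter mYm1)))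
    · ext ω; simp only [Set.mem_setOf_eq, Set.mem_union]
      rcases hYval ω with h | h <;> omega
    · rw [Set.disjoint_left]; intro ω h1 h2
      simp only [Set.mem_setOf_eq] at h1 h2; omega
  rw [j1, j2] at hK
  -- L. split noisy joint with g=-1
  have hL : (μ {ω | g (X ω) = -1 ∧ Ytil ω = 1}).toReal
      = (μ {ω | g (X ω) = -1 ∧ Ytil ω = 1 ∧ Y ω = 1}).toReal
        + (μ {ω | g (X ω) = -1 ∧ Ytil ω = 1 ∧ Y ω = -1}).toReal := by
    refine prob_split μ ?_ ?_ ((mgm1.inter (mT1.inter mYm1)))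
    · ext ω; simp only [Set.mem_setOf_eq, Set.mem_union]
      rcases hYval ω with h | h <;> omega
    · rw [Set.disjoint_left]; intro ω h1 h2
      simp only [Set.mem_setOf_eq] at h1 h2; omega
  rw [j3, j4] at hL
  -- J. noisy risk
  have hJ : (μ {ω | g (X ω) ≠ Ytil ω}).toReal
      = (μ {ω | g (X ω) = 1 ∧ Ytil ω = -1}).toReal
        + (μ {ω | g (X ω) = -1 ∧ Ytil ω = 1}).toReal := by
    refine prob_split μ ?_ ?_ (mgm1.inter mT1)
    · ext ω; simp only [Set.mem_setOf_eq, Set.mem_union]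
      rcases hgv (X ω) with h | h <;> rcases hYtval ω with h' | h' <;> omega
    · rw [Set.disjoint_left]; intro ω h1 h2
      simp only [Set.mem_setOf_eq] at h1 h2; omega
  rw [hK, hL] at hJ
  -- M. product measure term
  have hgm1' : (μ {ω | g (X ω) = (-1:ℤ)}).toReal = 1 - (a + b) := by
    have h : (μ (Set.univ : Set Ω)).toReal
        = (μ {ω | g (X ω) = 1}).toReal + (μ {ω | g (X ω) = -1}).toReal := by
      refine prob_split μ ?_ ?_ mgm1
      · ext ω; simp only [Set.mem_setOf_eq, Set.mem_union, Set.mem_univ, true_iff]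
        exact hgv (X ω)
      · rw [Set.disjoint_left]; intro ω h1 h2
        simp only [Set.mem_setOf_eq] at h1 h2; omega
    rw [measure_univ, ENNReal.toReal_one, hF] at h
    linarith
  have hM : ((μ.prod μ) {w | g (X w.1) ≠ Ytil w.2}).toReal
      = ((μ.prod μ) ({ω | g (X ω) = 1} ×ˢ {ω | Ytil ω = -1})).toReal
        + ((μ.prod μ) ({ω | g (X ω) = -1} ×ˢ {ω | Ytil ω = 1})).toReal := by
    refine prob_split (μ.prod μ) ?_ ?_ (mgm1.prod mT1)
    · ext w
      simp only [Set.mem_setOf_eq, Set.mem_union, Set.mem_prod]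
      rcases hgv (X w.1) with h | h <;> rcases hYtval w.2 with h' | h' <;> omega
    · rw [Set.disjoint_left]; intro w h1 h2
      simp only [Set.mem_prod, Set.mem_setOf_eq] at h1 h2; omega
  rw [Measure.prod_prod, Measure.prod_prod, ENNReal.toReal_mul, ENNReal.toReal_mul,
    hF, hgm1', hE, hD] at hM
  -- conclude
  rw [hJ, hM, hI, hF]
  ring
/-- **Theorem 3: approximate optimality with unequal prior.**
If `em + ep < 1` and `ftil` minimizes the expected 0-1 peer risk over the noisy distribution
within the hypothesis class `ℱ`, then `|R_D(ftil) - min_(f ∈ ℱ) R_D(f)| ≤ |δ_p|` where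
`δ_p = P(Y = 1) - P(Y = -1)`. -/
theorem peer_loss_stmt7
    {Ω 𝒳 : Type*} [MeasurableSpace Ω] [MeasurableSpace 𝒳]
    (μ : Measure Ω) [IsProbabilityMeasure μ]
    (X : Ω → 𝒳) (Y Ytil : Ω → ℤ)
    (hmX : Measurable X) (hmY : Measurable Y) (hmYt : Measurable Ytil)
    (hYval : ∀ ω, Y ω = 1 ∨ Y ω = -1)
    (hYtval : ∀ ω, Ytil ω = 1 ∨ Ytil ω = -1)
    (ep em : ℝ)
    (p : ℝ) (hp : (μ {ω | Y ω = 1}).toReal = p) (hp0 : 0 < p) (hp1 : p < 1)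
    (hep : (μ {ω | Ytil ω = -1 ∧ Y ω = 1}).toReal = ep * (μ {ω | Y ω = 1}).toReal)
    (hem : (μ {ω | Ytil ω = 1 ∧ Y ω = -1}).toReal = em * (μ {ω | Y ω = -1}).toReal)
    -- `Ỹ` is conditionally independent of `X` given `Y`
    (hCI : ∀ (A : Set 𝒳) (y y' : ℤ),
      (μ {ω | Y ω = y}).toReal * (μ {ω | X ω ∈ A ∧ Ytil ω = y' ∧ Y ω = y}).toReal
        = (μ {ω | X ω ∈ A ∧ Y ω = y}).toReal * (μ {ω | Ytil ω = y' ∧ Y ω = y}).toReal)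
    (he : em + ep < 1)
    (ℱ : Set (𝒳 → ℤ)) (hℱ : ∀ g ∈ ℱ, Measurable g ∧ ∀ x, g x = 1 ∨ g x = -1)
    (ftil : 𝒳 → ℤ) (hmem : ftil ∈ ℱ)
    (hmin : ∀ g ∈ ℱ,
      (μ {ω | ftil (X ω) ≠ Ytil ω}).toReal
          - ((μ.prod μ) {w | ftil (X w.1) ≠ Ytil w.2}).toReal
        ≤ (μ {ω | g (X ω) ≠ Ytil ω}).toReal
          - ((μ.prod μ) {w | g (X w.1) ≠ Ytil w.2}).toReal) :
    |(μ {ω | ftil (X ω) ≠ Y ω}).toReal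
        - sInf ((fun g : 𝒳 → ℤ => (μ {ω | g (X ω) ≠ Y ω}).toReal) '' ℱ)|
      ≤ |(μ {ω | Y ω = 1}).toReal - (μ {ω | Y ω = -1}).toReal| := by
  have hpm : (μ {ω | Y ω = -1}).toReal = 1 - p := by
    have hA : (μ (Set.univ : Set Ω)).toReal
        = (μ {ω | Y ω = 1}).toReal + (μ {ω | Y ω = -1}).toReal := by
      refine prob_split μ ?_ ?_ (hmY (measurableSet_singleton (-1)))
      · ext ω; simp only [Set.mem_setOf_eq, Set.mem_union, Set.mem_univ, true_iff]
        exact hYval ω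
      · rw [Set.disjoint_left]; intro ω h1 h2
        simp only [Set.mem_setOf_eq] at h1 h2; omega
    rw [measure_univ, ENNReal.toReal_one, hp] at hA
    linarith
  set δ := 2 * p - 1 with hδ
  -- bound : for each g ∈ ℱ, R(ftil) ≤ R(g) + |δ|
  have bound : ∀ g ∈ ℱ, (μ {ω | ftil (X ω) ≠ Y ω}).toReal
      ≤ (μ {ω | g (X ω) ≠ Y ω}).toReal + |δ| := by
    intro g hgF
    obtain ⟨hgm, hgvv⟩ := hℱ g hgF
    obtain ⟨hfm, hfv⟩ := hℱ ftil hmem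
    have kf := peer_key μ X Y Ytil hmX hmY hmYt hYval hYtval ep em p hp hp0 hp1
      hep hem hCI ftil hfm hfv
    have kg := peer_key μ X Y Ytil hmX hmY hmYt hYval hYtval ep em p hp hp0 hp1
      hep hem hCI g hgm hgvv
    have h := hmin g hgF
    rw [kf, kg] at h
    have hc : 0 < 1 - em - ep := by linarith
    have h2 := le_of_mul_le_mul_left h hc
    -- q bounds
    have hq1 : (μ {ω | ftil (X ω) = 1}).toReal ≤ 1 := by
      rw [← ENNReal.toReal_one]
      exact ENNReal.toReal_mono ENNReal.one_ne_top prob_le_one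
    have hq2 : (μ {ω | g (X ω) = 1}).toReal ≤ 1 := by
      rw [← ENNReal.toReal_one]
      exact ENNReal.toReal_mono ENNReal.one_ne_top prob_le_one
    have hq3 : (0:ℝ) ≤ (μ {ω | ftil (X ω) = 1}).toReal := ENNReal.toReal_nonneg
    have hq4 : (0:ℝ) ≤ (μ {ω | g (X ω) = 1}).toReal := ENNReal.toReal_nonneg
    have habs : δ * ((μ {ω | g (X ω) = 1}).toReal - (μ {ω | ftil (X ω) = 1}).toReal)
        ≤ |δ| := by
      calc δ * ((μ {ω | g (X ω) = 1}).toReal - (μ {ω | ftil (X ω) = 1}).toReal)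
          ≤ |δ * ((μ {ω | g (X ω) = 1}).toReal - (μ {ω | ftil (X ω) = 1}).toReal)| :=
            le_abs_self _
        _ = |δ| * |(μ {ω | g (X ω) = 1}).toReal - (μ {ω | ftil (X ω) = 1}).toReal| :=
            abs_mul _ _
        _ ≤ |δ| * 1 := by
            refine mul_le_mul_of_nonneg_left ?_ (abs_nonneg _)
            rw [abs_le]; constructor <;> linarith
        _ = |δ| := mul_one _
    rw [← hδ] at h2
    nlinarith [h2, habs]
  -- sInf manipulation
  set S := (fun g : 𝒳 → ℤ => (μ {ω | g (X ω) ≠ Y ω}).toReal) '' ℱ with hS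
  have hne : S.Nonempty := ⟨_, ⟨ftil, hmem, rfl⟩⟩
  have hbdd : BddBelow S := by
    refine ⟨0, ?_⟩
    rintro x ⟨g, hgF, rfl⟩
    exact ENNReal.toReal_nonneg
  have h1 : sInf S ≤ (μ {ω | ftil (X ω) ≠ Y ω}).toReal := csInf_le hbdd ⟨ftil, hmem, rfl⟩
  have h2 : (μ {ω | ftil (X ω) ≠ Y ω}).toReal - |δ| ≤ sInf S := by
    refine le_csInf hne ?_
    rintro x ⟨g, hgF, rfl⟩
    linarith [bound g hgF]
  rw [hp, hpm]
  have hrw : p - (1 - p) = δ := by rw [hδ]; ring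
  rw [hrw]
  rw [abs_le]
  constructor
  · linarith [abs_nonneg δ]
  · linarith
end

section
/- For any classifier f, E_{D̃}[𝟙_peer(f(X), Ỹ)] = 2(1 − e₋₁ − e₊₁)·p(1−p)·(R₋₁(f) + R₊₁(f) − 1), where R₊₁(f) := P(f(X) = −1 | Y = +1) and R₋₁(f) := P(f(X) = +1 | Y = −1). Consequently, when e₋₁ + e₊₁ < 1, minimizing E_{D̃}[𝟙_peer(f(X), Ỹ)] is equivalent to minimizing R₋₁(f) + R₊₁(f). -/
open MeasureTheory

private lemma split_toReal {Ω : Type*} [MeasurableSpace Ω] (μ : Measure Ω) [IsFiniteMeasure μ]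
    {s t u : Set Ω} (hs : s = t ∪ u) (hd : Disjoint t u) (hu : MeasurableSet u) :
    (μ s).toReal = (μ t).toReal + (μ u).toReal := by
  rw [hs, measure_union hd hu,
    ENNReal.toReal_add (measure_ne_top _ _) (measure_ne_top _ _)]

/-- **Lemma 3.**  The expected 0-1 peer risk over the noisy distribution equals
`2 (1 - em - ep) p (1-p) (R₋₁(f) + R₊₁(f) - 1)`, where `R₊₁(f) = P(f(X) = -1 | Y = 1)` and
`R₋₁(f) = P(f(X) = 1 | Y = -1)`; consequently, when `em + ep < 1`, minimizing the noisy expected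
0-1 peer risk is equivalent to minimizing `R₋₁(f) + R₊₁(f)`. -/
theorem peer_loss_stmt8
    {Ω 𝒳 : Type*} [MeasurableSpace Ω] [MeasurableSpace 𝒳]
    (μ : Measure Ω) [IsProbabilityMeasure μ]
    (X : Ω → 𝒳) (Y Ytil : Ω → ℤ)
    (hmX : Measurable X) (hmY : Measurable Y) (hmYt : Measurable Ytil)
    (hYval : ∀ ω, Y ω = 1 ∨ Y ω = -1)
    (hYtval : ∀ ω, Ytil ω = 1 ∨ Ytil ω = -1)
    (ep em : ℝ)
    (p : ℝ) (hp : (μ {ω | Y ω = 1}).toReal = p) (hp0 : 0 < p) (hp1 : p < 1)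
    (hep : (μ {ω | Ytil ω = -1 ∧ Y ω = 1}).toReal = ep * (μ {ω | Y ω = 1}).toReal)
    (hem : (μ {ω | Ytil ω = 1 ∧ Y ω = -1}).toReal = em * (μ {ω | Y ω = -1}).toReal)
    -- `Ỹ` is conditionally independent of `X` given `Y`
    (hCI : ∀ (A : Set 𝒳) (y y' : ℤ),
      (μ {ω | Y ω = y}).toReal * (μ {ω | X ω ∈ A ∧ Ytil ω = y' ∧ Y ω = y}).toReal
        = (μ {ω | X ω ∈ A ∧ Y ω = y}).toReal * (μ {ω | Ytil ω = y' ∧ Y ω = y}).toReal)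
 :
    (∀ f : 𝒳 → ℤ, Measurable f → (∀ x, f x = 1 ∨ f x = -1) →
      (μ {ω | f (X ω) ≠ Ytil ω}).toReal - ((μ.prod μ) {w | f (X w.1) ≠ Ytil w.2}).toReal
        = 2 * (1 - em - ep) * (p * (1 - p)) *
            ((μ {ω | f (X ω) = 1 ∧ Y ω = -1}).toReal / (μ {ω | Y ω = -1}).toReal
              + (μ {ω | f (X ω) = -1 ∧ Y ω = 1}).toReal / (μ {ω | Y ω = 1}).toReal - 1))
    ∧ (em + ep < 1 →
        ∀ f g : 𝒳 → ℤ, Measurable f → (∀ x, f x = 1 ∨ f x = -1) →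
          Measurable g → (∀ x, g x = 1 ∨ g x = -1) →
          ((μ {ω | f (X ω) ≠ Ytil ω}).toReal
              - ((μ.prod μ) {w | f (X w.1) ≠ Ytil w.2}).toReal
            ≤ (μ {ω | g (X ω) ≠ Ytil ω}).toReal
              - ((μ.prod μ) {w | g (X w.1) ≠ Ytil w.2}).toReal
          ↔ (μ {ω | f (X ω) = 1 ∧ Y ω = -1}).toReal / (μ {ω | Y ω = -1}).toReal
              + (μ {ω | f (X ω) = -1 ∧ Y ω = 1}).toReal / (μ {ω | Y ω = 1}).toReal
            ≤ (μ {ω | g (X ω) = 1 ∧ Y ω = -1}).toReal / (μ {ω | Y ω = -1}).toReal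
              + (μ {ω | g (X ω) = -1 ∧ Y ω = 1}).toReal / (μ {ω | Y ω = 1}).toReal)) := by
  have hp' : p ≠ 0 := ne_of_gt hp0
  have hq0 : (0:ℝ) < 1 - p := by linarith
  have hq' : (1:ℝ) - p ≠ 0 := ne_of_gt hq0
  have mY1 : MeasurableSet {ω | Y ω = 1} := hmY (measurableSet_singleton 1)
  have mYm : MeasurableSet {ω | Y ω = -1} := hmY (measurableSet_singleton (-1))
  have mYt1 : MeasurableSet {ω | Ytil ω = 1} := hmYt (measurableSet_singleton 1)
  have mYtm : MeasurableSet {ω | Ytil ω = -1} := hmYt (measurableSet_singleton (-1))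
  -- p + q = 1
  have hpq : p + (μ {ω | Y ω = -1}).toReal = 1 := by
    have h1 : (μ (Set.univ : Set Ω)).toReal
        = (μ {ω | Y ω = 1}).toReal + (μ {ω | Y ω = -1}).toReal :=
      split_toReal μ (by ext ω; simpa using hYval ω)
        (Set.disjoint_left.mpr fun ω h1 h2 => by
          simp only [Set.mem_setOf_eq] at h1 h2; omega) mYm
    rw [measure_univ] at h1
    simp only [ENNReal.toReal_one] at h1
    linarith [hp ▸ h1]
  have hQ : (μ {ω | Y ω = -1}).toReal = 1 - p := by linarith
  -- noise marginals
  have S3 : (μ {ω | Ytil ω = 1 ∧ Y ω = 1}).toReal = p - ep * p := by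
    have h1 : (μ {ω | Y ω = 1}).toReal
        = (μ {ω | Ytil ω = 1 ∧ Y ω = 1}).toReal + (μ {ω | Ytil ω = -1 ∧ Y ω = 1}).toReal :=
      split_toReal μ
        (by ext ω; simp only [Set.mem_setOf_eq, Set.mem_union]
            rcases hYtval ω with h | h <;> simp [h])
        (Set.disjoint_left.mpr fun ω h1 h2 => by
          simp only [Set.mem_setOf_eq] at h1 h2; omega)
        (mYtm.inter mY1)
    rw [hp, hep, hp] at h1
    linarith
  have S2 : (μ {ω | Ytil ω = -1 ∧ Y ω = -1}).toReal = (1 - p) - em * (1 - p) := by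
    have h1 : (μ {ω | Y ω = -1}).toReal
        = (μ {ω | Ytil ω = 1 ∧ Y ω = -1}).toReal + (μ {ω | Ytil ω = -1 ∧ Y ω = -1}).toReal :=
      split_toReal μ
        (by ext ω; simp only [Set.mem_setOf_eq, Set.mem_union]
            rcases hYtval ω with h | h <;> simp [h])
        (Set.disjoint_left.mpr fun ω h1 h2 => by
          simp only [Set.mem_setOf_eq] at h1 h2; omega)
        (mYtm.inter mYm)
    rw [hQ, hem, hQ] at h1
    linarith
  have S1 : (μ {ω | Ytil ω = -1 ∧ Y ω = 1}).toReal = ep * p := by rw [hep, hp]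
  have S4 : (μ {ω | Ytil ω = 1 ∧ Y ω = -1}).toReal = em * (1 - p) := by rw [hem, hQ]
  have N3 : (μ {ω | Ytil ω = -1}).toReal = ep * p + ((1 - p) - em * (1 - p)) := by
    have h1 : (μ {ω | Ytil ω = -1}).toReal
        = (μ {ω | Ytil ω = -1 ∧ Y ω = 1}).toReal + (μ {ω | Ytil ω = -1 ∧ Y ω = -1}).toReal :=
      split_toReal μ
        (by ext ω; simp only [Set.mem_setOf_eq, Set.mem_union]
            rcases hYval ω with h | h <;> simp [h])
        (Set.disjoint_left.mpr fun ω h1 h2 => by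
          simp only [Set.mem_setOf_eq] at h1 h2; omega)
        (mYtm.inter mYm)
    rw [h1, S1, S2]
  have N4 : (μ {ω | Ytil ω = 1}).toReal = (p - ep * p) + em * (1 - p) := by
    have h1 : (μ {ω | Ytil ω = 1}).toReal
        = (μ {ω | Ytil ω = 1 ∧ Y ω = 1}).toReal + (μ {ω | Ytil ω = 1 ∧ Y ω = -1}).toReal :=
      split_toReal μ
        (by ext ω; simp only [Set.mem_setOf_eq, Set.mem_union]
            rcases hYval ω with h | h <;> simp [h])
        (Set.disjoint_left.mpr fun ω h1 h2 => by
          simp only [Set.mem_setOf_eq] at h1 h2; omega)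
        (mYt1.inter mYm)
    rw [h1, S3, S4]
  -- main equality for a fixed classifier
  have key : ∀ f : 𝒳 → ℤ, Measurable f → (∀ x, f x = 1 ∨ f x = -1) →
      (μ {ω | f (X ω) ≠ Ytil ω}).toReal - ((μ.prod μ) {w | f (X w.1) ≠ Ytil w.2}).toReal
        = 2 * (1 - em - ep) * (p * (1 - p)) *
            ((μ {ω | f (X ω) = 1 ∧ Y ω = -1}).toReal / (μ {ω | Y ω = -1}).toReal
              + (μ {ω | f (X ω) = -1 ∧ Y ω = 1}).toReal / (μ {ω | Y ω = 1}).toReal - 1) := by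
    intro f hf hfval
    have mf1 : MeasurableSet {ω | f (X ω) = 1} := (hf.comp hmX) (measurableSet_singleton 1)
    have mfm : MeasurableSet {ω | f (X ω) = -1} := (hf.comp hmX) (measurableSet_singleton (-1))
    -- conditional independence instantiations
    have C1 : (μ {ω | f (X ω) = 1 ∧ Ytil ω = -1 ∧ Y ω = 1}).toReal
        = (μ {ω | f (X ω) = 1 ∧ Y ω = 1}).toReal * ep := by
      have h := hCI {x | f x = 1} 1 (-1)
      simp only [Set.mem_setOf_eq] at h
      rw [hp, S1] at h
      exact mul_left_cancel₀ hp' (by rw [h]; ring)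
    have C2 : (μ {ω | f (X ω) = 1 ∧ Ytil ω = -1 ∧ Y ω = -1}).toReal
        = (μ {ω | f (X ω) = 1 ∧ Y ω = -1}).toReal * (1 - em) := by
      have h := hCI {x | f x = 1} (-1) (-1)
      simp only [Set.mem_setOf_eq] at h
      rw [hQ, S2] at h
      exact mul_left_cancel₀ hq' (by rw [h]; ring)
    have C3 : (μ {ω | f (X ω) = -1 ∧ Ytil ω = 1 ∧ Y ω = 1}).toReal
        = (μ {ω | f (X ω) = -1 ∧ Y ω = 1}).toReal * (1 - ep) := by
      have h := hCI {x | f x = -1} 1 1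
      simp only [Set.mem_setOf_eq] at h
      rw [hp, S3] at h
      exact mul_left_cancel₀ hp' (by rw [h]; ring)
    have C4 : (μ {ω | f (X ω) = -1 ∧ Ytil ω = 1 ∧ Y ω = -1}).toReal
        = (μ {ω | f (X ω) = -1 ∧ Y ω = -1}).toReal * em := by
      have h := hCI {x | f x = -1} (-1) 1
      simp only [Set.mem_setOf_eq] at h
      rw [hQ, S4] at h
      exact mul_left_cancel₀ hq' (by rw [h]; ring)
    -- splitting the error event
    have M1 : (μ {ω | f (X ω) ≠ Ytil ω}).toReal
        = (μ {ω | f (X ω) = 1 ∧ Ytil ω = -1}).toReal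
          + (μ {ω | f (X ω) = -1 ∧ Ytil ω = 1}).toReal :=
      split_toReal μ
        (by ext ω; simp only [Set.mem_setOf_eq, Set.mem_union]
            rcases hfval (X ω) with h | h <;> rcases hYtval ω with h' | h' <;>
              simp [h, h'])
        (Set.disjoint_left.mpr fun ω h1 h2 => by
          simp only [Set.mem_setOf_eq] at h1 h2; omega)
        (mfm.inter mYt1)
    have M2 : (μ {ω | f (X ω) = 1 ∧ Ytil ω = -1}).toReal
        = (μ {ω | f (X ω) = 1 ∧ Ytil ω = -1 ∧ Y ω = 1}).toReal
          + (μ {ω | f (X ω) = 1 ∧ Ytil ω = -1 ∧ Y ω = -1}).toReal :=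
      split_toReal μ
        (by ext ω; simp only [Set.mem_setOf_eq, Set.mem_union]
            rcases hYval ω with h | h <;> simp [h])
        (Set.disjoint_left.mpr fun ω h1 h2 => by
          simp only [Set.mem_setOf_eq] at h1 h2; omega)
        (mf1.inter (mYtm.inter mYm))
    have M3 : (μ {ω | f (X ω) = -1 ∧ Ytil ω = 1}).toReal
        = (μ {ω | f (X ω) = -1 ∧ Ytil ω = 1 ∧ Y ω = 1}).toReal
          + (μ {ω | f (X ω) = -1 ∧ Ytil ω = 1 ∧ Y ω = -1}).toReal :=
      split_toReal μ
        (by ext ω; simp only [Set.mem_setOf_eq, Set.mem_union]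
            rcases hYval ω with h | h <;> simp [h])
        (Set.disjoint_left.mpr fun ω h1 h2 => by
          simp only [Set.mem_setOf_eq] at h1 h2; omega)
        (mfm.inter (mYt1.inter mYm))
    -- f-marginals
    have P1 : (μ {ω | f (X ω) = 1}).toReal
        = (μ {ω | f (X ω) = 1 ∧ Y ω = 1}).toReal
          + (μ {ω | f (X ω) = 1 ∧ Y ω = -1}).toReal :=
      split_toReal μ
        (by ext ω; simp only [Set.mem_setOf_eq, Set.mem_union]
            rcases hYval ω with h | h <;> simp [h])
        (Set.disjoint_left.mpr fun ω h1 h2 => by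
          simp only [Set.mem_setOf_eq] at h1 h2; omega)
        (mf1.inter mYm)
    have P2 : (μ {ω | f (X ω) = -1}).toReal
        = (μ {ω | f (X ω) = -1 ∧ Y ω = 1}).toReal
          + (μ {ω | f (X ω) = -1 ∧ Y ω = -1}).toReal :=
      split_toReal μ
        (by ext ω; simp only [Set.mem_setOf_eq, Set.mem_union]
            rcases hYval ω with h | h <;> simp [h])
        (Set.disjoint_left.mpr fun ω h1 h2 => by
          simp only [Set.mem_setOf_eq] at h1 h2; omega)
        (mfm.inter mYm)
    -- relations to p and q
    have haa' : (μ {ω | f (X ω) = 1 ∧ Y ω = 1}).toReal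
        + (μ {ω | f (X ω) = -1 ∧ Y ω = 1}).toReal = p := by
      have h1 : (μ {ω | Y ω = 1}).toReal
          = (μ {ω | f (X ω) = 1 ∧ Y ω = 1}).toReal
            + (μ {ω | f (X ω) = -1 ∧ Y ω = 1}).toReal :=
        split_toReal μ
          (by ext ω; simp only [Set.mem_setOf_eq, Set.mem_union]
              rcases hfval (X ω) with h | h <;> simp [h])
          (Set.disjoint_left.mpr fun ω h1 h2 => by
            simp only [Set.mem_setOf_eq] at h1 h2; omega)
          (mfm.inter mY1)
      rw [hp] at h1; linarith
    have hbb' : (μ {ω | f (X ω) = 1 ∧ Y ω = -1}).toReal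
        + (μ {ω | f (X ω) = -1 ∧ Y ω = -1}).toReal = 1 - p := by
      have h1 : (μ {ω | Y ω = -1}).toReal
          = (μ {ω | f (X ω) = 1 ∧ Y ω = -1}).toReal
            + (μ {ω | f (X ω) = -1 ∧ Y ω = -1}).toReal :=
        split_toReal μ
          (by ext ω; simp only [Set.mem_setOf_eq, Set.mem_union]
              rcases hfval (X ω) with h | h <;> simp [h])
          (Set.disjoint_left.mpr fun ω h1 h2 => by
            simp only [Set.mem_setOf_eq] at h1 h2; omega)
          (mfm.inter mYm)
      rw [hQ] at h1; linarith
    -- product measure term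
    have T2 : ((μ.prod μ) {w | f (X w.1) ≠ Ytil w.2}).toReal
        = (μ {ω | f (X ω) = 1}).toReal * (μ {ω | Ytil ω = -1}).toReal
          + (μ {ω | f (X ω) = -1}).toReal * (μ {ω | Ytil ω = 1}).toReal := by
      have hset : {w : Ω × Ω | f (X w.1) ≠ Ytil w.2}
          = ({ω | f (X ω) = 1} ×ˢ {ω | Ytil ω = -1})
            ∪ ({ω | f (X ω) = -1} ×ˢ {ω | Ytil ω = 1}) := by
        ext ⟨ω1, ω2⟩
        simp only [Set.mem_setOf_eq, Set.mem_union, Set.mem_prod]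
        rcases hfval (X ω1) with h | h <;> rcases hYtval ω2 with h' | h' <;>
          simp [h, h']
      have hd : Disjoint ({ω | f (X ω) = 1} ×ˢ {ω | Ytil ω = -1})
          ({ω | f (X ω) = -1} ×ˢ {ω | Ytil ω = 1}) :=
        Set.disjoint_left.mpr fun w h1 h2 => by
          simp only [Set.mem_prod, Set.mem_setOf_eq] at h1 h2; omega
      rw [hset, measure_union hd (mfm.prod mYt1), Measure.prod_prod, Measure.prod_prod,
        ENNReal.toReal_add (ENNReal.mul_ne_top (measure_ne_top _ _) (measure_ne_top _ _))
          (ENNReal.mul_ne_top (measure_ne_top _ _) (measure_ne_top _ _)),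
        ENNReal.toReal_mul, ENNReal.toReal_mul]
    -- put everything together
    have ea' : (μ {ω | f (X ω) = -1 ∧ Y ω = 1}).toReal
        = p - (μ {ω | f (X ω) = 1 ∧ Y ω = 1}).toReal := by linarith
    have eb' : (μ {ω | f (X ω) = -1 ∧ Y ω = -1}).toReal
        = (1 - p) - (μ {ω | f (X ω) = 1 ∧ Y ω = -1}).toReal := by linarith
    rw [M1, M2, M3, C1, C2, C3, C4, T2, P1, P2, N3, N4, hp, hQ, ea', eb']
    field_simp
    ring
  refine ⟨key, fun hlt f g hfm hfv hgm hgv => ?_⟩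
  rw [key f hfm hfv, key g hgm hgv]
  have hc : 0 < 2 * (1 - em - ep) * (p * (1 - p)) := by
    have : 0 < 1 - em - ep := by linarith
    positivity
  rw [mul_le_mul_iff_right₀ hc, sub_le_sub_iff_right]
end

section
/- Suppose e₋₁ + e₊₁ < 1, δ_{p̃} := P(Ỹ = +1) − P(Ỹ = −1) ≠ 0, and α* := 1 − (1 − e₋₁ − e₊₁)·δ_p/δ_{p̃} with δ_p := P(Y = +1) − P(Y = −1). Then there exists a constant c > 0 such that for any two classifiers f, f′: E_{D̃}[𝟙_{α*-peer}(f(X), Ỹ)] − E_{D̃}[𝟙_{α*-peer}(f′(X), Ỹ)] = c·(1 − e₋₁ − e₊₁)·(R_D(f) − R_D(f′)). -/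
open MeasureTheory


lemma toReal_add_meas {Ω : Type*} [MeasurableSpace Ω] (μ : Measure Ω) [IsFiniteMeasure μ]
    {S T U : Set Ω} (h : S = T ∪ U) (hd : Disjoint T U) (hU : MeasurableSet U) :
    (μ S).toReal = (μ T).toReal + (μ U).toReal := by
  rw [h, measure_union hd hU, ENNReal.toReal_add (measure_ne_top μ T) (measure_ne_top μ U)]

lemma peer_measYm {Ω : Type*} [MeasurableSpace Ω]
    (μ : Measure Ω) [IsProbabilityMeasure μ]
    (Y : Ω → ℤ) (hmY : Measurable Y)
    (hYval : ∀ ω, Y ω = 1 ∨ Y ω = -1) (p : ℝ) (hp : (μ {ω | Y ω = 1}).toReal = p) :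
    (μ {ω | Y ω = -1}).toReal = 1 - p := by
  have h1 : ((μ (Set.univ : Set Ω)).toReal : ℝ)
      = (μ {ω | Y ω = 1}).toReal + (μ {ω | Y ω = -1}).toReal := by
    apply toReal_add_meas μ
    · ext ω
      simp only [Set.mem_univ, true_iff, Set.mem_union, Set.mem_setOf_eq]
      exact hYval ω
    · rw [Set.disjoint_left]; intro ω h1 h2
      simp only [Set.mem_setOf_eq] at h1 h2; omega
    · exact hmY (measurableSet_singleton (-1))
  simp [measure_univ, hp] at h1
  linarith

lemma peer_aux {Ω 𝒳 : Type*} [MeasurableSpace Ω] [MeasurableSpace 𝒳]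
    (μ : Measure Ω) [IsProbabilityMeasure μ]
    (X : Ω → 𝒳) (Y Ytil : Ω → ℤ)
    (hmX : Measurable X) (hmY : Measurable Y) (hmYt : Measurable Ytil)
    (hYval : ∀ ω, Y ω = 1 ∨ Y ω = -1)
    (hYtval : ∀ ω, Ytil ω = 1 ∨ Ytil ω = -1)
    (ep em : ℝ)
    (p : ℝ) (hp : (μ {ω | Y ω = 1}).toReal = p) (hp0 : 0 < p) (hp1 : p < 1)
    (hep : (μ {ω | Ytil ω = -1 ∧ Y ω = 1}).toReal = ep * (μ {ω | Y ω = 1}).toReal)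
    (hem : (μ {ω | Ytil ω = 1 ∧ Y ω = -1}).toReal = em * (μ {ω | Y ω = -1}).toReal)
    (hCI : ∀ (A : Set 𝒳) (y y' : ℤ),
      (μ {ω | Y ω = y}).toReal * (μ {ω | X ω ∈ A ∧ Ytil ω = y' ∧ Y ω = y}).toReal
        = (μ {ω | X ω ∈ A ∧ Y ω = y}).toReal * (μ {ω | Ytil ω = y' ∧ Y ω = y}).toReal)
    (g : 𝒳 → ℤ) (hmg : Measurable g) (hgval : ∀ x, g x = 1 ∨ g x = -1) :
    (μ {ω | g (X ω) ≠ Y ω}).toReal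
        = (μ {ω | g (X ω) = -1 ∧ Y ω = 1}).toReal
          + (μ {ω | g (X ω) = 1 ∧ Y ω = -1}).toReal
    ∧ (μ {ω | g (X ω) ≠ Ytil ω}).toReal
        = (1 - 2*ep) * (μ {ω | g (X ω) = -1 ∧ Y ω = 1}).toReal
          + (1 - 2*em) * (μ {ω | g (X ω) = 1 ∧ Y ω = -1}).toReal
          + ep * p + em * (1 - p)
    ∧ ((μ.prod μ) {w | g (X w.1) ≠ Ytil w.2}).toReal
        = ((p - (μ {ω | g (X ω) = -1 ∧ Y ω = 1}).toReal)
              + (μ {ω | g (X ω) = 1 ∧ Y ω = -1}).toReal)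
            * (μ {ω | Ytil ω = -1}).toReal
          + ((μ {ω | g (X ω) = -1 ∧ Y ω = 1}).toReal
              + ((1 - p) - (μ {ω | g (X ω) = 1 ∧ Y ω = -1}).toReal))
            * (μ {ω | Ytil ω = 1}).toReal := by
  -- measurability helpers
  have mg1 : MeasurableSet {ω | g (X ω) = 1} := (hmg.comp hmX) (measurableSet_singleton 1)
  have mgm : MeasurableSet {ω | g (X ω) = -1} := (hmg.comp hmX) (measurableSet_singleton (-1))
  have mY1 : MeasurableSet {ω | Y ω = 1} := hmY (measurableSet_singleton 1)
  have mYm : MeasurableSet {ω | Y ω = -1} := hmY (measurableSet_singleton (-1))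
  have mT1 : MeasurableSet {ω | Ytil ω = 1} := hmYt (measurableSet_singleton 1)
  have mTm : MeasurableSet {ω | Ytil ω = -1} := hmYt (measurableSet_singleton (-1))
  have hYm : (μ {ω | Y ω = -1}).toReal = 1 - p := peer_measYm μ Y hmY hYval p hp
  -- abbreviations
  set A := (μ {ω | g (X ω) = -1 ∧ Y ω = 1}).toReal with hA
  set B := (μ {ω | g (X ω) = 1 ∧ Y ω = -1}).toReal with hB
  set A' := (μ {ω | g (X ω) = 1 ∧ Y ω = 1}).toReal with hA'
  set B' := (μ {ω | g (X ω) = -1 ∧ Y ω = -1}).toReal with hB'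
  -- A' = p - A
  have hsplit1 : p = A' + A := by
    rw [← hp]
    apply toReal_add_meas μ
    · ext ω
      have h1 := hgval (X ω)
      simp only [Set.mem_setOf_eq, Set.mem_union]
      constructor
      · intro h; rcases h1 with h2 | h2
        · exact Or.inl ⟨h2, h⟩
        · exact Or.inr ⟨h2, h⟩
      · rintro (⟨_, h⟩ | ⟨_, h⟩) <;> exact h
    · rw [Set.disjoint_left]; rintro ω ⟨h1, _⟩ ⟨h2, _⟩; omega
    · exact mgm.inter mY1
  have hsplit2 : 1 - p = B + B' := by
    rw [← hYm]
    apply toReal_add_meas μ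
    · ext ω
      have h1 := hgval (X ω)
      simp only [Set.mem_setOf_eq, Set.mem_union]
      constructor
      · intro h; rcases h1 with h2 | h2
        · exact Or.inl ⟨h2, h⟩
        · exact Or.inr ⟨h2, h⟩
      · rintro (⟨_, h⟩ | ⟨_, h⟩) <;> exact h
    · rw [Set.disjoint_left]; rintro ω ⟨h1, _⟩ ⟨h2, _⟩; omega
    · exact mgm.inter mYm
  -- conditional independence specialized
  have hCI' : ∀ a b : ℤ, ∀ y : ℤ,
      (μ {ω | Y ω = y}).toReal * (μ {ω | g (X ω) = a ∧ Ytil ω = b ∧ Y ω = y}).toReal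
        = (μ {ω | g (X ω) = a ∧ Y ω = y}).toReal * (μ {ω | Ytil ω = b ∧ Y ω = y}).toReal :=
    fun a b y => hCI (g ⁻¹' {a}) y b
  -- joint factorizations
  have hepp : (μ {ω | Ytil ω = -1 ∧ Y ω = 1}).toReal = ep * p := by rw [hep, hp]
  have hemp : (μ {ω | Ytil ω = 1 ∧ Y ω = -1}).toReal = em * (1 - p) := by rw [hem, hYm]
  have hJm1 : ∀ a : ℤ, (μ {ω | g (X ω) = a ∧ Ytil ω = -1 ∧ Y ω = 1}).toReal
      = (μ {ω | g (X ω) = a ∧ Y ω = 1}).toReal * ep := by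
    intro a
    have h := hCI' a (-1) 1
    rw [hp, hepp] at h
    apply mul_left_cancel₀ (ne_of_gt hp0)
    rw [h]; ring
  have hJ1m : ∀ a : ℤ, (μ {ω | g (X ω) = a ∧ Ytil ω = 1 ∧ Y ω = -1}).toReal
      = (μ {ω | g (X ω) = a ∧ Y ω = -1}).toReal * em := by
    intro a
    have h := hCI' a 1 (-1)
    rw [hYm, hemp] at h
    apply mul_left_cancel₀ (by linarith : (1 : ℝ) - p ≠ 0)
    rw [h]; ring
  -- joints with the other label value, via complement splits
  have hJ11 : ∀ a : ℤ, (μ {ω | g (X ω) = a ∧ Ytil ω = 1 ∧ Y ω = 1}).toReal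
      = (μ {ω | g (X ω) = a ∧ Y ω = 1}).toReal * (1 - ep) := by
    intro a
    have ma : MeasurableSet {ω | g (X ω) = a} := (hmg.comp hmX) (measurableSet_singleton a)
    have hs : (μ {ω | g (X ω) = a ∧ Y ω = 1}).toReal
        = (μ {ω | g (X ω) = a ∧ Ytil ω = 1 ∧ Y ω = 1}).toReal
          + (μ {ω | g (X ω) = a ∧ Ytil ω = -1 ∧ Y ω = 1}).toReal := by
      apply toReal_add_meas μ
      · ext ω
        have h1 := hYtval ω
        simp only [Set.mem_setOf_eq, Set.mem_union]
        constructor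
        · rintro ⟨hg, hy⟩; rcases h1 with h2 | h2
          · exact Or.inl ⟨hg, h2, hy⟩
          · exact Or.inr ⟨hg, h2, hy⟩
        · rintro (⟨hg, _, hy⟩ | ⟨hg, _, hy⟩) <;> exact ⟨hg, hy⟩
      · rw [Set.disjoint_left]; rintro ω ⟨_, h1, _⟩ ⟨_, h2, _⟩; omega
      · exact ma.inter (mTm.inter mY1)
    rw [hJm1 a] at hs
    linarith
  have hJmm : ∀ a : ℤ, (μ {ω | g (X ω) = a ∧ Ytil ω = -1 ∧ Y ω = -1}).toReal
      = (μ {ω | g (X ω) = a ∧ Y ω = -1}).toReal * (1 - em) := by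
    intro a
    have ma : MeasurableSet {ω | g (X ω) = a} := (hmg.comp hmX) (measurableSet_singleton a)
    have hs : (μ {ω | g (X ω) = a ∧ Y ω = -1}).toReal
        = (μ {ω | g (X ω) = a ∧ Ytil ω = 1 ∧ Y ω = -1}).toReal
          + (μ {ω | g (X ω) = a ∧ Ytil ω = -1 ∧ Y ω = -1}).toReal := by
      apply toReal_add_meas μ
      · ext ω
        have h1 := hYtval ω
        simp only [Set.mem_setOf_eq, Set.mem_union]
        constructor
        · rintro ⟨hg, hy⟩; rcases h1 with h2 | h2
          · exact Or.inl ⟨hg, h2, hy⟩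
          · exact Or.inr ⟨hg, h2, hy⟩
        · rintro (⟨hg, _, hy⟩ | ⟨hg, _, hy⟩) <;> exact ⟨hg, hy⟩
      · rw [Set.disjoint_left]; rintro ω ⟨_, h1, _⟩ ⟨_, h2, _⟩; omega
      · exact ma.inter (mTm.inter mYm)
    rw [hJ1m a] at hs
    linarith
  -- clean risk
  have hrisk : (μ {ω | g (X ω) ≠ Y ω}).toReal = A + B := by
    apply toReal_add_meas μ
    · ext ω
      have h1 := hgval (X ω); have h2 := hYval ω
      simp only [Set.mem_setOf_eq, Set.mem_union]
      constructor
      · intro h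
        rcases h1 with h3 | h3 <;> rcases h2 with h4 | h4
        · exact absurd (h3.trans h4.symm) h
        · exact Or.inr ⟨h3, h4⟩
        · exact Or.inl ⟨h3, h4⟩
        · exact absurd (h3.trans h4.symm) h
      · rintro (⟨h3, h4⟩ | ⟨h3, h4⟩) <;> omega
    · rw [Set.disjoint_left]; rintro ω ⟨h1, _⟩ ⟨h2, _⟩; omega
    · exact mg1.inter mYm
  refine ⟨hrisk, ?_, ?_⟩
  · -- noisy risk
    have hstep : (μ {ω | g (X ω) ≠ Ytil ω}).toReal
        = (μ {ω | g (X ω) = 1 ∧ Ytil ω = -1}).toReal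
          + (μ {ω | g (X ω) = -1 ∧ Ytil ω = 1}).toReal := by
      apply toReal_add_meas μ
      · ext ω
        have h1 := hgval (X ω); have h2 := hYtval ω
        simp only [Set.mem_setOf_eq, Set.mem_union]
        constructor
        · intro h
          rcases h1 with h3 | h3 <;> rcases h2 with h4 | h4
          · exact absurd (h3.trans h4.symm) h
          · exact Or.inl ⟨h3, h4⟩
          · exact Or.inr ⟨h3, h4⟩
          · exact absurd (h3.trans h4.symm) h
        · rintro (⟨h3, h4⟩ | ⟨h3, h4⟩) <;> omega
      · rw [Set.disjoint_left]; rintro ω ⟨h1, _⟩ ⟨h2, _⟩; omega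
      · exact mgm.inter mT1
    have hs1 : (μ {ω | g (X ω) = 1 ∧ Ytil ω = -1}).toReal
        = (μ {ω | g (X ω) = 1 ∧ Ytil ω = -1 ∧ Y ω = 1}).toReal
          + (μ {ω | g (X ω) = 1 ∧ Ytil ω = -1 ∧ Y ω = -1}).toReal := by
      apply toReal_add_meas μ
      · ext ω
        have h1 := hYval ω
        simp only [Set.mem_setOf_eq, Set.mem_union]
        constructor
        · rintro ⟨hg, ht⟩; rcases h1 with h2 | h2
          · exact Or.inl ⟨hg, ht, h2⟩
          · exact Or.inr ⟨hg, ht, h2⟩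
        · rintro (⟨hg, ht, _⟩ | ⟨hg, ht, _⟩) <;> exact ⟨hg, ht⟩
      · rw [Set.disjoint_left]; rintro ω ⟨_, _, h1⟩ ⟨_, _, h2⟩; omega
      · exact mg1.inter (mTm.inter mYm)
    have hs2 : (μ {ω | g (X ω) = -1 ∧ Ytil ω = 1}).toReal
        = (μ {ω | g (X ω) = -1 ∧ Ytil ω = 1 ∧ Y ω = 1}).toReal
          + (μ {ω | g (X ω) = -1 ∧ Ytil ω = 1 ∧ Y ω = -1}).toReal := by
      apply toReal_add_meas μ
      · ext ω
        have h1 := hYval ω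
        simp only [Set.mem_setOf_eq, Set.mem_union]
        constructor
        · rintro ⟨hg, ht⟩; rcases h1 with h2 | h2
          · exact Or.inl ⟨hg, ht, h2⟩
          · exact Or.inr ⟨hg, ht, h2⟩
        · rintro (⟨hg, ht, _⟩ | ⟨hg, ht, _⟩) <;> exact ⟨hg, ht⟩
      · rw [Set.disjoint_left]; rintro ω ⟨_, _, h1⟩ ⟨_, _, h2⟩; omega
      · exact mgm.inter (mT1.inter mYm)
    rw [hstep, hs1, hs2, hJm1 1, hJmm 1, hJ11 (-1), hJ1m (-1), ← hA, ← hB, ← hA', ← hB']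
    have e1 : A' = p - A := by linarith
    have e2 : B' = (1 - p) - B := by linarith
    rw [e1, e2]; ring
  · -- peer term
    have hG1 : (μ {ω | g (X ω) = 1}).toReal = A' + B := by
      apply toReal_add_meas μ
      · ext ω
        have h1 := hYval ω
        simp only [Set.mem_setOf_eq, Set.mem_union]
        constructor
        · intro hg; rcases h1 with h2 | h2
          · exact Or.inl ⟨hg, h2⟩
          · exact Or.inr ⟨hg, h2⟩
        · rintro (⟨hg, _⟩ | ⟨hg, _⟩) <;> exact hg
      · rw [Set.disjoint_left]; rintro ω ⟨_, h1⟩ ⟨_, h2⟩; omega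
      · exact mg1.inter mYm
    have hGm : (μ {ω | g (X ω) = -1}).toReal = A + B' := by
      apply toReal_add_meas μ
      · ext ω
        have h1 := hYval ω
        simp only [Set.mem_setOf_eq, Set.mem_union]
        constructor
        · intro hg; rcases h1 with h2 | h2
          · exact Or.inl ⟨hg, h2⟩
          · exact Or.inr ⟨hg, h2⟩
        · rintro (⟨hg, _⟩ | ⟨hg, _⟩) <;> exact hg
      · rw [Set.disjoint_left]; rintro ω ⟨_, h1⟩ ⟨_, h2⟩; omega
      · exact mgm.inter mYm
    have hset : {w : Ω × Ω | g (X w.1) ≠ Ytil w.2}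
        = ({ω | g (X ω) = 1} ×ˢ {ω | Ytil ω = -1}) ∪ ({ω | g (X ω) = -1} ×ˢ {ω | Ytil ω = 1}) := by
      ext ⟨w1, w2⟩
      have h1 := hgval (X w1); have h2 := hYtval w2
      simp only [Set.mem_setOf_eq, Set.mem_union, Set.mem_prod]
      constructor
      · intro h
        rcases h1 with h3 | h3 <;> rcases h2 with h4 | h4
        · exact absurd (h3.trans h4.symm) h
        · exact Or.inl ⟨h3, h4⟩
        · exact Or.inr ⟨h3, h4⟩
        · exact absurd (h3.trans h4.symm) h
      · rintro (⟨h3, h4⟩ | ⟨h3, h4⟩) <;> omega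
    have hd : Disjoint ({ω | g (X ω) = 1} ×ˢ {ω | Ytil ω = -1})
        (({ω | g (X ω) = -1} : Set Ω) ×ˢ {ω | Ytil ω = 1}) := by
      rw [Set.disjoint_left]
      rintro ⟨w1, w2⟩ ⟨h1, _⟩ ⟨h2, _⟩
      simp only [Set.mem_setOf_eq] at h1 h2
      omega
    rw [hset, measure_union hd (mgm.prod mT1), Measure.prod_prod, Measure.prod_prod,
      ENNReal.toReal_add (ENNReal.mul_ne_top (measure_ne_top μ _) (measure_ne_top μ _))
        (ENNReal.mul_ne_top (measure_ne_top μ _) (measure_ne_top μ _)),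
      ENNReal.toReal_mul, ENNReal.toReal_mul, hG1, hGm]
    have e1 : A' = p - A := by linarith
    have e2 : B' = (1 - p) - B := by linarith
    rw [e1, e2]

/-- **Proposition 1.**  With `α* = 1 - (1 - em - ep) δ_p / δ_p̃`, there is a
constant `c > 0` such that for any two classifiers `f, f'`, the difference of noisy expected
`α*`-weighted 0-1 peer risks is `c (1 - em - ep) (R_D(f) - R_D(f'))`. -/
theorem peer_loss_stmt10
    {Ω 𝒳 : Type*} [MeasurableSpace Ω] [MeasurableSpace 𝒳]
    (μ : Measure Ω) [IsProbabilityMeasure μ]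
    (X : Ω → 𝒳) (Y Ytil : Ω → ℤ)
    (hmX : Measurable X) (hmY : Measurable Y) (hmYt : Measurable Ytil)
    (hYval : ∀ ω, Y ω = 1 ∨ Y ω = -1)
    (hYtval : ∀ ω, Ytil ω = 1 ∨ Ytil ω = -1)
    (ep em : ℝ)
    (p : ℝ) (hp : (μ {ω | Y ω = 1}).toReal = p) (hp0 : 0 < p) (hp1 : p < 1)
    (hep : (μ {ω | Ytil ω = -1 ∧ Y ω = 1}).toReal = ep * (μ {ω | Y ω = 1}).toReal)
    (hem : (μ {ω | Ytil ω = 1 ∧ Y ω = -1}).toReal = em * (μ {ω | Y ω = -1}).toReal)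
    -- `Ỹ` is conditionally independent of `X` given `Y`
    (hCI : ∀ (A : Set 𝒳) (y y' : ℤ),
      (μ {ω | Y ω = y}).toReal * (μ {ω | X ω ∈ A ∧ Ytil ω = y' ∧ Y ω = y}).toReal
        = (μ {ω | X ω ∈ A ∧ Y ω = y}).toReal * (μ {ω | Ytil ω = y' ∧ Y ω = y}).toReal)
    (he : em + ep < 1)
    (hδ : (μ {ω | Ytil ω = 1}).toReal - (μ {ω | Ytil ω = -1}).toReal ≠ 0)
    (α : ℝ)
    (hα : α = 1 - (1 - em - ep) *
      (((μ {ω | Y ω = 1}).toReal - (μ {ω | Y ω = -1}).toReal)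
        / ((μ {ω | Ytil ω = 1}).toReal - (μ {ω | Ytil ω = -1}).toReal))) :
    ∃ c : ℝ, 0 < c ∧
      ∀ f f' : 𝒳 → ℤ, Measurable f → (∀ x, f x = 1 ∨ f x = -1) →
        Measurable f' → (∀ x, f' x = 1 ∨ f' x = -1) →
        ((μ {ω | f (X ω) ≠ Ytil ω}).toReal
            - α * ((μ.prod μ) {w | f (X w.1) ≠ Ytil w.2}).toReal)
          - ((μ {ω | f' (X ω) ≠ Ytil ω}).toReal
              - α * ((μ.prod μ) {w | f' (X w.1) ≠ Ytil w.2}).toReal)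
        = c * (1 - em - ep) *
            ((μ {ω | f (X ω) ≠ Y ω}).toReal - (μ {ω | f' (X ω) ≠ Y ω}).toReal) := by
  have hYm : (μ {ω | Y ω = -1}).toReal = 1 - p := peer_measYm μ Y hmY hYval p hp
  set T1 := (μ {ω | Ytil ω = 1}).toReal with hT1
  set Tm := (μ {ω | Ytil ω = -1}).toReal with hTm
  have hTmv : Tm = 1 - T1 := peer_measYm μ Ytil hmYt hYtval T1 rfl
  have hsY1 : p = (μ {ω | Ytil ω = 1 ∧ Y ω = 1}).toReal
      + (μ {ω | Ytil ω = -1 ∧ Y ω = 1}).toReal := by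
    rw [← hp]
    apply toReal_add_meas μ
    · ext ω
      have h1 := hYtval ω
      simp only [Set.mem_setOf_eq, Set.mem_union]
      constructor
      · intro hy; rcases h1 with h2 | h2
        · exact Or.inl ⟨h2, hy⟩
        · exact Or.inr ⟨h2, hy⟩
      · rintro (⟨_, hy⟩ | ⟨_, hy⟩) <;> exact hy
    · rw [Set.disjoint_left]; rintro ω ⟨h1, _⟩ ⟨h2, _⟩; omega
    · exact (hmYt (measurableSet_singleton (-1))).inter (hmY (measurableSet_singleton 1))
  have hT1split : T1 = (μ {ω | Ytil ω = 1 ∧ Y ω = 1}).toReal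
      + (μ {ω | Ytil ω = 1 ∧ Y ω = -1}).toReal := by
    rw [hT1]
    apply toReal_add_meas μ
    · ext ω
      have h1 := hYval ω
      simp only [Set.mem_setOf_eq, Set.mem_union]
      constructor
      · intro hy; rcases h1 with h2 | h2
        · exact Or.inl ⟨hy, h2⟩
        · exact Or.inr ⟨hy, h2⟩
      · rintro (⟨hy, _⟩ | ⟨hy, _⟩) <;> exact hy
    · rw [Set.disjoint_left]; rintro ω ⟨_, h1⟩ ⟨_, h2⟩; omega
    · exact (hmYt (measurableSet_singleton 1)).inter (hmY (measurableSet_singleton (-1)))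
  have hT1v : T1 = (p - ep * p) + em * (1 - p) := by
    have h1 := hep; rw [hp] at h1
    have h2 := hem; rw [hYm] at h2
    rw [hT1split, h2]
    linarith
  -- key identity for α
  have hαδ : α * (T1 - Tm) = em - ep := by
    rw [hα, hp, hYm]
    field_simp
    rw [hTmv, hT1v]
    ring
  refine ⟨1, one_pos, ?_⟩
  intro f f' hmf hfval hmf' hf'val
  obtain ⟨r1, n1, q1⟩ := peer_aux μ X Y Ytil hmX hmY hmYt hYval hYtval ep em p hp hp0 hp1
    hep hem hCI f hmf hfval
  obtain ⟨r2, n2, q2⟩ := peer_aux μ X Y Ytil hmX hmY hmYt hYval hYtval ep em p hp hp0 hp1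
    hep hem hCI f' hmf' hf'val
  rw [r1, n1, q1, r2, n2, q2]
  linear_combination
    (((μ {ω | f (X ω) = 1 ∧ Y ω = -1}).toReal - (μ {ω | f' (X ω) = 1 ∧ Y ω = -1}).toReal)
      - ((μ {ω | f (X ω) = -1 ∧ Y ω = 1}).toReal - (μ {ω | f' (X ω) = -1 ∧ Y ω = 1}).toReal))
      * hαδ
end

section
/- Define p̃_{+1} := p(1 − e₊₁) + (1−p)·e₋₁ and p̃_{−1} := (1−p)(1 − e₋₁) + p·e₊₁ (the marginal probabilities of the noisy label), and write e_Y for e₊₁ when Y = +1 and e₋₁ when Y = −1, similarly p̃_Y. Then for any classifier f, loss ℓ : ℝ × {−1,+1} → ℝ, and α ≥ 0: E[ℓ_{α-peer}(f(X), Ỹ)] = E_{(X,Y)∼D}[(1 − e_Y − α·p̃_Y)·ℓ(f(X), Y) + (e_Y − α·(1 − p̃_Y))·ℓ(f(X), −Y)]. -/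
open MeasureTheory

/-- With `p̃₊₁ = p(1-ep) + (1-p)em` and `p̃₋₁ = (1-p)(1-em) + p·ep` the
noisy-label marginals, for every classifier `f`, loss `ℓ` and `α ≥ 0`:
`E[ℓ_α-peer(f(X), Ỹ)] = E_D[(1 - e_Y - α p̃_Y) ℓ(f(X), Y) + (e_Y - α (1 - p̃_Y)) ℓ(f(X), -Y)]`. -/
theorem peer_loss_stmt13
    {Ω 𝒳 : Type*} [MeasurableSpace Ω] [MeasurableSpace 𝒳]
    (μ : Measure Ω) [IsProbabilityMeasure μ]
    (X : Ω → 𝒳) (Y Ytil : Ω → ℤ)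
    (hmX : Measurable X) (hmY : Measurable Y) (hmYt : Measurable Ytil)
    (hYval : ∀ ω, Y ω = 1 ∨ Y ω = -1)
    (hYtval : ∀ ω, Ytil ω = 1 ∨ Ytil ω = -1)
    (ep em : ℝ)
    (p : ℝ) (hp : (μ {ω | Y ω = 1}).toReal = p) (hp0 : 0 < p) (hp1 : p < 1)
    (hep : (μ {ω | Ytil ω = -1 ∧ Y ω = 1}).toReal = ep * (μ {ω | Y ω = 1}).toReal)
    (hem : (μ {ω | Ytil ω = 1 ∧ Y ω = -1}).toReal = em * (μ {ω | Y ω = -1}).toReal)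
    -- `Ỹ` is conditionally independent of `X` given `Y` (functional form)
    (hCI : ∀ (h : 𝒳 → ℝ), Integrable (fun ω => h (X ω)) μ → ∀ y y' : ℤ,
      (μ {ω | Y ω = y}).toReal * ∫ ω in {ω | Ytil ω = y' ∧ Y ω = y}, h (X ω) ∂μ
        = (μ {ω | Ytil ω = y' ∧ Y ω = y}).toReal * ∫ ω in {ω | Y ω = y}, h (X ω) ∂μ)
    (α : ℝ) (hα0 : 0 ≤ α)
    (ℓ : ℝ → ℤ → ℝ) (f : 𝒳 → ℝ) (hmf : Measurable f)
    (hInt : ∀ y : ℤ, Integrable (fun ω => ℓ (f (X ω)) y) μ) :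
    (∫ ω, ℓ (f (X ω)) (Ytil ω) ∂μ) - α * ∫ w, ℓ (f (X w.1)) (Ytil w.2) ∂(μ.prod μ)
      = ∫ ω,
          ((1 - (if Y ω = 1 then ep else em)
              - α * (if Y ω = 1 then p * (1 - ep) + (1 - p) * em
                     else (1 - p) * (1 - em) + p * ep)) * ℓ (f (X ω)) (Y ω)
            + ((if Y ω = 1 then ep else em)
                - α * (1 - (if Y ω = 1 then p * (1 - ep) + (1 - p) * em
                            else (1 - p) * (1 - em) + p * ep))) * ℓ (f (X ω)) (-Y ω)) ∂μ := by
  classical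
  -- measurable sets
  have msetY : ∀ y : ℤ, MeasurableSet {ω | Y ω = y} := fun y => hmY (measurableSet_singleton y)
  have msetYt : ∀ y : ℤ, MeasurableSet {ω | Ytil ω = y} := fun y => hmYt (measurableSet_singleton y)
  have msetS : ∀ y' y : ℤ, MeasurableSet {ω | Ytil ω = y' ∧ Y ω = y} := fun y' y =>
    (msetYt y').inter (msetY y)
  -- complements and partitions
  have hcomplA : {ω | Y ω = 1}ᶜ = {ω | Y ω = -1} := by
    ext ω; rcases hYval ω with h | h <;> simp [h]
  have hcomplT : {ω | Ytil ω = 1}ᶜ = {ω | Ytil ω = -1} := by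
    ext ω; rcases hYtval ω with h | h <;> simp [h]
  have hAsplit : ∀ y : ℤ, {ω | Y ω = y} =
      {ω | Ytil ω = 1 ∧ Y ω = y} ∪ {ω | Ytil ω = -1 ∧ Y ω = y} := by
    intro y; ext ω; rcases hYtval ω with h | h <;> simp [h]
  have hTsplit : ∀ y' : ℤ, {ω | Ytil ω = y'} =
      {ω | Ytil ω = y' ∧ Y ω = 1} ∪ {ω | Ytil ω = y' ∧ Y ω = -1} := by
    intro y'; ext ω; rcases hYval ω with h | h <;> simp [h]
  have hdisjT : ∀ y : ℤ, Disjoint {ω | Ytil ω = 1 ∧ Y ω = y} {ω | Ytil ω = -1 ∧ Y ω = y} := by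
    intro y
    rw [Set.disjoint_left]
    rintro ω ⟨h1, -⟩ ⟨h2, -⟩
    omega
  have hdisjY : ∀ y' : ℤ, Disjoint {ω | Ytil ω = y' ∧ Y ω = 1} {ω | Ytil ω = y' ∧ Y ω = -1} := by
    intro y'
    rw [Set.disjoint_left]
    rintro ω ⟨-, h1⟩ ⟨-, h2⟩
    omega
  -- helper : toReal additivity
  have haddR : ∀ s t : Set Ω, Disjoint s t → MeasurableSet t →
      (μ (s ∪ t)).toReal = (μ s).toReal + (μ t).toReal := by
    intro s t hd ht
    rw [measure_union hd ht, ENNReal.toReal_add (measure_ne_top μ s) (measure_ne_top μ t)]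
  -- measure of {Y = -1}
  have hmB : (μ {ω | Y ω = -1}).toReal = 1 - p := by
    have h1 : {ω | Y ω = 1} ∪ {ω | Y ω = -1} = Set.univ := by
      ext ω; rcases hYval ω with h | h <;> simp [h]
    have h2 : Disjoint {ω | Y ω = 1} {ω | Y ω = -1} := by
      rw [Set.disjoint_left]; rintro ω h1 h2; simp only [Set.mem_setOf_eq] at *; omega
    have h3 := haddR _ _ h2 (msetY (-1))
    rw [h1] at h3
    simp only [measure_univ, ENNReal.toReal_one] at h3
    rw [hp] at h3
    linarith
  -- the four cell measures
  have ha_mp : (μ {ω | Ytil ω = -1 ∧ Y ω = 1}).toReal = ep * p := by rw [hep, hp]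
  have ha_pm : (μ {ω | Ytil ω = 1 ∧ Y ω = -1}).toReal = em * (1 - p) := by rw [hem, hmB]
  have ha_pp : (μ {ω | Ytil ω = 1 ∧ Y ω = 1}).toReal = (1 - ep) * p := by
    have h1 := haddR _ _ (hdisjT 1) (msetS (-1) 1)
    rw [← hAsplit 1] at h1
    rw [hp, ha_mp] at h1
    linarith
  have ha_mm : (μ {ω | Ytil ω = -1 ∧ Y ω = -1}).toReal = (1 - em) * (1 - p) := by
    have h1 := haddR _ _ (hdisjT (-1)) (msetS (-1) (-1))
    rw [← hAsplit (-1)] at h1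
    rw [hmB, ha_pm] at h1
    linarith
  -- noisy marginals
  have htp : (μ {ω | Ytil ω = 1}).toReal = p * (1 - ep) + (1 - p) * em := by
    have h1 := haddR _ _ (hdisjY 1) (msetS 1 (-1))
    rw [← hTsplit 1] at h1
    rw [ha_pp, ha_pm] at h1
    linarith
  have htm : (μ {ω | Ytil ω = -1}).toReal = (1 - p) * (1 - em) + p * ep := by
    have h1 := haddR _ _ (hdisjY (-1)) (msetS (-1) (-1))
    rw [← hTsplit (-1)] at h1
    rw [ha_mp, ha_mm] at h1
    linarith
  have hp1' : (0:ℝ) < 1 - p := by linarith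
  -- abbreviations for the conditional integrals
  set I11 : ℝ := ∫ ω in {ω | Y ω = 1}, ℓ (f (X ω)) 1 ∂μ with hI11
  set Im1 : ℝ := ∫ ω in {ω | Y ω = 1}, ℓ (f (X ω)) (-1) ∂μ with hIm1
  set I1m : ℝ := ∫ ω in {ω | Y ω = -1}, ℓ (f (X ω)) 1 ∂μ with hI1m
  set Imm : ℝ := ∫ ω in {ω | Y ω = -1}, ℓ (f (X ω)) (-1) ∂μ with hImm
  -- cell conditional integrals via conditional independence
  have hcell : ∀ (y' y : ℤ) (c q J : ℝ), (μ {ω | Ytil ω = y' ∧ Y ω = y}).toReal = c * q →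
      (μ {ω | Y ω = y}).toReal = q → 0 < q →
      (∫ ω in {ω | Y ω = y}, ℓ (f (X ω)) y' ∂μ) = J →
      (∫ ω in {ω | Ytil ω = y' ∧ Y ω = y}, ℓ (f (X ω)) y' ∂μ) = c * J := by
    intro y' y c q J hcq hq hq0 hJ
    have h1 := hCI (fun x => ℓ (f x) y') (hInt y') y y'
    rw [hcq, hq, hJ] at h1
    have h2 : q * (∫ ω in {ω | Ytil ω = y' ∧ Y ω = y}, ℓ (f (X ω)) y' ∂μ) = q * (c * J) := by
      rw [h1]; ring
    exact mul_left_cancel₀ (ne_of_gt hq0) h2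
  have hc_pp := hcell 1 1 (1 - ep) p I11 ha_pp hp hp0 rfl
  have hc_mp := hcell (-1) 1 ep p Im1 (by rw [ha_mp]) hp hp0 rfl
  have hc_pm := hcell 1 (-1) em (1 - p) I1m (by rw [ha_pm]) hmB hp1' rfl
  have hc_mm := hcell (-1) (-1) (1 - em) (1 - p) Imm ha_mm hmB hp1' rfl
  -- First term : ∫ ℓ(f(X ω)) (Ytil ω)
  have hterm1 : (∫ ω, ℓ (f (X ω)) (Ytil ω) ∂μ)
      = (1 - ep) * I11 + em * I1m + (ep * Im1 + (1 - em) * Imm) := by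
    have hfe : (fun ω => ℓ (f (X ω)) (Ytil ω)) =
        fun ω => Set.indicator {ω | Ytil ω = 1} (fun ω => ℓ (f (X ω)) 1) ω
          + Set.indicator {ω | Ytil ω = -1} (fun ω => ℓ (f (X ω)) (-1)) ω := by
      funext ω
      rcases hYtval ω with h | h <;> simp [Set.indicator_apply, h]
    rw [hfe, integral_add ((hInt 1).indicator (msetYt 1)) ((hInt (-1)).indicator (msetYt (-1))),
      integral_indicator (msetYt 1), integral_indicator (msetYt (-1))]
    rw [hTsplit 1, hTsplit (-1),
      setIntegral_union (hdisjY 1) (msetS 1 (-1)) (hInt 1).integrableOn (hInt 1).integrableOn,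
      setIntegral_union (hdisjY (-1)) (msetS (-1) (-1)) (hInt (-1)).integrableOn
        (hInt (-1)).integrableOn,
      hc_pp, hc_mp, hc_pm, hc_mm]
  -- full-space integrals
  have hfull1 : (∫ ω, ℓ (f (X ω)) 1 ∂μ) = I11 + I1m := by
    rw [← integral_add_compl (msetY 1) (hInt 1), hcomplA]
  have hfullm : (∫ ω, ℓ (f (X ω)) (-1) ∂μ) = Im1 + Imm := by
    rw [← integral_add_compl (msetY 1) (hInt (-1)), hcomplA]
  -- Second term (the peer term) via Fubini for product functions
  have hterm2 : (∫ w, ℓ (f (X w.1)) (Ytil w.2) ∂(μ.prod μ))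
      = (p * (1 - ep) + (1 - p) * em) * (I11 + I1m)
        + ((1 - p) * (1 - em) + p * ep) * (Im1 + Imm) := by
    have hfe : (fun w : Ω × Ω => ℓ (f (X w.1)) (Ytil w.2)) =
        fun w => (fun ω => ℓ (f (X ω)) 1) w.1 * Set.indicator {ω | Ytil ω = 1} 1 w.2
          + (fun ω => ℓ (f (X ω)) (-1)) w.1 * Set.indicator {ω | Ytil ω = -1} 1 w.2 := by
      funext w
      rcases hYtval w.2 with h | h <;> simp [Set.indicator_apply, h]
    have hind1 : Integrable (Set.indicator {ω | Ytil ω = 1} (1 : Ω → ℝ)) μ :=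
      (integrable_const (1:ℝ)).indicator (msetYt 1)
    have hindm : Integrable (Set.indicator {ω | Ytil ω = -1} (1 : Ω → ℝ)) μ :=
      (integrable_const (1:ℝ)).indicator (msetYt (-1))
    rw [hfe, integral_add ((hInt 1).mul_prod hind1) ((hInt (-1)).mul_prod hindm),
      integral_prod_mul (fun ω => ℓ (f (X ω)) 1) (Set.indicator {ω | Ytil ω = 1} 1),
      integral_prod_mul (fun ω => ℓ (f (X ω)) (-1)) (Set.indicator {ω | Ytil ω = -1} 1),
      integral_indicator_one (msetYt 1), integral_indicator_one (msetYt (-1)),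
      measureReal_def, measureReal_def, htp, htm, hfull1, hfullm]
    ring
  -- Right-hand side
  have hrhs : (∫ ω,
          ((1 - (if Y ω = 1 then ep else em)
              - α * (if Y ω = 1 then p * (1 - ep) + (1 - p) * em
                     else (1 - p) * (1 - em) + p * ep)) * ℓ (f (X ω)) (Y ω)
            + ((if Y ω = 1 then ep else em)
                - α * (1 - (if Y ω = 1 then p * (1 - ep) + (1 - p) * em
                            else (1 - p) * (1 - em) + p * ep))) * ℓ (f (X ω)) (-Y ω)) ∂μ)
      = ((1 - ep - α * (p * (1 - ep) + (1 - p) * em)) * I11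
          + (ep - α * (1 - (p * (1 - ep) + (1 - p) * em))) * Im1)
        + ((1 - em - α * ((1 - p) * (1 - em) + p * ep)) * Imm
          + (em - α * (1 - ((1 - p) * (1 - em) + p * ep))) * I1m) := by
    set c1 : ℝ := 1 - ep - α * (p * (1 - ep) + (1 - p) * em) with hc1
    set c2 : ℝ := ep - α * (1 - (p * (1 - ep) + (1 - p) * em)) with hc2
    set d1 : ℝ := 1 - em - α * ((1 - p) * (1 - em) + p * ep) with hd1
    set d2 : ℝ := em - α * (1 - ((1 - p) * (1 - em) + p * ep)) with hd2
    have hfe : (fun ω =>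
          ((1 - (if Y ω = 1 then ep else em)
              - α * (if Y ω = 1 then p * (1 - ep) + (1 - p) * em
                     else (1 - p) * (1 - em) + p * ep)) * ℓ (f (X ω)) (Y ω)
            + ((if Y ω = 1 then ep else em)
                - α * (1 - (if Y ω = 1 then p * (1 - ep) + (1 - p) * em
                            else (1 - p) * (1 - em) + p * ep))) * ℓ (f (X ω)) (-Y ω))) =
        fun ω => Set.indicator {ω | Y ω = 1}
            (fun ω => c1 * ℓ (f (X ω)) 1 + c2 * ℓ (f (X ω)) (-1)) ω
          + Set.indicator {ω | Y ω = -1}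
            (fun ω => d1 * ℓ (f (X ω)) (-1) + d2 * ℓ (f (X ω)) 1) ω := by
      funext ω
      rcases hYval ω with h | h <;>
        simp [Set.indicator_apply, h, hc1, hc2, hd1, hd2] <;> ring
    have hi1 : Integrable (fun ω => c1 * ℓ (f (X ω)) 1 + c2 * ℓ (f (X ω)) (-1)) μ :=
      ((hInt 1).const_mul c1).add ((hInt (-1)).const_mul c2)
    have hi2 : Integrable (fun ω => d1 * ℓ (f (X ω)) (-1) + d2 * ℓ (f (X ω)) 1) μ :=
      ((hInt (-1)).const_mul d1).add ((hInt 1).const_mul d2)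
    rw [hfe, integral_add (hi1.indicator (msetY 1)) (hi2.indicator (msetY (-1))),
      integral_indicator (msetY 1), integral_indicator (msetY (-1))]
    rw [integral_add ((hInt 1).restrict.const_mul c1) ((hInt (-1)).restrict.const_mul c2),
      integral_add ((hInt (-1)).restrict.const_mul d1) ((hInt 1).restrict.const_mul d2),
      integral_const_mul, integral_const_mul, integral_const_mul, integral_const_mul]
  rw [hterm1, hterm2, hrhs]
  ring
end

section
/- Suppose p = 0.5 and e₋₁ + e₊₁ < 1. Then for any classifier f and loss ℓ : ℝ × {−1,+1} → ℝ: E_{D̃}[ℓ_peer(f(X), Ỹ)] = ((1 − e₋₁ − e₊₁)/2)·(E_D[ℓ(f(X), Y)] − E_D[ℓ(f(X), −Y)]). -/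
open MeasureTheory

private lemma split_int_aux {Ω : Type*} [MeasurableSpace Ω] (μ : Measure Ω)
    (Z : Ω → ℤ) (hmZ : Measurable Z) (hZ : ∀ ω, Z ω = 1 ∨ Z ω = -1)
    (u v : Ω → ℝ) (hu : Integrable u μ) (hv : Integrable v μ) :
    ∫ ω, (if Z ω = 1 then u ω else v ω) ∂μ
      = (∫ ω in {ω | Z ω = 1}, u ω ∂μ) + ∫ ω in {ω | Z ω = -1}, v ω ∂μ := by
  have hS : MeasurableSet {ω | Z ω = 1} := hmZ (measurableSet_singleton 1)
  have hc : {ω | Z ω = -1} = {ω | Z ω = 1}ᶜ := by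
    ext ω; rcases hZ ω with h | h <;> simp [h]
  have heq : (fun ω => if Z ω = 1 then u ω else v ω)
      = fun ω => Set.indicator {ω | Z ω = 1} u ω
          + Set.indicator {ω | Z ω = 1}ᶜ v ω := by
    funext ω
    by_cases h : Z ω = 1 <;> simp [Set.indicator, h]
  rw [heq, integral_add (hu.indicator hS) (hv.indicator hS.compl),
    integral_indicator hS, integral_indicator hS.compl, hc]

/-- When `p = 1/2` and `em + ep < 1`, for any classifier `f` and loss `ℓ`:
`E_D̃[ℓ_peer(f(X), Ỹ)] = ((1 - em - ep)/2) (E_D[ℓ(f(X), Y)] - E_D[ℓ(f(X), -Y)])`. -/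
theorem peer_loss_stmt14
    {Ω 𝒳 : Type*} [MeasurableSpace Ω] [MeasurableSpace 𝒳]
    (μ : Measure Ω) [IsProbabilityMeasure μ]
    (X : Ω → 𝒳) (Y Ytil : Ω → ℤ)
    (hmX : Measurable X) (hmY : Measurable Y) (hmYt : Measurable Ytil)
    (hYval : ∀ ω, Y ω = 1 ∨ Y ω = -1)
    (hYtval : ∀ ω, Ytil ω = 1 ∨ Ytil ω = -1)
    (ep em : ℝ)
    (hp : (μ {ω | Y ω = 1}).toReal = 1 / 2)
    (hep : (μ {ω | Ytil ω = -1 ∧ Y ω = 1}).toReal = ep * (μ {ω | Y ω = 1}).toReal)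
    (hem : (μ {ω | Ytil ω = 1 ∧ Y ω = -1}).toReal = em * (μ {ω | Y ω = -1}).toReal)
    -- `Ỹ` is conditionally independent of `X` given `Y` (functional form)
    (hCI : ∀ (h : 𝒳 → ℝ), Integrable (fun ω => h (X ω)) μ → ∀ y y' : ℤ,
      (μ {ω | Y ω = y}).toReal * ∫ ω in {ω | Ytil ω = y' ∧ Y ω = y}, h (X ω) ∂μ
        = (μ {ω | Ytil ω = y' ∧ Y ω = y}).toReal * ∫ ω in {ω | Y ω = y}, h (X ω) ∂μ)
    (he : em + ep < 1)
    (ℓ : ℝ → ℤ → ℝ) (f : 𝒳 → ℝ) (hmf : Measurable f)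
    (hInt : ∀ y : ℤ, Integrable (fun ω => ℓ (f (X ω)) y) μ) :
    (∫ ω, ℓ (f (X ω)) (Ytil ω) ∂μ) - ∫ w, ℓ (f (X w.1)) (Ytil w.2) ∂(μ.prod μ)
      = ((1 - em - ep) / 2) *
          ((∫ ω, ℓ (f (X ω)) (Y ω) ∂μ) - ∫ ω, ℓ (f (X ω)) (-Y ω) ∂μ) := by
  classical
  set u₁ : Ω → ℝ := fun ω => ℓ (f (X ω)) 1 with hu₁
  set u₂ : Ω → ℝ := fun ω => ℓ (f (X ω)) (-1) with hu₂
  have hIu₁ : Integrable u₁ μ := hInt 1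
  have hIu₂ : Integrable u₂ μ := hInt (-1)
  -- basic sets
  have hA : MeasurableSet {ω | Y ω = 1} := hmY (measurableSet_singleton 1)
  have hB : MeasurableSet {ω | Y ω = -1} := hmY (measurableSet_singleton (-1))
  have hT : MeasurableSet {ω | Ytil ω = 1} := hmYt (measurableSet_singleton 1)
  have hS11 : MeasurableSet {ω | Ytil ω = 1 ∧ Y ω = 1} :=
    (hmYt (measurableSet_singleton 1)).inter (hmY (measurableSet_singleton 1))
  have hSm1 : MeasurableSet {ω | Ytil ω = -1 ∧ Y ω = 1} :=
    (hmYt (measurableSet_singleton (-1))).inter (hmY (measurableSet_singleton 1))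
  have hS1m : MeasurableSet {ω | Ytil ω = 1 ∧ Y ω = -1} :=
    (hmYt (measurableSet_singleton 1)).inter (hmY (measurableSet_singleton (-1)))
  have hSmm : MeasurableSet {ω | Ytil ω = -1 ∧ Y ω = -1} :=
    (hmYt (measurableSet_singleton (-1))).inter (hmY (measurableSet_singleton (-1)))
  -- complement relations
  have hBc : {ω | Y ω = -1} = {ω | Y ω = 1}ᶜ := by
    ext ω; rcases hYval ω with h | h <;> simp [h]
  -- measure of B
  have hpB : (μ {ω | Y ω = -1}).toReal = 1 / 2 := by
    have h1 : μ {ω | Y ω = 1} + μ {ω | Y ω = 1}ᶜ = 1 := by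
      rw [measure_add_measure_compl hA, measure_univ]
    have h2 : (μ {ω | Y ω = 1}).toReal + (μ {ω | Y ω = 1}ᶜ).toReal = 1 := by
      rw [← ENNReal.toReal_add (measure_ne_top μ _) (measure_ne_top μ _), h1]
      simp
    rw [hBc]; linarith [hp]
  -- split A and B by Ytil
  have hAsplit : {ω | Y ω = 1}
      = {ω | Ytil ω = 1 ∧ Y ω = 1} ∪ {ω | Ytil ω = -1 ∧ Y ω = 1} := by
    ext ω; rcases hYtval ω with h | h <;> simp [h]
  have hBsplit : {ω | Y ω = -1}
      = {ω | Ytil ω = 1 ∧ Y ω = -1} ∪ {ω | Ytil ω = -1 ∧ Y ω = -1} := by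
    ext ω; rcases hYtval ω with h | h <;> simp [h]
  have hdisjA : Disjoint {ω | Ytil ω = 1 ∧ Y ω = 1} {ω | Ytil ω = -1 ∧ Y ω = 1} := by
    rw [Set.disjoint_left]
    rintro ω ⟨h1, _⟩ ⟨h2, _⟩
    rw [h1] at h2; exact absurd h2 (by decide)
  have hdisjB : Disjoint {ω | Ytil ω = 1 ∧ Y ω = -1} {ω | Ytil ω = -1 ∧ Y ω = -1} := by
    rw [Set.disjoint_left]
    rintro ω ⟨h1, _⟩ ⟨h2, _⟩
    rw [h1] at h2; exact absurd h2 (by decide)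
  -- measure values
  have hep' : (μ {ω | Ytil ω = -1 ∧ Y ω = 1}).toReal = ep * (1 / 2) := by
    rw [hep, hp]
  have hem' : (μ {ω | Ytil ω = 1 ∧ Y ω = -1}).toReal = em * (1 / 2) := by
    rw [hem, hpB]
  have hm11 : (μ {ω | Ytil ω = 1 ∧ Y ω = 1}).toReal = 1 / 2 - ep * (1 / 2) := by
    have h1 : μ {ω | Y ω = 1}
        = μ {ω | Ytil ω = 1 ∧ Y ω = 1} + μ {ω | Ytil ω = -1 ∧ Y ω = 1} := by
      rw [hAsplit]; exact measure_union hdisjA hSm1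
    have h2 := congrArg ENNReal.toReal h1
    rw [ENNReal.toReal_add (measure_ne_top μ _) (measure_ne_top μ _), hp, hep'] at h2
    linarith
  have hmmm : (μ {ω | Ytil ω = -1 ∧ Y ω = -1}).toReal = 1 / 2 - em * (1 / 2) := by
    have h1 : μ {ω | Y ω = -1}
        = μ {ω | Ytil ω = 1 ∧ Y ω = -1} + μ {ω | Ytil ω = -1 ∧ Y ω = -1} := by
      rw [hBsplit]; exact measure_union hdisjB hSmm
    have h2 := congrArg ENNReal.toReal h1
    rw [ENNReal.toReal_add (measure_ne_top μ _) (measure_ne_top μ _), hpB, hem'] at h2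
    linarith
  -- named set integrals
  set a : ℝ := ∫ ω in {ω | Y ω = 1}, u₁ ω ∂μ with ha
  set b : ℝ := ∫ ω in {ω | Y ω = -1}, u₁ ω ∂μ with hb
  set c : ℝ := ∫ ω in {ω | Y ω = 1}, u₂ ω ∂μ with hc
  set d : ℝ := ∫ ω in {ω | Y ω = -1}, u₂ ω ∂μ with hd
  -- CI consequences
  have hCI11 : ∫ ω in {ω | Ytil ω = 1 ∧ Y ω = 1}, u₁ ω ∂μ = (1 - ep) * a := by
    have h := hCI (fun x => ℓ (f x) 1) (hInt 1) 1 1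
    rw [hp, hm11] at h
    linarith
  have hCI1m : ∫ ω in {ω | Ytil ω = 1 ∧ Y ω = -1}, u₁ ω ∂μ = em * b := by
    have h := hCI (fun x => ℓ (f x) 1) (hInt 1) (-1) 1
    rw [hpB, hem'] at h
    linarith
  have hCIm1 : ∫ ω in {ω | Ytil ω = -1 ∧ Y ω = 1}, u₂ ω ∂μ = ep * c := by
    have h := hCI (fun x => ℓ (f x) (-1)) (hInt (-1)) 1 (-1)
    rw [hp, hep'] at h
    linarith
  have hCImm : ∫ ω in {ω | Ytil ω = -1 ∧ Y ω = -1}, u₂ ω ∂μ = (1 - em) * d := by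
    have h := hCI (fun x => ℓ (f x) (-1)) (hInt (-1)) (-1) (-1)
    rw [hpB, hmmm] at h
    linarith
  -- total integrals
  have hTotu₁ : ∫ ω, u₁ ω ∂μ = a + b := by
    rw [ha, hb, hBc, integral_add_compl hA hIu₁]
  have hTotu₂ : ∫ ω, u₂ ω ∂μ = c + d := by
    rw [hc, hd, hBc, integral_add_compl hA hIu₂]
  -- (1) E[ℓ(f(X), Y)]
  have h1 : ∫ ω, ℓ (f (X ω)) (Y ω) ∂μ = a + d := by
    have heq : (fun ω => ℓ (f (X ω)) (Y ω))
        = fun ω => if Y ω = 1 then u₁ ω else u₂ ω := by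
      funext ω; rcases hYval ω with h | h <;> simp [h, hu₁, hu₂]
    rw [heq, split_int_aux μ Y hmY hYval u₁ u₂ hIu₁ hIu₂]
  -- (2) E[ℓ(f(X), -Y)]
  have h2 : ∫ ω, ℓ (f (X ω)) (-Y ω) ∂μ = c + b := by
    have heq : (fun ω => ℓ (f (X ω)) (-Y ω))
        = fun ω => if Y ω = 1 then u₂ ω else u₁ ω := by
      funext ω; rcases hYval ω with h | h <;> simp [h, hu₁, hu₂]
    rw [heq, split_int_aux μ Y hmY hYval u₂ u₁ hIu₂ hIu₁]
  -- (3) E[ℓ(f(X), Ỹ)]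
  have h3 : ∫ ω, ℓ (f (X ω)) (Ytil ω) ∂μ
      = (1 - ep) * a + em * b + ep * c + (1 - em) * d := by
    have heq : (fun ω => ℓ (f (X ω)) (Ytil ω))
        = fun ω => if Ytil ω = 1 then u₁ ω else u₂ ω := by
      funext ω; rcases hYtval ω with h | h <;> simp [h, hu₁, hu₂]
    rw [heq, split_int_aux μ Ytil hmYt hYtval u₁ u₂ hIu₁ hIu₂]
    have hT1 : ∫ ω in {ω | Ytil ω = 1}, u₁ ω ∂μ
        = (1 - ep) * a + em * b := by
      have hTs : {ω | Ytil ω = 1}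
          = {ω | Ytil ω = 1 ∧ Y ω = 1} ∪ {ω | Ytil ω = 1 ∧ Y ω = -1} := by
        ext ω; rcases hYval ω with h | h <;> simp [h]
      have hdisj : Disjoint {ω | Ytil ω = 1 ∧ Y ω = 1} {ω | Ytil ω = 1 ∧ Y ω = -1} := by
        rw [Set.disjoint_left]
        rintro ω ⟨_, h1⟩ ⟨_, h2⟩
        rw [h1] at h2; exact absurd h2 (by decide)
      rw [hTs, setIntegral_union hdisj hS1m hIu₁.integrableOn hIu₁.integrableOn,
        hCI11, hCI1m]
    have hT2 : ∫ ω in {ω | Ytil ω = -1}, u₂ ω ∂μ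
        = ep * c + (1 - em) * d := by
      have hTs : {ω | Ytil ω = -1}
          = {ω | Ytil ω = -1 ∧ Y ω = 1} ∪ {ω | Ytil ω = -1 ∧ Y ω = -1} := by
        ext ω; rcases hYval ω with h | h <;> simp [h]
      have hdisj : Disjoint {ω | Ytil ω = -1 ∧ Y ω = 1} {ω | Ytil ω = -1 ∧ Y ω = -1} := by
        rw [Set.disjoint_left]
        rintro ω ⟨_, h1⟩ ⟨_, h2⟩
        rw [h1] at h2; exact absurd h2 (by decide)
      rw [hTs, setIntegral_union hdisj hSmm hIu₂.integrableOn hIu₂.integrableOn,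
        hCIm1, hCImm]
    rw [hT1, hT2]; ring
  -- (4) the product integral
  have h4 : ∫ w, ℓ (f (X w.1)) (Ytil w.2) ∂(μ.prod μ)
      = (a + b) * ((1 / 2 - ep * (1 / 2)) + em * (1 / 2))
        + (c + d) * (1 - ((1 / 2 - ep * (1 / 2)) + em * (1 / 2))) := by
    set χ₁ : Ω → ℝ := fun ω => if Ytil ω = 1 then 1 else 0 with hχ₁
    set χ₂ : Ω → ℝ := fun ω => if Ytil ω = 1 then 0 else 1 with hχ₂
    have hχ₁ind : χ₁ = Set.indicator {ω | Ytil ω = 1} (fun _ => (1 : ℝ)) := by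
      funext ω; simp [hχ₁, Set.indicator_apply, Set.mem_setOf_eq]
    have hχ₂ind : χ₂ = Set.indicator {ω | Ytil ω = 1}ᶜ (fun _ => (1 : ℝ)) := by
      funext ω
      by_cases h : Ytil ω = 1 <;> simp [hχ₂, Set.indicator_apply, Set.mem_setOf_eq, h]
    have hIχ₁ : Integrable χ₁ μ := by
      rw [hχ₁ind]; exact (integrable_const (1 : ℝ)).indicator hT
    have hIχ₂ : Integrable χ₂ μ := by
      rw [hχ₂ind]; exact (integrable_const (1 : ℝ)).indicator hT.compl
    have hintχ₁ : ∫ ω, χ₁ ω ∂μ = (1 / 2 - ep * (1 / 2)) + em * (1 / 2) := by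
      rw [hχ₁ind, integral_indicator_const (1 : ℝ) hT, smul_eq_mul, mul_one]
      have hTs : {ω | Ytil ω = 1}
          = {ω | Ytil ω = 1 ∧ Y ω = 1} ∪ {ω | Ytil ω = 1 ∧ Y ω = -1} := by
        ext ω; rcases hYval ω with h | h <;> simp [h]
      have hdisj : Disjoint {ω | Ytil ω = 1 ∧ Y ω = 1} {ω | Ytil ω = 1 ∧ Y ω = -1} := by
        rw [Set.disjoint_left]
        rintro ω ⟨_, h1⟩ ⟨_, h2⟩
        rw [h1] at h2; exact absurd h2 (by decide)
      rw [hTs, measureReal_def, measure_union hdisj hS1m,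
        ENNReal.toReal_add (measure_ne_top μ _) (measure_ne_top μ _), hm11, hem']
    have hintχ₂ : ∫ ω, χ₂ ω ∂μ = 1 - ((1 / 2 - ep * (1 / 2)) + em * (1 / 2)) := by
      rw [hχ₂ind, integral_indicator_const (1 : ℝ) hT.compl, smul_eq_mul, mul_one]
      have h1 : μ {ω | Ytil ω = 1} + μ {ω | Ytil ω = 1}ᶜ = 1 := by
        rw [measure_add_measure_compl hT, measure_univ]
      have h2 : (μ {ω | Ytil ω = 1}).toReal + (μ {ω | Ytil ω = 1}ᶜ).toReal = 1 := by
        rw [← ENNReal.toReal_add (measure_ne_top μ _) (measure_ne_top μ _), h1]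
        simp
      have h3 : (μ {ω | Ytil ω = 1}).toReal = (1 / 2 - ep * (1 / 2)) + em * (1 / 2) := by
        have hTs : {ω | Ytil ω = 1}
            = {ω | Ytil ω = 1 ∧ Y ω = 1} ∪ {ω | Ytil ω = 1 ∧ Y ω = -1} := by
          ext ω; rcases hYval ω with h | h <;> simp [h]
        have hdisj : Disjoint {ω | Ytil ω = 1 ∧ Y ω = 1} {ω | Ytil ω = 1 ∧ Y ω = -1} := by
          rw [Set.disjoint_left]
          rintro ω ⟨_, h1⟩ ⟨_, h2⟩
          rw [h1] at h2; exact absurd h2 (by decide)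
        rw [hTs, measure_union hdisj hS1m,
          ENNReal.toReal_add (measure_ne_top μ _) (measure_ne_top μ _), hm11, hem']
      rw [measureReal_def]; linarith
    have heq : (fun w : Ω × Ω => ℓ (f (X w.1)) (Ytil w.2))
        = fun w => u₁ w.1 * χ₁ w.2 + u₂ w.1 * χ₂ w.2 := by
      funext w
      rcases hYtval w.2 with h | h <;> simp [h, hχ₁, hχ₂, hu₁, hu₂]
    rw [heq, integral_add (hIu₁.mul_prod hIχ₁) (hIu₂.mul_prod hIχ₂),
      integral_prod_mul, integral_prod_mul, hTotu₁, hTotu₂, hintχ₁, hintχ₂]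
  rw [h1, h2, h3, h4]
  ring
end

section
/- In the K-class setting with uniform off-diagonal flipping q_{ij} = e_j (j ≠ i), for any classifier f : 𝒳 → {1,…,K}: E[𝟙(f(X) ≠ Ỹ)] − E[𝟙(f(X_{n₁}) ≠ Ỹ_{n₂})] = (1 − Σ_{k=1}^K e_k)·(E[𝟙(f(X) ≠ Y)] − E[𝟙(f(X_{n₁}) ≠ Y_{n₂})]), where (X_{n₁}, Y_{n₁}, Ỹ_{n₁}) and (X_{n₂}, Y_{n₂}, Ỹ_{n₂}) are two independent draws from the joint distribution. In particular, when the label distribution is balanced, P(Y = j) = 1/K for all j, the second (clean) peer term equals 1/K minus the accuracy, so minimizing the multi-class 0-1 peer loss on the noisy distribution is equivalent (when Σ_k e_k < 1) to minimizing the clean 0-1 risk. -/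
open MeasureTheory

lemma split_meas_s19 {Ω : Type*} [MeasurableSpace Ω] (μ : Measure Ω) [IsProbabilityMeasure μ]
    {K : ℕ} (Z : Ω → Fin K) (hZ : Measurable Z) (S : Set Ω) (hS : MeasurableSet S) :
    (μ S).toReal = ∑ j : Fin K, (μ (S ∩ {ω | Z ω = j})).toReal := by
  rw [← ENNReal.toReal_sum (fun j _ => measure_ne_top μ _)]
  congr 1
  have hdisj : Pairwise (Function.onFun Disjoint (fun j : Fin K => S ∩ {ω | Z ω = j})) := by
    intro i j hij
    simp only [Function.onFun, Set.disjoint_left]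
    rintro ω ⟨-, h1⟩ ⟨-, h2⟩
    exact hij (h1.symm.trans h2)
  have hm : ∀ j : Fin K, MeasurableSet (S ∩ {ω | Z ω = j}) :=
    fun j => hS.inter (hZ (measurableSet_singleton j))
  have hU : S = ⋃ j : Fin K, S ∩ {ω | Z ω = j} := by ext ω; simp
  conv_lhs => rw [hU]
  rw [measure_iUnion hdisj hm, tsum_fintype]

lemma compl_toReal {α : Type*} [MeasurableSpace α] (ν : Measure α) [IsProbabilityMeasure ν]
    (T : Set α) (hT : MeasurableSet T) : (ν Tᶜ).toReal = 1 - (ν T).toReal := by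
  rw [measure_compl hT (measure_ne_top ν T), measure_univ,
    ENNReal.toReal_sub_of_le prob_le_one ENNReal.one_ne_top, ENNReal.toReal_one]

lemma peer_core {Ω 𝒳 : Type*} [MeasurableSpace Ω] [MeasurableSpace 𝒳]
    (μ : Measure Ω) [IsProbabilityMeasure μ]
    {K : ℕ}
    (X : Ω → 𝒳) (Y Ytil : Ω → Fin K)
    (hmX : Measurable X) (hmY : Measurable Y) (hmYt : Measurable Ytil)
    (e : Fin K → ℝ)
    (hoff : ∀ i j : Fin K, i ≠ j →
      (μ {ω | Ytil ω = j ∧ Y ω = i}).toReal = e j * (μ {ω | Y ω = i}).toReal)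
    (hdiag : ∀ i : Fin K,
      (μ {ω | Ytil ω = i ∧ Y ω = i}).toReal
        = (1 - ∑ j ∈ Finset.univ.erase i, e j) * (μ {ω | Y ω = i}).toReal)
    (hCI : ∀ (A : Set 𝒳) (i j : Fin K),
      (μ {ω | Y ω = i}).toReal * (μ {ω | X ω ∈ A ∧ Ytil ω = j ∧ Y ω = i}).toReal
        = (μ {ω | X ω ∈ A ∧ Y ω = i}).toReal * (μ {ω | Ytil ω = j ∧ Y ω = i}).toReal)
    (f : 𝒳 → Fin K) (hf : Measurable f) :
    ((μ {ω | f (X ω) ≠ Ytil ω}).toReal - ((μ.prod μ) {w | f (X w.1) ≠ Ytil w.2}).toReal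
        = (1 - ∑ k : Fin K, e k) *
            ((μ {ω | f (X ω) ≠ Y ω}).toReal - ((μ.prod μ) {w | f (X w.1) ≠ Y w.2}).toReal))
    ∧ ((μ {ω | f (X ω) ≠ Y ω}).toReal - ((μ.prod μ) {w | f (X w.1) ≠ Y w.2}).toReal
        = (∑ j : Fin K, (μ {ω | f (X ω) = j}).toReal * (μ {ω | Y ω = j}).toReal)
            - (μ {ω | f (X ω) = Y ω}).toReal)
    ∧ ((μ {ω | f (X ω) ≠ Y ω}).toReal = 1 - (μ {ω | f (X ω) = Y ω}).toReal) := by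
  set S : ℝ := ∑ k : Fin K, e k with hS_def
  set q : Fin K → Fin K → ℝ := fun i j => if i = j then 1 - S + e j else e j with hq_def
  set p : Fin K → ℝ := fun i => (μ {ω | Y ω = i}).toReal with hp_def
  set r : Fin K → ℝ := fun j => (μ {ω | f (X ω) = j}).toReal with hr_def
  set m : Fin K → Fin K → ℝ := fun j i => (μ {ω | f (X ω) = j ∧ Y ω = i}).toReal with hm_def
  set acc : ℝ := (μ {ω | f (X ω) = Y ω}).toReal with hacc_def
  -- measurability facts
  have hmfX : Measurable (fun ω => f (X ω)) := hf.comp hmX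
  have hms : ∀ j : Fin K, MeasurableSet {ω | f (X ω) = j} :=
    fun j => hmfX (measurableSet_singleton j)
  have hEqTil : MeasurableSet {ω | f (X ω) = Ytil ω} :=
    measurableSet_eq_fun hmfX hmYt
  have hEqY : MeasurableSet {ω | f (X ω) = Y ω} :=
    measurableSet_eq_fun hmfX hmY
  -- sum of p is 1
  have hp1 : ∑ i : Fin K, p i = 1 := by
    have h := split_meas_s19 μ Y hmY Set.univ MeasurableSet.univ
    simp only [measure_univ, ENNReal.toReal_one, Set.univ_inter] at h
    exact h.symm
  -- q formula
  have hq : ∀ i j : Fin K, (μ {ω | Ytil ω = j ∧ Y ω = i}).toReal = q i j * p i := by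
    intro i j
    by_cases h : i = j
    · subst h
      rw [hdiag i]
      simp only [hq_def, if_pos rfl]
      congr 1
      rw [Finset.sum_erase_eq_sub (Finset.mem_univ i)]
      ring
    · rw [hoff i j h]
      simp [hq_def, h, hp_def]
  -- conditional independence consequence
  have hCI' : ∀ (A : Set 𝒳) (i j : Fin K),
      (μ {ω | X ω ∈ A ∧ Ytil ω = j ∧ Y ω = i}).toReal
        = q i j * (μ {ω | X ω ∈ A ∧ Y ω = i}).toReal := by
    intro A i j
    by_cases hp0 : p i = 0
    · have h0 : μ {ω | Y ω = i} = 0 := by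
        have hne := measure_ne_top μ {ω | Y ω = i}
        have := (ENNReal.toReal_eq_zero_iff _).mp hp0
        tauto
      have h1 : μ {ω | X ω ∈ A ∧ Ytil ω = j ∧ Y ω = i} = 0 :=
        measure_mono_null (fun ω h => h.2.2) h0
      have h2 : μ {ω | X ω ∈ A ∧ Y ω = i} = 0 :=
        measure_mono_null (fun ω h => h.2) h0
      simp [h1, h2]
    · have h := hCI A i j
      rw [hq i j] at h
      apply mul_left_cancel₀ hp0
      linear_combination h
  have hn : ∀ j i : Fin K, (μ {ω | f (X ω) = j ∧ Ytil ω = j ∧ Y ω = i}).toReal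
      = q i j * m j i := fun j i => hCI' {x | f x = j} i j
  -- r as sum of m
  have hr : ∀ j : Fin K, r j = ∑ i : Fin K, m j i := by
    intro j
    have h := split_meas_s19 μ Y hmY {ω | f (X ω) = j} (hms j)
    exact h
  -- acc as sum
  have haccs : acc = ∑ j : Fin K, m j j := by
    have h := split_meas_s19 μ Y hmY {ω | f (X ω) = Y ω} hEqY
    rw [hacc_def, h]
    refine Finset.sum_congr rfl fun j _ => ?_
    congr 2
    ext ω
    simp only [Set.mem_inter_iff, Set.mem_setOf_eq]
    constructor
    · rintro ⟨h1, h2⟩; exact ⟨h1.trans h2, h2⟩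
    · rintro ⟨h1, h2⟩; exact ⟨h1.trans h2.symm, h2⟩
  -- noisy accuracy expansion
  have hA' : (μ {ω | f (X ω) = Ytil ω}).toReal
      = ∑ j : Fin K, ∑ i : Fin K, q i j * m j i := by
    rw [split_meas_s19 μ Ytil hmYt _ hEqTil]
    refine Finset.sum_congr rfl fun j _ => ?_
    have hset : {ω | f (X ω) = Ytil ω} ∩ {ω | Ytil ω = j}
        = {ω | f (X ω) = j ∧ Ytil ω = j} := by
      ext ω
      simp only [Set.mem_inter_iff, Set.mem_setOf_eq]
      constructor
      · rintro ⟨h1, h2⟩; exact ⟨h1.trans h2, h2⟩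
      · rintro ⟨h1, h2⟩; exact ⟨h1.trans h2.symm, h2⟩
    rw [hset]
    have hm2 : MeasurableSet {ω | f (X ω) = j ∧ Ytil ω = j} :=
      (hms j).inter (hmYt (measurableSet_singleton j))
    rw [split_meas_s19 μ Y hmY _ hm2]
    refine Finset.sum_congr rfl fun i _ => ?_
    have hset2 : {ω | f (X ω) = j ∧ Ytil ω = j} ∩ {ω | Y ω = i}
        = {ω | f (X ω) = j ∧ Ytil ω = j ∧ Y ω = i} := by
      ext ω
      simp only [Set.mem_inter_iff, Set.mem_setOf_eq, and_assoc]
    rw [hset2, hn j i]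
  -- sum of r is 1
  have hr1 : ∑ j : Fin K, r j = 1 := by
    have h := split_meas_s19 μ (fun ω => f (X ω)) hmfX Set.univ MeasurableSet.univ
    simp only [measure_univ, ENNReal.toReal_one, Set.univ_inter] at h
    exact h.symm
  -- marginal of Ytil
  have ht : ∀ j : Fin K, (μ {ω | Ytil ω = j}).toReal = e j + (1 - S) * p j := by
    intro j
    rw [split_meas_s19 μ Y hmY {ω | Ytil ω = j} (hmYt (measurableSet_singleton j))]
    have hterm : ∀ i ∈ Finset.univ, (μ ({ω | Ytil ω = j} ∩ {ω | Y ω = i})).toReal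
        = e j * p i + (if i = j then (1 - S) * p i else 0) := by
      intro i _
      have : (μ ({ω | Ytil ω = j} ∩ {ω | Y ω = i})).toReal = q i j * p i := hq i j
      rw [this]
      by_cases h : i = j
      · subst h; simp [hq_def]; ring
      · simp [hq_def, h]
    rw [Finset.sum_congr rfl hterm, Finset.sum_add_distrib, ← Finset.mul_sum, hp1,
      Finset.sum_ite_eq' Finset.univ j, if_pos (Finset.mem_univ j)]
    ring
  -- product measure formula
  have hprod : ∀ (W : Ω → Fin K), Measurable W →
      ((μ.prod μ) {w : Ω × Ω | f (X w.1) = W w.2}).toReal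
        = ∑ j : Fin K, r j * (μ {ω | W ω = j}).toReal := by
    intro W hW
    have hU : {w : Ω × Ω | f (X w.1) = W w.2}
        = ⋃ j : Fin K, {ω | f (X ω) = j} ×ˢ {ω | W ω = j} := by
      ext w
      simp only [Set.mem_setOf_eq, Set.mem_iUnion, Set.mem_prod]
      constructor
      · intro h; exact ⟨W w.2, h, rfl⟩
      · rintro ⟨j, h1, h2⟩; exact h1.trans h2.symm
    have hdisj : Pairwise (Function.onFun Disjoint
        (fun j : Fin K => ({ω | f (X ω) = j} : Set Ω) ×ˢ {ω | W ω = j})) := by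
      intro i j hij
      simp only [Function.onFun, Set.disjoint_left]
      rintro w ⟨h1, -⟩ ⟨h2, -⟩
      exact hij (h1.symm.trans h2)
    have hmm : ∀ j : Fin K, MeasurableSet (({ω | f (X ω) = j} : Set Ω) ×ˢ {ω | W ω = j}) :=
      fun j => (hms j).prod (hW (measurableSet_singleton j))
    rw [hU, measure_iUnion hdisj hmm, tsum_fintype,
      ENNReal.toReal_sum (fun j _ => measure_ne_top _ _)]
    refine Finset.sum_congr rfl fun j _ => ?_
    rw [Measure.prod_prod, ENNReal.toReal_mul]
  -- complement identities
  have hA : (μ {ω | f (X ω) ≠ Ytil ω}).toReal = 1 - (μ {ω | f (X ω) = Ytil ω}).toReal := by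
    have : {ω | f (X ω) ≠ Ytil ω} = {ω | f (X ω) = Ytil ω}ᶜ := rfl
    rw [this, compl_toReal μ _ hEqTil]
  have hC : (μ {ω | f (X ω) ≠ Y ω}).toReal = 1 - acc := by
    have : {ω | f (X ω) ≠ Y ω} = {ω | f (X ω) = Y ω}ᶜ := rfl
    rw [this, compl_toReal μ _ hEqY]
  have hEqTilP : MeasurableSet {w : Ω × Ω | f (X w.1) = Ytil w.2} :=
    measurableSet_eq_fun (hmfX.comp measurable_fst) (hmYt.comp measurable_snd)
  have hEqYP : MeasurableSet {w : Ω × Ω | f (X w.1) = Y w.2} :=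
    measurableSet_eq_fun (hmfX.comp measurable_fst) (hmY.comp measurable_snd)
  have hB : ((μ.prod μ) {w | f (X w.1) ≠ Ytil w.2}).toReal
      = 1 - ((μ.prod μ) {w | f (X w.1) = Ytil w.2}).toReal := by
    have : {w : Ω × Ω | f (X w.1) ≠ Ytil w.2} = {w : Ω × Ω | f (X w.1) = Ytil w.2}ᶜ := rfl
    rw [this, compl_toReal (μ.prod μ) _ hEqTilP]
  have hD : ((μ.prod μ) {w | f (X w.1) ≠ Y w.2}).toReal
      = 1 - ((μ.prod μ) {w | f (X w.1) = Y w.2}).toReal := by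
    have : {w : Ω × Ω | f (X w.1) ≠ Y w.2} = {w : Ω × Ω | f (X w.1) = Y w.2}ᶜ := rfl
    rw [this, compl_toReal (μ.prod μ) _ hEqYP]
  -- key computations
  have key1 : (μ {ω | f (X ω) = Ytil ω}).toReal
      = (∑ j : Fin K, e j * r j) + (1 - S) * acc := by
    rw [hA']
    have step : ∀ j ∈ Finset.univ, (∑ i : Fin K, q i j * m j i)
        = e j * r j + (1 - S) * m j j := by
      intro j _
      have hterm : ∀ i ∈ Finset.univ, q i j * m j i
          = e j * m j i + (if i = j then (1 - S) * m j i else 0) := by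
        intro i _
        by_cases h : i = j
        · subst h; simp [hq_def]; ring
        · simp [hq_def, h]
      rw [Finset.sum_congr rfl hterm, Finset.sum_add_distrib, ← Finset.mul_sum,
        Finset.sum_ite_eq' Finset.univ j, if_pos (Finset.mem_univ j), ← hr j]
    rw [Finset.sum_congr rfl step, Finset.sum_add_distrib, ← Finset.mul_sum, ← haccs]
  have key2 : ((μ.prod μ) {w | f (X w.1) = Ytil w.2}).toReal
      = (∑ j : Fin K, e j * r j) + (1 - S) * ∑ j : Fin K, r j * p j := by
    rw [hprod Ytil hmYt]
    have hterm : ∀ j ∈ Finset.univ, r j * (μ {ω | Ytil ω = j}).toReal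
        = e j * r j + (1 - S) * (r j * p j) := by
      intro j _
      rw [ht j]; ring
    rw [Finset.sum_congr rfl hterm, Finset.sum_add_distrib, ← Finset.mul_sum]
  have key3 : ((μ.prod μ) {w | f (X w.1) = Y w.2}).toReal = ∑ j : Fin K, r j * p j :=
    hprod Y hmY
  refine ⟨?_, ?_, hC⟩
  · rw [hA, hB, hC, hD, key1, key2, key3]; ring
  · rw [hC, hD, key3]
    have : ∀ j ∈ Finset.univ, (μ {ω | f (X ω) = j}).toReal * (μ {ω | Y ω = j}).toReal
        = r j * p j := fun j _ => rfl
    rw [Finset.sum_congr rfl this]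
    ring


/-- **multi-class peer loss.**  In the `K`-class setting with uniform
off-diagonal flipping, the noisy expected 0-1 peer risk is `(1 - ∑ₖ e k)` times the clean
expected 0-1 peer risk; when the label distribution is balanced the clean peer risk is
`1/K` minus the accuracy, so (when `∑ₖ e k < 1`) minimizing the noisy 0-1 peer risk is
equivalent to minimizing the clean 0-1 risk. -/
theorem peer_loss_stmt19
    {Ω 𝒳 : Type*} [MeasurableSpace Ω] [MeasurableSpace 𝒳]
    (μ : Measure Ω) [IsProbabilityMeasure μ]
    {K : ℕ} (hK : 0 < K)
    (X : Ω → 𝒳) (Y Ytil : Ω → Fin K)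
    (hmX : Measurable X) (hmY : Measurable Y) (hmYt : Measurable Ytil)
    (e : Fin K → ℝ) (he0 : ∀ j, 0 ≤ e j)
    (hoff : ∀ i j : Fin K, i ≠ j →
      (μ {ω | Ytil ω = j ∧ Y ω = i}).toReal = e j * (μ {ω | Y ω = i}).toReal)
    (hdiag : ∀ i : Fin K,
      (μ {ω | Ytil ω = i ∧ Y ω = i}).toReal
        = (1 - ∑ j ∈ Finset.univ.erase i, e j) * (μ {ω | Y ω = i}).toReal)
    -- `Ỹ` is conditionally independent of `X` given `Y`
    (hCI : ∀ (A : Set 𝒳) (i j : Fin K),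
      (μ {ω | Y ω = i}).toReal * (μ {ω | X ω ∈ A ∧ Ytil ω = j ∧ Y ω = i}).toReal
        = (μ {ω | X ω ∈ A ∧ Y ω = i}).toReal * (μ {ω | Ytil ω = j ∧ Y ω = i}).toReal) :
    (∀ f : 𝒳 → Fin K, Measurable f →
      (μ {ω | f (X ω) ≠ Ytil ω}).toReal - ((μ.prod μ) {w | f (X w.1) ≠ Ytil w.2}).toReal
        = (1 - ∑ k : Fin K, e k) *
            ((μ {ω | f (X ω) ≠ Y ω}).toReal - ((μ.prod μ) {w | f (X w.1) ≠ Y w.2}).toReal))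
    ∧ ((∀ j : Fin K, (μ {ω | Y ω = j}).toReal = 1 / (K : ℝ)) →
        ∀ f : 𝒳 → Fin K, Measurable f →
          (μ {ω | f (X ω) ≠ Y ω}).toReal - ((μ.prod μ) {w | f (X w.1) ≠ Y w.2}).toReal
            = 1 / (K : ℝ) - (μ {ω | f (X ω) = Y ω}).toReal)
    ∧ ((∀ j : Fin K, (μ {ω | Y ω = j}).toReal = 1 / (K : ℝ)) →
        (∑ k : Fin K, e k) < 1 →
        ∀ f g : 𝒳 → Fin K, Measurable f → Measurable g →
          ((μ {ω | f (X ω) ≠ Ytil ω}).toReal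
              - ((μ.prod μ) {w | f (X w.1) ≠ Ytil w.2}).toReal
            ≤ (μ {ω | g (X ω) ≠ Ytil ω}).toReal
              - ((μ.prod μ) {w | g (X w.1) ≠ Ytil w.2}).toReal
          ↔ (μ {ω | f (X ω) ≠ Y ω}).toReal ≤ (μ {ω | g (X ω) ≠ Y ω}).toReal)) := by

  have part := fun (f : 𝒳 → Fin K) (hf : Measurable f) =>
    peer_core μ X Y Ytil hmX hmY hmYt e hoff hdiag hCI f hf
  have hbalsum : (∀ j : Fin K, (μ {ω | Y ω = j}).toReal = 1 / (K : ℝ)) →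
      ∀ (f : 𝒳 → Fin K), Measurable f →
      ∑ j : Fin K, (μ {ω | f (X ω) = j}).toReal * (μ {ω | Y ω = j}).toReal = 1 / (K : ℝ) := by
    intro hbal f hf
    have hr1 : ∑ j : Fin K, (μ {ω | f (X ω) = j}).toReal = 1 := by
      have h := split_meas_s19 μ (fun ω => f (X ω)) (hf.comp hmX) Set.univ MeasurableSet.univ
      simp only [measure_univ, ENNReal.toReal_one, Set.univ_inter] at h
      exact h.symm
    calc ∑ j : Fin K, (μ {ω | f (X ω) = j}).toReal * (μ {ω | Y ω = j}).toReal
        = ∑ j : Fin K, (μ {ω | f (X ω) = j}).toReal * (1 / (K : ℝ)) :=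
          Finset.sum_congr rfl fun j _ => by rw [hbal j]
      _ = 1 / (K : ℝ) := by rw [← Finset.sum_mul, hr1, one_mul]
  refine ⟨fun f hf => (part f hf).1, ?_, ?_⟩
  · intro hbal f hf
    rw [(part f hf).2.1, hbalsum hbal f hf]
  · intro hbal hSlt f g hf hg
    have h2f : (μ {ω | f (X ω) ≠ Y ω}).toReal - ((μ.prod μ) {w | f (X w.1) ≠ Y w.2}).toReal
        = 1 / (K : ℝ) - (μ {ω | f (X ω) = Y ω}).toReal := by
      rw [(part f hf).2.1, hbalsum hbal f hf]
    have h2g : (μ {ω | g (X ω) ≠ Y ω}).toReal - ((μ.prod μ) {w | g (X w.1) ≠ Y w.2}).toReal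
        = 1 / (K : ℝ) - (μ {ω | g (X ω) = Y ω}).toReal := by
      rw [(part g hg).2.1, hbalsum hbal g hg]
    rw [(part f hf).1, (part g hg).1, h2f, h2g, (part f hf).2.2, (part g hg).2.2,
      mul_le_mul_iff_right₀ (by linarith : (0 : ℝ) < 1 - ∑ k : Fin K, e k)]
    constructor <;> intro h <;> linarith
end
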